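/- arXiv:2108.04047 — 4 statements merged into one kernel-verified Lean document; each statement's English description precedes it below -/
import Mathlib

section
/- In the multiple-default Cox model: for every n ∈ {0, 1, …, N−1} and every t ≥ 0, P̃-almost surely, E^{P̃}[1_{{τ_{n+1} > t}} | 𝓕_∞ ∨ σ(E_1) ∨ … ∨ σ(E_n)] = exp(−∫_0^{(t−τ_n)⁺} λ̃^{n+1}_s ds), where (t−τ_n)⁺ := max(t−τ_n, 0). Equivalently, P̃(τ_{n+1} > t | 𝒢_∞^{(n)}) = e^{−∫_{t∧τ_n}^{t} λ^{n+1}_s ds} with λ^{n+1}_s := 1_{{s ≥ τ_n}} λ̃^{n+1}_{s−τ_n}. -/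
open MeasureTheory ProbabilityTheory Set
open scoped ENNReal Classical

noncomputable section CoxAux

variable {Ω : Type*} [MeasurableSpace Ω]

/-- Cumulative hazard, in `ℝ≥0∞`. -/
def coxL (c : ℝ → Ω → ℝ) (ω : Ω) (u : ℝ) : ℝ≥0∞ :=
  ∫⁻ s in Set.Ioc (0:ℝ) u, ENNReal.ofReal (c s ω)

/-- Good set: locally finite cumulative hazard, diverging at infinity. -/
def coxG (c : ℝ → Ω → ℝ) : Set Ω :=
  {ω | (∀ q : ℚ, coxL c ω (q:ℝ) < ⊤) ∧ ∫⁻ s in Set.Ioi (0:ℝ), ENNReal.ofReal (c s ω) = ⊤}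

/-- Measurable version of the first-passage time of the cumulative hazard. -/
def coxT (c : ℝ → Ω → ℝ) (ω : Ω) (e : ℝ) : ℝ :=
  if ω ∈ coxG c then sInf {u : ℝ | 0 < u ∧ e ≤ (coxL c ω u).toReal} else 0

lemma coxL_mono (c : ℝ → Ω → ℝ) (ω : Ω) {u v : ℝ} (h : u ≤ v) :
    coxL c ω u ≤ coxL c ω v :=
  lintegral_mono_set (Set.Ioc_subset_Ioc_right h)

lemma coxL_of_nonpos (c : ℝ → Ω → ℝ) (ω : Ω) {u : ℝ} (h : u ≤ 0) : coxL c ω u = 0 := by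
  unfold coxL
  rw [Set.Ioc_eq_empty (by exact fun hlt => absurd h (not_le.mpr hlt))]
  simp

lemma coxG_lt_top {c : ℝ → Ω → ℝ} {ω : Ω} (hω : ω ∈ coxG c) (u : ℝ) : coxL c ω u < ⊤ := by
  obtain ⟨q, hq⟩ := exists_rat_gt u
  exact lt_of_le_of_lt (coxL_mono c ω hq.le) (hω.1 q)

lemma coxL_toReal_mono {c : ℝ → Ω → ℝ} {ω : Ω} (hω : ω ∈ coxG c) {u v : ℝ} (h : u ≤ v) :
    (coxL c ω u).toReal ≤ (coxL c ω v).toReal :=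
  ENNReal.toReal_mono (coxG_lt_top hω v).ne (coxL_mono c ω h)

lemma measurable_coxL {c : ℝ → Ω → ℝ} (hc : Measurable fun q : ℝ × Ω => c q.1 q.2) :
    Measurable fun x : Ω × ℝ => coxL c x.1 x.2 := by
  have hmeas : Measurable fun y : (Ω × ℝ) × ℝ =>
      Set.indicator (Set.Ioc (0:ℝ) y.1.2) (fun s => ENNReal.ofReal (c s y.1.1)) y.2 := by
    simp only [Set.indicator_apply]
    refine Measurable.ite ?_ ?_ measurable_const
    · exact MeasurableSet.inter
        (measurableSet_lt measurable_const measurable_snd)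
        (measurableSet_le measurable_snd (measurable_fst.snd))
    · exact ENNReal.measurable_ofReal.comp (hc.comp (measurable_snd.prodMk measurable_fst.fst))
  have key := Measurable.lintegral_prod_right'
    (f := fun y : (Ω × ℝ) × ℝ =>
      Set.indicator (Set.Ioc (0:ℝ) y.1.2) (fun s => ENNReal.ofReal (c s y.1.1)) y.2)
    (ν := (volume : Measure ℝ)) hmeas
  have h1 : (fun x : Ω × ℝ => coxL c x.1 x.2)
      = fun x : Ω × ℝ =>
        ∫⁻ s, Set.indicator (Set.Ioc (0:ℝ) x.2) (fun s => ENNReal.ofReal (c s x.1)) s := by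
    funext x; rw [lintegral_indicator measurableSet_Ioc]; rfl
  rw [h1]
  exact key

lemma measurable_coxL' {c : ℝ → Ω → ℝ} (hc : Measurable fun q : ℝ × Ω => c q.1 q.2) (u : ℝ) :
    Measurable fun ω : Ω => coxL c ω u := by
  have h := (measurable_coxL hc).comp
    ((measurable_id.prodMk measurable_const) : Measurable fun ω : Ω => (ω, u))
  exact h

lemma measurable_coxL_Ioi {c : ℝ → Ω → ℝ} (hc : Measurable fun q : ℝ × Ω => c q.1 q.2) :
    Measurable fun ω : Ω => ∫⁻ s in Set.Ioi (0:ℝ), ENNReal.ofReal (c s ω) :=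
  Measurable.lintegral_prod_right' (f := fun y : Ω × ℝ => ENNReal.ofReal (c y.2 y.1))
    (ν := (volume : Measure ℝ).restrict (Set.Ioi (0:ℝ)))
    (ENNReal.measurable_ofReal.comp (hc.comp (measurable_snd.prodMk measurable_fst)))

lemma measurable_coxG {c : ℝ → Ω → ℝ} (hc : Measurable fun q : ℝ × Ω => c q.1 q.2) :
    MeasurableSet (coxG c) := by
  have hL : ∀ u : ℝ, Measurable fun ω : Ω => coxL c ω u := measurable_coxL' hc
  have h1 : MeasurableSet {ω : Ω | ∀ q : ℚ, coxL c ω (q:ℝ) < ⊤} := by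
    rw [Set.setOf_forall]
    exact MeasurableSet.iInter fun q => measurableSet_lt (hL q) measurable_const
  have h2 : MeasurableSet {ω : Ω | ∫⁻ s in Set.Ioi (0:ℝ), ENNReal.ofReal (c s ω) = ⊤} :=
    (measurable_coxL_Ioi hc) (measurableSet_singleton ⊤)
  exact h1.inter h2

lemma coxG_exists {c : ℝ → Ω → ℝ} (hc : Measurable fun q : ℝ × Ω => c q.1 q.2) {ω : Ω}
    (hω : ω ∈ coxG c) (e : ℝ) :
    ∃ u : ℝ, 0 < u ∧ e ≤ (coxL c ω u).toReal := by
  have hgm : Measurable fun s : ℝ => ENNReal.ofReal (c s ω) :=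
    ENNReal.measurable_ofReal.comp (hc.comp (measurable_id.prodMk measurable_const))
  have hfsm : ∀ m : ℕ, Measurable
      (Set.indicator (Set.Ioc (0:ℝ) ((m:ℝ)+1)) (fun s => ENNReal.ofReal (c s ω))) :=
    fun m => hgm.indicator measurableSet_Ioc
  have hmono : Monotone (fun m : ℕ =>
      Set.indicator (Set.Ioc (0:ℝ) ((m:ℝ)+1)) (fun s => ENNReal.ofReal (c s ω))) := by
    intro a b hab x
    simp only [Set.indicator_apply]
    split_ifs with h1 h2
    · exact le_rfl
    · exact absurd (show x ∈ Set.Ioc (0:ℝ) ((b:ℝ)+1) from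
        ⟨h1.1, h1.2.trans (by have := (Nat.cast_le (α := ℝ)).mpr hab; linarith)⟩) h2
    · exact zero_le
    · exact le_rfl
  have hptsup : ∀ s : ℝ,
      (⨆ m : ℕ, Set.indicator (Set.Ioc (0:ℝ) ((m:ℝ)+1)) (fun s => ENNReal.ofReal (c s ω)) s)
        = Set.indicator (Set.Ioi (0:ℝ)) (fun s => ENNReal.ofReal (c s ω)) s := by
    intro s
    rcases le_or_gt s 0 with hs | hs
    · have h0 : ∀ m : ℕ,
          Set.indicator (Set.Ioc (0:ℝ) ((m:ℝ)+1)) (fun s => ENNReal.ofReal (c s ω)) s = 0 :=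
        fun m => Set.indicator_of_notMem (fun hmem => absurd hs (not_le.mpr hmem.1)) _
      have h0' : Set.indicator (Set.Ioi (0:ℝ)) (fun s => ENNReal.ofReal (c s ω)) s = 0 :=
        Set.indicator_of_notMem (fun hmem => absurd hs (not_le.mpr hmem)) _
      simp [h0, h0']
    · obtain ⟨m, hm⟩ := exists_nat_ge s
      rw [Set.indicator_of_mem (show s ∈ Set.Ioi (0:ℝ) from hs)]
      apply le_antisymm
      · refine iSup_le fun k => ?_
        by_cases hk : s ∈ Set.Ioc (0:ℝ) ((k:ℝ)+1)
        · rw [Set.indicator_of_mem hk]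
        · rw [Set.indicator_of_notMem hk]; exact zero_le
      · refine le_iSup_of_le m ?_
        rw [Set.indicator_of_mem (show s ∈ Set.Ioc (0:ℝ) ((m:ℝ)+1) from ⟨hs, by linarith⟩)]
  have hsup : (⨆ m : ℕ, coxL c ω ((m:ℝ) + 1))
      = ∫⁻ s in Set.Ioi (0:ℝ), ENNReal.ofReal (c s ω) := by
    have e1 : ∀ m : ℕ, coxL c ω ((m:ℝ)+1) = ∫⁻ s,
        Set.indicator (Set.Ioc (0:ℝ) ((m:ℝ)+1)) (fun s => ENNReal.ofReal (c s ω)) s := by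
      intro m; rw [lintegral_indicator measurableSet_Ioc]; rfl
    have e2 : ∫⁻ s in Set.Ioi (0:ℝ), ENNReal.ofReal (c s ω)
        = ∫⁻ s, Set.indicator (Set.Ioi (0:ℝ)) (fun s => ENNReal.ofReal (c s ω)) s := by
      rw [lintegral_indicator measurableSet_Ioi]
    simp_rw [e1, e2, ← hptsup]
    exact (lintegral_iSup hfsm hmono).symm
  have htop : (⨆ m : ℕ, coxL c ω ((m:ℝ) + 1)) = ⊤ := hsup.trans hω.2
  by_contra hcon
  push_neg at hcon
  have hall : ∀ m : ℕ, coxL c ω ((m:ℝ)+1) ≤ ENNReal.ofReal e := by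
    intro m
    by_contra h
    push_neg at h
    refine absurd ((ENNReal.ofReal_le_iff_le_toReal (coxG_lt_top hω _).ne).mp h.le) ?_
    exact not_le.mpr (hcon ((m:ℝ)+1) (by positivity))
  have hle : (⊤ : ℝ≥0∞) ≤ ENNReal.ofReal e := htop ▸ iSup_le hall
  exact absurd (top_le_iff.mp hle) ENNReal.ofReal_ne_top

lemma coxT_nonneg (c : ℝ → Ω → ℝ) (ω : Ω) (e : ℝ) : 0 ≤ coxT c ω e := by
  unfold coxT
  split_ifs
  · exact Real.sInf_nonneg (fun x hx => hx.1.le)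
  · exact le_rfl

lemma coxT_lt_iff {c : ℝ → Ω → ℝ} (hc : Measurable fun q : ℝ × Ω => c q.1 q.2) {ω : Ω}
    (hω : ω ∈ coxG c) {e x : ℝ} :
    coxT c ω e < x ↔ ∃ q : ℚ, 0 < (q:ℝ) ∧ (q:ℝ) < x ∧ e ≤ (coxL c ω (q:ℝ)).toReal := by
  rw [coxT, if_pos hω]
  constructor
  · intro h
    have hne : Set.Nonempty {u : ℝ | 0 < u ∧ e ≤ (coxL c ω u).toReal} := by
      obtain ⟨u, hu0, hue⟩ := coxG_exists hc hω e
      exact ⟨u, hu0, hue⟩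
    obtain ⟨a, ⟨ha0, hae⟩, hax⟩ := exists_lt_of_csInf_lt hne h
    obtain ⟨q, hq1, hq2⟩ := exists_rat_btwn hax
    exact ⟨q, lt_trans ha0 hq1, hq2, le_trans hae (coxL_toReal_mono hω hq1.le)⟩
  · rintro ⟨q, hq0, hqx, hqe⟩
    exact lt_of_le_of_lt (csInf_le ⟨0, fun y hy => hy.1.le⟩ ⟨hq0, hqe⟩) hqx

lemma measurable_coxT {c : ℝ → Ω → ℝ} (hc : Measurable fun q : ℝ × Ω => c q.1 q.2) :
    Measurable fun x : Ω × ℝ => coxT c x.1 x.2 := by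
  have hG := measurable_coxG hc
  apply measurable_of_Iio
  intro x
  have hset : (fun p : Ω × ℝ => coxT c p.1 p.2) ⁻¹' Set.Iio x
      = ({p : Ω × ℝ | p.1 ∈ (coxG c)ᶜ} ∩ {_p : Ω × ℝ | 0 < x})
        ∪ ⋃ q : ℚ, ({p : Ω × ℝ | p.1 ∈ coxG c} ∩ {_p : Ω × ℝ | 0 < (q:ℝ) ∧ (q:ℝ) < x}
            ∩ {p : Ω × ℝ | p.2 ≤ (coxL c p.1 (q:ℝ)).toReal}) := by
    ext p
    simp only [Set.mem_preimage, Set.mem_Iio, Set.mem_union, Set.mem_iUnion, Set.mem_inter_iff,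
      Set.mem_setOf_eq, Set.mem_compl_iff]
    by_cases hp : p.1 ∈ coxG c
    · rw [coxT_lt_iff hc hp]
      constructor
      · rintro ⟨q, hq0, hqx, hqe⟩
        exact Or.inr ⟨q, ⟨hp, hq0, hqx⟩, hqe⟩
      · rintro (⟨hnp, _⟩ | ⟨q, ⟨_, hq0, hqx⟩, hqe⟩)
        · exact absurd hp hnp
        · exact ⟨q, hq0, hqx, hqe⟩
    · rw [coxT, if_neg hp]
      constructor
      · intro hx
        exact Or.inl ⟨hp, hx⟩
      · rintro (⟨_, hx⟩ | ⟨q, ⟨hq, _⟩, _⟩)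
        · exact hx
        · exact absurd hq hp
  rw [hset]
  refine MeasurableSet.union ((measurable_fst hG.compl).inter (MeasurableSet.const _))
    (MeasurableSet.iUnion fun q => ?_)
  exact ((measurable_fst hG).inter (MeasurableSet.const _)).inter
    (measurableSet_le measurable_snd (((measurable_coxL' hc (q:ℝ)).comp
      measurable_fst).ennreal_toReal))

lemma integral_coxL {c : ℝ → Ω → ℝ} (hc : Measurable fun q : ℝ × Ω => c q.1 q.2)
    (hcnn : ∀ s ω, 0 ≤ c s ω) (ω : Ω) (u : ℝ) :
    ∫ s in Set.Ioc (0:ℝ) u, c s ω = (coxL c ω u).toReal := by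
  have hm : Measurable fun s : ℝ => c s ω := hc.comp (measurable_id.prodMk measurable_const)
  rw [integral_eq_lintegral_of_nonneg_ae
    (Filter.Eventually.of_forall (fun s => hcnn s ω)) hm.aestronglyMeasurable]
  rfl

lemma coxT_eq {c : ℝ → Ω → ℝ} (hc : Measurable fun q : ℝ × Ω => c q.1 q.2)
    (hcnn : ∀ s ω, 0 ≤ c s ω) {ω : Ω} (hω : ω ∈ coxG c) (e : ℝ) :
    coxT c ω e = sInf {u : ℝ | 0 < u ∧ e ≤ ∫ s in Set.Ioc (0:ℝ) u, c s ω} := by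
  rw [coxT, if_pos hω]
  congr 1
  ext u
  rw [Set.mem_setOf_eq, Set.mem_setOf_eq, integral_coxL hc hcnn]

lemma continuous_coxL_toReal {c : ℝ → Ω → ℝ} (hc : Measurable fun q : ℝ × Ω => c q.1 q.2)
    (hcnn : ∀ s ω, 0 ≤ c s ω) {ω : Ω} (hω : ω ∈ coxG c) :
    Continuous fun u : ℝ => (coxL c ω u).toReal := by
  have hm : Measurable fun s : ℝ => c s ω := hc.comp (measurable_id.prodMk measurable_const)
  have hc'm : Measurable fun s : ℝ => if 0 < s then c s ω else 0 := by
    exact Measurable.ite measurableSet_Ioi hm measurable_const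
  have hnorm : ∀ s : ℝ, (‖if 0 < s then c s ω else 0‖₊ : ℝ≥0∞)
      = Set.indicator (Set.Ioi (0:ℝ)) (fun s => ENNReal.ofReal (c s ω)) s := by
    intro s
    by_cases h : 0 < s
    · rw [if_pos h, Set.indicator_of_mem (show s ∈ Set.Ioi (0:ℝ) from h),
        ← enorm_eq_nnnorm, Real.enorm_eq_ofReal (hcnn s ω)]
    · rw [if_neg h, Set.indicator_of_notMem (show s ∉ Set.Ioi (0:ℝ) from h)]
      simp
  have hint : ∀ a b : ℝ, IntervalIntegrable (fun s : ℝ => if 0 < s then c s ω else 0)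
      volume a b := by
    intro a b
    rw [intervalIntegrable_iff]
    constructor
    · exact hc'm.aestronglyMeasurable
    · show (∫⁻ s in Set.uIoc a b, (‖if 0 < s then c s ω else 0‖₊ : ℝ≥0∞)) < ⊤
      calc ∫⁻ s in Set.uIoc a b, (‖if 0 < s then c s ω else 0‖₊ : ℝ≥0∞)
          = ∫⁻ s in Set.uIoc a b,
            Set.indicator (Set.Ioi (0:ℝ)) (fun s => ENNReal.ofReal (c s ω)) s := by
            exact lintegral_congr fun s => hnorm s
        _ ≤ ∫⁻ s in Set.uIoc a b,
            Set.indicator (Set.Ioc (0:ℝ) (max a b)) (fun s => ENNReal.ofReal (c s ω)) s := by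
            apply lintegral_mono_ae
            filter_upwards [ae_restrict_mem measurableSet_uIoc] with s hs
            by_cases h : s ∈ Set.Ioi (0:ℝ)
            · rw [Set.indicator_of_mem h, Set.indicator_of_mem
                (show s ∈ Set.Ioc (0:ℝ) (max a b) from ⟨h, hs.2⟩)]
            · rw [Set.indicator_of_notMem h]; exact zero_le
        _ ≤ ∫⁻ s, Set.indicator (Set.Ioc (0:ℝ) (max a b)) (fun s => ENNReal.ofReal (c s ω)) s :=
            setLIntegral_le_lintegral _ _
        _ = coxL c ω (max a b) := by rw [lintegral_indicator measurableSet_Ioc]; rfl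
        _ < ⊤ := coxG_lt_top hω _
  have hprim : ∀ u : ℝ, (coxL c ω u).toReal
      = ∫ x in (0:ℝ)..u, (if 0 < x then c x ω else 0) := by
    intro u
    rcases le_or_gt u 0 with h | h
    · rw [coxL_of_nonpos c ω h, intervalIntegral.integral_of_ge h]
      rw [setIntegral_congr_fun measurableSet_Ioc
        (fun s hs => if_neg (not_lt.mpr hs.2) : Set.EqOn _ (fun _ => (0:ℝ)) _)]
      simp
    · rw [intervalIntegral.integral_of_le h.le,
        setIntegral_congr_fun measurableSet_Ioc
          (fun s hs => if_pos hs.1 : Set.EqOn _ (fun s => c s ω) _),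
        integral_coxL hc hcnn]
  have : (fun u : ℝ => (coxL c ω u).toReal)
      = fun u : ℝ => ∫ x in (0:ℝ)..u, (if 0 < x then c x ω else 0) := funext hprim
  rw [this]
  exact intervalIntegral.continuous_primitive hint 0

lemma coxT_gt_iff {c : ℝ → Ω → ℝ} (hc : Measurable fun q : ℝ × Ω => c q.1 q.2)
    (hcnn : ∀ s ω, 0 ≤ c s ω) {ω : Ω} (hω : ω ∈ coxG c) {e : ℝ} (he : 0 < e) (s : ℝ) :
    s < coxT c ω e ↔ (coxL c ω s).toReal < e := by
  have hbdd : BddBelow {u : ℝ | 0 < u ∧ e ≤ (coxL c ω u).toReal} :=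
    ⟨0, fun y hy => hy.1.le⟩
  have hne : Set.Nonempty {u : ℝ | 0 < u ∧ e ≤ (coxL c ω u).toReal} := by
    obtain ⟨u, hu0, hue⟩ := coxG_exists hc hω e
    exact ⟨u, hu0, hue⟩
  rw [coxT, if_pos hω]
  constructor
  · intro h
    by_contra hcon
    push_neg at hcon
    have hs0 : 0 < s := by
      by_contra hs
      push_neg at hs
      rw [coxL_of_nonpos c ω hs] at hcon
      simp at hcon
      linarith
    exact absurd (csInf_le hbdd ⟨hs0, hcon⟩) (not_le.mpr h)
  · intro h
    rcases lt_or_ge s 0 with hs | hs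
    · exact lt_of_lt_of_le hs (le_csInf hne (fun y hy => hy.1.le))
    · have hcont := continuous_coxL_toReal hc hcnn hω
      have hopen : IsOpen {u : ℝ | (coxL c ω u).toReal < e} :=
        isOpen_lt hcont continuous_const
      obtain ⟨δ, hδ0, hball⟩ := Metric.isOpen_iff.mp hopen s h
      have hkey : s + δ/2 ≤ sInf {u : ℝ | 0 < u ∧ e ≤ (coxL c ω u).toReal} := by
        apply le_csInf hne
        intro y hy
        by_contra hy2
        push_neg at hy2
        have hys : s < y := by
          by_contra hys
          push_neg at hys
          exact absurd hy.2 (not_le.mpr (lt_of_le_of_lt (coxL_toReal_mono hω hys) h))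
        have hymem : y ∈ Metric.ball s δ := by
          rw [Real.ball_eq_Ioo]
          exact ⟨by linarith, by linarith⟩
        exact absurd hy.2 (not_le.mpr (hball hymem))
      linarith
      
end CoxAux
lemma sum_Icc_one_eq_sum_fin {M : Type*} [AddCommMonoid M] (f : ℕ → M) (n : ℕ) :
    ∑ k ∈ Finset.Icc 1 n, f k = ∑ j : Fin n, f ((j:ℕ)+1) := by
  induction n with
  | zero => simp
  | succ n ih =>
    rw [Finset.sum_Icc_succ_top (Nat.succ_le_succ (Nat.zero_le n)), ih, Fin.sum_univ_castSucc]
    simp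

/-- conditional survival probability of `τ_{n+1}` given
`𝓕_∞ ∨ σ(E_1) ∨ … ∨ σ(E_n)` in the multiple-default Cox model:
`P̃(τ_{n+1} > t | 𝒢_∞^{(n)}) = exp(−∫_0^{(t−τ_n)⁺} λ̃^{n+1}_s ds)`.
`Ω'` plays the role of `Ω̂`, `Phat` of `P̂`, `lam n` of `λ̃ⁿ`, `τ'` of `τ̃`. -/
theorem stmt_5
    {Ω Ω' : Type*} [mΩ : MeasurableSpace Ω] [mΩ' : MeasurableSpace Ω']
    (P : Measure Ω) (Phat : Measure Ω')
    [IsProbabilityMeasure P] [IsProbabilityMeasure Phat]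
    (F : Filtration ℝ mΩ) (hF : (⨆ t : ℝ, (F t : MeasurableSpace Ω)) = mΩ)
    (N : ℕ) (hN : 1 ≤ N)
    (E : ℕ → Ω' → ℝ) (hE_meas : ∀ n, Measurable (E n))
    (hE_indep : iIndepFun
      (fun i : Fin N => E ((i : ℕ) + 1)) Phat)
    (hE_exp : ∀ n : ℕ, 1 ≤ n → n ≤ N → ∀ x : ℝ, 0 ≤ x →
      Phat {ω | x < E n ω} = ENNReal.ofReal (Real.exp (-x)))
    (lam : ℕ → ℝ → Ω → ℝ)
    (hlam_meas : ∀ n, Measurable fun q : ℝ × Ω => lam n q.1 q.2)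
    (hlam_nonneg : ∀ n s ω, 0 ≤ lam n s ω)
    (hlam_adapted : ∀ n t, Measurable[F t] fun ω => lam n t ω)
    (hlam_int : ∀ n : ℕ, 1 ≤ n → n ≤ N → ∀ᵐ ω ∂P,
      (∀ t : ℝ, ∫⁻ s in Set.Ioc (0:ℝ) t, ENNReal.ofReal (lam n s ω) < ⊤) ∧
      (∫⁻ s in Set.Ioi (0:ℝ), ENNReal.ofReal (lam n s ω) = ⊤))
    (τ' : ℕ → Ω × Ω' → ℝ)
    (hτ' : ∀ n p, τ' n p
      = sInf {t : ℝ | 0 < t ∧ E n p.2 ≤ ∫ s in Set.Ioc (0:ℝ) t, lam n s p.1})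
    (τ : ℕ → Ω × Ω' → ℝ)
    (hτ : ∀ n p, τ n p = ∑ k ∈ Finset.Icc 1 n, τ' k p) :
    ∀ n : ℕ, n < N → ∀ t : ℝ, 0 ≤ t →
      (P.prod Phat)[Set.indicator {p : Ω × Ω' | t < τ (n + 1) p} (fun _ => (1 : ℝ)) |
          MeasurableSpace.comap Prod.fst mΩ ⊔
            ⨆ i ∈ Finset.Icc 1 n,
              MeasurableSpace.comap (fun p : Ω × Ω' => E i p.2) inferInstance]
        =ᵐ[P.prod Phat]
      fun p => Real.exp (-(∫ s in Set.Ioc (0:ℝ) (max (t - τ n p) 0), lam (n + 1) s p.1)) := by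
  intro n hn t ht
  classical
  set μ : Measure (Ω × Ω') := P.prod Phat with hμdef
  -- basic objects
  set W : Ω' → (Fin n → ℝ) := fun ω' j => E ((j:ℕ)+1) ω' with hWdef
  have hW : Measurable W := measurable_pi_lambda _ (fun j => hE_meas _)
  set φ : Ω × Ω' → Ω × (Fin n → ℝ) := fun p => (p.1, W p.2) with hφdef
  have hφ : Measurable φ := measurable_fst.prodMk (hW.comp measurable_snd)
  set τv : Ω × (Fin n → ℝ) → ℝ :=
    fun x => ∑ j : Fin n, coxT (lam ((j:ℕ)+1)) x.1 (x.2 j) with hτvdef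
  have hτv : Measurable τv := Finset.measurable_sum _ (fun j _ =>
    (measurable_coxT (hlam_meas _)).comp
      (measurable_fst.prodMk ((measurable_pi_apply j).comp measurable_snd)))
  set hfun : Ω × (Fin n → ℝ) → ℝ :=
    fun x => (coxL (lam (n+1)) x.1 (max (t - τv x) 0)).toReal with hhdef
  have hhfun : Measurable hfun := ((measurable_coxL (hlam_meas (n+1))).comp
    (measurable_fst.prodMk (((measurable_const.sub hτv).max measurable_const)))).ennreal_toReal
  have hhnn : ∀ x, 0 ≤ hfun x := fun x => ENNReal.toReal_nonneg
  -- sigma-algebra identifications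
  have hmE : (⨆ i ∈ Finset.Icc 1 n,
        MeasurableSpace.comap (fun p : Ω × Ω' => E i p.2) inferInstance)
      = ⨆ j : Fin n,
        MeasurableSpace.comap (fun p : Ω × Ω' => E ((j:ℕ)+1) p.2) inferInstance := by
    apply le_antisymm
    · refine iSup₂_le fun i hi => ?_
      rw [Finset.mem_Icc] at hi
      have hlt : i - 1 < n := by omega
      have hieq : ((⟨i-1, hlt⟩ : Fin n) : ℕ) + 1 = i := by simp; omega
      have hieq2 : (fun p : Ω × Ω' => E (((⟨i-1, hlt⟩ : Fin n) : ℕ)+1) p.2)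
          = fun p : Ω × Ω' => E i p.2 := by rw [hieq]
      exact le_iSup_of_le (⟨i-1, hlt⟩ : Fin n) (le_of_eq (by rw [hieq2]))
    · refine iSup_le fun j => ?_
      exact le_iSup₂_of_le ((j:ℕ)+1) (Finset.mem_Icc.mpr ⟨Nat.succ_le_succ (Nat.zero_le _),
        Nat.succ_le_of_lt j.2⟩) le_rfl
  have hm_comap : MeasurableSpace.comap φ inferInstance
      = (MeasurableSpace.comap Prod.fst mΩ ⊔
          ⨆ i ∈ Finset.Icc 1 n,
            MeasurableSpace.comap (fun p : Ω × Ω' => E i p.2) inferInstance) := by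
    have h1 : (inferInstance : MeasurableSpace (Ω × (Fin n → ℝ)))
        = MeasurableSpace.comap Prod.fst mΩ ⊔
          MeasurableSpace.comap Prod.snd (MeasurableSpace.pi) := rfl
    rw [h1, MeasurableSpace.comap_sup]
    congr 1
    · rw [MeasurableSpace.comap_comp]
      rfl
    · rw [hmE]
      have h2 : (MeasurableSpace.pi : MeasurableSpace (Fin n → ℝ))
          = ⨆ j : Fin n, MeasurableSpace.comap (fun v : Fin n → ℝ => v j) inferInstance := rfl
      rw [h2, MeasurableSpace.comap_comp, MeasurableSpace.comap_iSup]
      refine iSup_congr fun j => ?_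
      rw [MeasurableSpace.comap_comp]
      rfl
  have hm_le : MeasurableSpace.comap φ inferInstance
      ≤ (inferInstance : MeasurableSpace (Ω × Ω')) := hφ.comap_le
  rw [← hm_comap]
  haveI : IsFiniteMeasure μ := by rw [hμdef]; infer_instance
  haveI : SigmaFinite (μ.trim hm_le) := by
    haveI := isFiniteMeasure_trim (μ := μ) hm_le
    infer_instance
  -- the almost-everywhere good structure
  have hGae : ∀ k, 1 ≤ k → k ≤ N → ∀ᵐ p : Ω × Ω' ∂μ, p.1 ∈ coxG (lam k) := by
    intro k h1 h2
    have hPG : ∀ᵐ ω ∂P, ω ∈ coxG (lam k) := by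
      filter_upwards [hlam_int k h1 h2] with ω hω
      exact ⟨fun q => hω.1 q, hω.2⟩
    have hGm : MeasurableSet (coxG (lam k)) := measurable_coxG (hlam_meas k)
    rw [ae_iff] at hPG ⊢
    have hset : {p : Ω × Ω' | ¬ p.1 ∈ coxG (lam k)}
        = ((coxG (lam k))ᶜ : Set Ω) ×ˢ (Set.univ : Set Ω') := by
      rw [Set.prod_univ]; rfl
    have hPG' : P ((coxG (lam k))ᶜ) = 0 := hPG
    rw [hset, hμdef, Measure.prod_prod, hPG', zero_mul]
  have hEae : ∀ k, 1 ≤ k → k ≤ N → ∀ᵐ p : Ω × Ω' ∂μ, 0 < E k p.2 := by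
    intro k h1 h2
    have hms : MeasurableSet {ω' | 0 < E k ω'} := measurableSet_lt measurable_const (hE_meas k)
    have h0 : Phat {ω' | 0 < E k ω'}ᶜ = 0 := by
      rw [prob_compl_eq_zero_iff hms]
      have := hE_exp k h1 h2 0 le_rfl
      rwa [neg_zero, Real.exp_zero, ENNReal.ofReal_one] at this
    rw [ae_iff]
    have hset : {p : Ω × Ω' | ¬ 0 < E k p.2}
        = (Set.univ : Set Ω) ×ˢ ({ω' | 0 < E k ω'}ᶜ : Set Ω') := by
      rw [Set.univ_prod]; rfl
    rw [hset, hμdef, Measure.prod_prod, h0, mul_zero]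
  have hn1N : n + 1 ≤ N := hn
  have hGood : ∀ᵐ p : Ω × Ω' ∂μ,
      (∀ k ∈ Finset.Icc 1 (n+1), p.1 ∈ coxG (lam k))
        ∧ (∀ k ∈ Finset.Icc 1 (n+1), 0 < E k p.2) := by
    rw [Filter.eventually_and]
    constructor
    · rw [Finset.eventually_all]
      intro k hk
      rw [Finset.mem_Icc] at hk
      exact hGae k hk.1 (hk.2.trans hn1N)
    · rw [Finset.eventually_all]
      intro k hk
      rw [Finset.mem_Icc] at hk
      exact hEae k hk.1 (hk.2.trans hn1N)
  have hτ'eqG : ∀ p : Ω × Ω', ∀ k, p.1 ∈ coxG (lam k) →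
      τ' k p = coxT (lam k) p.1 (E k p.2) := by
    intro p k hk
    rw [hτ' k p]
    exact (coxT_eq (hlam_meas k) (hlam_nonneg k) hk (E k p.2)).symm
  have hτrep : ∀ᵐ p : Ω × Ω' ∂μ,
      τ n p = τv (φ p) ∧ τ (n+1) p = τv (φ p) + τ' (n+1) p := by
    filter_upwards [hGood] with p hp
    have hfirst : τ n p = τv (φ p) := by
      rw [hτ n p]
      have hcong : ∀ k ∈ Finset.Icc 1 n, τ' k p = coxT (lam k) p.1 (E k p.2) := by
        intro k hk
        rw [Finset.mem_Icc] at hk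
        exact hτ'eqG p k (hp.1 k (Finset.mem_Icc.mpr ⟨hk.1, hk.2.trans (Nat.le_succ n)⟩))
      rw [Finset.sum_congr rfl hcong,
        sum_Icc_one_eq_sum_fin (fun k => coxT (lam k) p.1 (E k p.2)) n]
    refine ⟨hfirst, ?_⟩
    rw [hτ (n+1) p, Finset.sum_Icc_succ_top (Nat.succ_le_succ (Nat.zero_le n)), ← hτ n p, hfirst]
  have hevent : ∀ᵐ p : Ω × Ω' ∂μ, (t < τ (n+1) p ↔ hfun (φ p) < E (n+1) p.2) := by
    filter_upwards [hGood, hτrep] with p hp hrep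
    have hG1 : p.1 ∈ coxG (lam (n+1)) :=
      hp.1 (n+1) (Finset.mem_Icc.mpr ⟨Nat.succ_le_succ (Nat.zero_le n), le_rfl⟩)
    have hE1 : 0 < E (n+1) p.2 :=
      hp.2 (n+1) (Finset.mem_Icc.mpr ⟨Nat.succ_le_succ (Nat.zero_le n), le_rfl⟩)
    have hLeq : coxL (lam (n+1)) p.1 (max (t - τv (φ p)) 0)
        = coxL (lam (n+1)) p.1 (t - τv (φ p)) := by
      rcases le_or_gt (t - τv (φ p)) 0 with h | h
      · rw [max_eq_right h, coxL_of_nonpos _ _ le_rfl, coxL_of_nonpos _ _ h]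
      · rw [max_eq_left h.le]
    rw [hrep.2, hτ'eqG p (n+1) hG1]
    constructor
    · intro hlt
      have : t - τv (φ p) < coxT (lam (n+1)) p.1 (E (n+1) p.2) := by linarith
      have h2 := (coxT_gt_iff (hlam_meas (n+1)) (hlam_nonneg (n+1)) hG1 hE1
        (t - τv (φ p))).mp this
      show (coxL (lam (n+1)) p.1 (max (t - τv (φ p)) 0)).toReal < E (n+1) p.2
      rw [hLeq]
      exact h2
    · intro hlt
      have h2 : (coxL (lam (n+1)) p.1 (t - τv (φ p))).toReal < E (n+1) p.2 := by
        rw [← hLeq]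
        exact hlt
      have := (coxT_gt_iff (hlam_meas (n+1)) (hlam_nonneg (n+1)) hG1 hE1
        (t - τv (φ p))).mpr h2
      linarith
  -- measurable version of the indicator and the candidate conditional expectation
  set Astar : Set (Ω × Ω') := {p | hfun (φ p) < E (n+1) p.2} with hAdef
  have hAm : MeasurableSet Astar :=
    measurableSet_lt (hhfun.comp hφ) ((hE_meas (n+1)).comp measurable_snd)
  set f₂ : Ω × Ω' → ℝ := Set.indicator Astar (fun _ => (1:ℝ)) with hf₂def
  set g : Ω × Ω' → ℝ := fun p => Real.exp (-(hfun (φ p))) with hgdef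
  have hgm_amb : Measurable g := (Real.measurable_exp.comp ((hhfun.comp hφ).neg))
  have hg01 : ∀ p, 0 ≤ g p ∧ g p ≤ 1 := fun p =>
    ⟨(Real.exp_pos _).le, Real.exp_le_one_iff.mpr (neg_nonpos.mpr (hhnn _))⟩
  -- independence
  have hindep : IndepFun W (E (n+1)) Phat := by
    have hSdisj : Disjoint (Finset.univ.filter (fun i : Fin N => (i:ℕ) < n))
        ({(⟨n, hn⟩ : Fin N)} : Finset (Fin N)) := by
      rw [Finset.disjoint_left]
      intro i hi hi'
      rw [Finset.mem_filter] at hi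
      rw [Finset.mem_singleton] at hi'
      subst hi'
      exact absurd hi.2 (lt_irrefl n)
    have h0 := hE_indep.indepFun_finset _ _ hSdisj (fun i => hE_meas _)
    have hψ : Measurable (fun v : ({i : Fin N // i ∈ Finset.univ.filter
          (fun i : Fin N => (i:ℕ) < n)} → ℝ) =>
        (fun j : Fin n => v ⟨⟨(j:ℕ), lt_trans j.2 hn⟩,
          Finset.mem_filter.mpr ⟨Finset.mem_univ _, j.2⟩⟩ : Fin n → ℝ)) :=
      measurable_pi_lambda _ (fun j => measurable_pi_apply _)
    have hev : Measurable (fun v : ({i : Fin N // i ∈ ({(⟨n, hn⟩ : Fin N)} : Finset (Fin N))}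
        → ℝ) => v ⟨⟨n, hn⟩, Finset.mem_singleton_self _⟩) := measurable_pi_apply _
    exact h0.comp hψ hev
  have hmap : Phat.map (fun ω' => (W ω', E (n+1) ω'))
      = (Phat.map W).prod (Phat.map (E (n+1))) :=
    (indepFun_iff_map_prod_eq_prod_map_map hW.aemeasurable
      (hE_meas (n+1)).aemeasurable).mp hindep
  have htail : ∀ x : ℝ, 0 ≤ x →
      Phat.map (E (n+1)) (Set.Ioi x) = ENNReal.ofReal (Real.exp (-x)) := by
    intro x hx
    rw [Measure.map_apply (hE_meas (n+1)) measurableSet_Ioi]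
    exact hE_exp (n+1) (Nat.succ_le_succ (Nat.zero_le n)) hn1N x hx
  haveI : IsProbabilityMeasure (Phat.map W) :=
    Measure.isProbabilityMeasure_map hW.aemeasurable
  haveI : IsProbabilityMeasure (Phat.map (E (n+1))) :=
    Measure.isProbabilityMeasure_map (hE_meas (n+1)).aemeasurable
  -- kernel computation for fixed ω
  have hker : ∀ (C : Set (Fin n → ℝ)), MeasurableSet C → ∀ ω : Ω,
      (∫⁻ ω', C.indicator (fun _ => (1:ℝ≥0∞)) (W ω')
          * (Set.Ioi (hfun (ω, W ω'))).indicator (fun _ => (1:ℝ≥0∞)) (E (n+1) ω') ∂Phat)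
      = ∫⁻ ω', C.indicator (fun _ => (1:ℝ≥0∞)) (W ω')
          * ENNReal.ofReal (Real.exp (-hfun (ω, W ω'))) ∂Phat := by
    intro C hC ω
    have hhω : Measurable fun v : Fin n → ℝ => hfun (ω, v) :=
      hhfun.comp (measurable_const.prodMk measurable_id)
    have hK1 : Measurable (fun z : (Fin n → ℝ) × ℝ =>
        C.indicator (fun _ => (1:ℝ≥0∞)) z.1
          * (Set.Ioi (hfun (ω, z.1))).indicator (fun _ => (1:ℝ≥0∞)) z.2) := by
      refine Measurable.mul ((measurable_const.indicator hC).comp measurable_fst) ?_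
      have hrw : (fun z : (Fin n → ℝ) × ℝ =>
          (Set.Ioi (hfun (ω, z.1))).indicator (fun _ => (1:ℝ≥0∞)) z.2)
          = fun z : (Fin n → ℝ) × ℝ =>
            if z ∈ {z : (Fin n → ℝ) × ℝ | hfun (ω, z.1) < z.2} then (1:ℝ≥0∞) else 0 := by
        funext z
        by_cases h : z.2 ∈ Set.Ioi (hfun (ω, z.1))
        · rw [Set.indicator_of_mem h]
          exact (if_pos (show z ∈ {z : (Fin n → ℝ) × ℝ | hfun (ω, z.1) < z.2} from h)).symm
        · rw [Set.indicator_of_notMem h]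
          exact (if_neg (show z ∉ {z : (Fin n → ℝ) × ℝ | hfun (ω, z.1) < z.2} from h)).symm
      rw [hrw]
      exact Measurable.ite (measurableSet_lt (hhω.comp measurable_fst) measurable_snd)
        measurable_const measurable_const
    have hK2 : Measurable (fun v : Fin n → ℝ =>
        C.indicator (fun _ => (1:ℝ≥0∞)) v * ENNReal.ofReal (Real.exp (-hfun (ω, v)))) :=
      (measurable_const.indicator hC).mul
        (ENNReal.measurable_ofReal.comp (Real.measurable_exp.comp hhω.neg))
    have hVm : Measurable (fun ω' : Ω' => (W ω', E (n+1) ω')) := hW.prodMk (hE_meas (n+1))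
    calc (∫⁻ ω', C.indicator (fun _ => (1:ℝ≥0∞)) (W ω')
          * (Set.Ioi (hfun (ω, W ω'))).indicator (fun _ => (1:ℝ≥0∞)) (E (n+1) ω') ∂Phat)
        = ∫⁻ z, (C.indicator (fun _ => (1:ℝ≥0∞)) z.1
            * (Set.Ioi (hfun (ω, z.1))).indicator (fun _ => (1:ℝ≥0∞)) z.2)
            ∂(Phat.map (fun ω' => (W ω', E (n+1) ω'))) := by
          rw [lintegral_map hK1 hVm]
      _ = ∫⁻ v, ∫⁻ e, (C.indicator (fun _ => (1:ℝ≥0∞)) v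
            * (Set.Ioi (hfun (ω, v))).indicator (fun _ => (1:ℝ≥0∞)) e)
            ∂(Phat.map (E (n+1))) ∂(Phat.map W) := by
          rw [hmap, lintegral_prod _ hK1.aemeasurable]
      _ = ∫⁻ v, C.indicator (fun _ => (1:ℝ≥0∞)) v
            * ENNReal.ofReal (Real.exp (-hfun (ω, v))) ∂(Phat.map W) := by
          refine lintegral_congr fun v => ?_
          rw [lintegral_const_mul _ (measurable_const.indicator measurableSet_Ioi),
            lintegral_indicator measurableSet_Ioi, setLIntegral_one,
            htail _ (hhnn _)]
      _ = ∫⁻ ω', C.indicator (fun _ => (1:ℝ≥0∞)) (W ω')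
            * ENNReal.ofReal (Real.exp (-hfun (ω, W ω'))) ∂Phat := by
          rw [lintegral_map hK2 hW]
  -- identification of the sigma-algebra on Ω'
  have hmE' : (⨆ j : Fin n, MeasurableSpace.comap (E ((j:ℕ)+1)) inferInstance
        : MeasurableSpace Ω')
      = MeasurableSpace.comap W MeasurableSpace.pi := by
    have h2 : (MeasurableSpace.pi : MeasurableSpace (Fin n → ℝ))
        = ⨆ j : Fin n, MeasurableSpace.comap (fun v : Fin n → ℝ => v j) inferInstance := rfl
    rw [h2, MeasurableSpace.comap_iSup]
    exact (iSup_congr fun j => by rw [MeasurableSpace.comap_comp]; rfl).symm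
  -- nonnegative versions
  set gE : Ω × Ω' → ℝ≥0∞ := fun p => ENNReal.ofReal (g p) with hgEdef
  set fE : Ω × Ω' → ℝ≥0∞ := Astar.indicator (fun _ => (1:ℝ≥0∞)) with hfEdef
  have hgEm : Measurable gE := ENNReal.measurable_ofReal.comp hgm_amb
  have hfEm : Measurable fE := measurable_const.indicator hAm
  have hgE1 : ∀ p, gE p ≤ 1 := fun p => ENNReal.ofReal_le_one.mpr (hg01 p).2
  have hfE1 : ∀ p, fE p ≤ 1 := fun p => by
    by_cases h : p ∈ Astar <;> simp [hfEdef, Set.indicator_apply, h]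
  -- rectangle computation
  have hrect : ∀ (B : Set Ω), MeasurableSet B → ∀ (D : Set Ω'),
      MeasurableSet[⨆ j : Fin n, MeasurableSpace.comap (E ((j:ℕ)+1)) inferInstance] D →
      ∫⁻ p in (Prod.fst ⁻¹' B ∩ Prod.snd ⁻¹' D), gE p ∂μ
        = ∫⁻ p in (Prod.fst ⁻¹' B ∩ Prod.snd ⁻¹' D), fE p ∂μ := by
    intro B hB D hD
    rw [hmE'] at hD
    obtain ⟨C, hC, hCD⟩ := MeasurableSpace.measurableSet_comap.mp hD
    have hDamb : MeasurableSet D := by rw [← hCD]; exact hW hC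
    have hSamb : MeasurableSet (Prod.fst ⁻¹' B ∩ Prod.snd ⁻¹' D) :=
      (hB.preimage measurable_fst).inter (hDamb.preimage measurable_snd)
    have hgpt : ∀ p : Ω × Ω', (Prod.fst ⁻¹' B ∩ Prod.snd ⁻¹' D).indicator gE p
        = B.indicator (fun _ => (1:ℝ≥0∞)) p.1
          * (C.indicator (fun _ => (1:ℝ≥0∞)) (W p.2)
            * ENNReal.ofReal (Real.exp (-hfun (p.1, W p.2)))) := by
      intro p
      have hmemD : (p.2 ∈ D) = (W p.2 ∈ C) := by rw [← hCD]; rfl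
      by_cases hb : p.1 ∈ B <;> by_cases hd : W p.2 ∈ C <;>
        simp [Set.indicator_apply, hb, hd, hmemD, hgEdef, hgdef, hφdef]
    have hfpt : ∀ p : Ω × Ω', (Prod.fst ⁻¹' B ∩ Prod.snd ⁻¹' D).indicator fE p
        = B.indicator (fun _ => (1:ℝ≥0∞)) p.1
          * (C.indicator (fun _ => (1:ℝ≥0∞)) (W p.2)
            * (Set.Ioi (hfun (p.1, W p.2))).indicator (fun _ => (1:ℝ≥0∞)) (E (n+1) p.2)) := by
      intro p
      have hmemD : (p.2 ∈ D) = (W p.2 ∈ C) := by rw [← hCD]; rfl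
      have hmemA : (p ∈ Astar) = (E (n+1) p.2 ∈ Set.Ioi (hfun (p.1, W p.2))) := by
        rw [hAdef]; rfl
      by_cases hb : p.1 ∈ B <;> by_cases hd : W p.2 ∈ C <;>
        by_cases he : E (n+1) p.2 ∈ Set.Ioi (hfun (p.1, W p.2)) <;>
        simp [Set.indicator_apply, hb, hd, he, hmemD, hmemA, hfEdef]
    have hinner_g : ∀ ω : Ω, Measurable (fun ω' : Ω' =>
        C.indicator (fun _ => (1:ℝ≥0∞)) (W ω')
          * ENNReal.ofReal (Real.exp (-hfun (ω, W ω')))) := fun ω =>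
      ((measurable_const.indicator hC).comp hW).mul
        (ENNReal.measurable_ofReal.comp (Real.measurable_exp.comp
          ((hhfun.comp (measurable_const.prodMk measurable_id)).comp hW).neg))
    have hinner_f : ∀ ω : Ω, Measurable (fun ω' : Ω' =>
        C.indicator (fun _ => (1:ℝ≥0∞)) (W ω')
          * (Set.Ioi (hfun (ω, W ω'))).indicator (fun _ => (1:ℝ≥0∞)) (E (n+1) ω')) := by
      intro ω
      refine Measurable.mul ((measurable_const.indicator hC).comp hW) ?_
      have hrw : (fun ω' : Ω' =>
          (Set.Ioi (hfun (ω, W ω'))).indicator (fun _ => (1:ℝ≥0∞)) (E (n+1) ω'))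
          = fun ω' : Ω' =>
            if ω' ∈ {ω' : Ω' | hfun (ω, W ω') < E (n+1) ω'} then (1:ℝ≥0∞) else 0 := by
        funext ω'
        by_cases h : E (n+1) ω' ∈ Set.Ioi (hfun (ω, W ω'))
        · rw [Set.indicator_of_mem h]
          exact (if_pos (show ω' ∈ {ω' : Ω' | hfun (ω, W ω') < E (n+1) ω'} from h)).symm
        · rw [Set.indicator_of_notMem h]
          exact (if_neg (show ω' ∉ {ω' : Ω' | hfun (ω, W ω') < E (n+1) ω'} from h)).symm
      rw [hrw]
      exact Measurable.ite (measurableSet_lt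
        ((hhfun.comp (measurable_const.prodMk measurable_id)).comp hW) (hE_meas (n+1)))
        measurable_const measurable_const
    have hFgm : Measurable (fun p : Ω × Ω' => B.indicator (fun _ => (1:ℝ≥0∞)) p.1
        * (C.indicator (fun _ => (1:ℝ≥0∞)) (W p.2)
          * ENNReal.ofReal (Real.exp (-hfun (p.1, W p.2))))) :=
      ((measurable_const.indicator hB).comp measurable_fst).mul
        ((((measurable_const.indicator hC).comp hW).comp measurable_snd).mul
          (ENNReal.measurable_ofReal.comp (Real.measurable_exp.comp
            ((hhfun.comp (measurable_fst.prodMk (hW.comp measurable_snd))).neg))))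
    have hFfm : Measurable (fun p : Ω × Ω' => B.indicator (fun _ => (1:ℝ≥0∞)) p.1
        * (C.indicator (fun _ => (1:ℝ≥0∞)) (W p.2)
          * (Set.Ioi (hfun (p.1, W p.2))).indicator (fun _ => (1:ℝ≥0∞)) (E (n+1) p.2))) := by
      refine Measurable.mul ((measurable_const.indicator hB).comp measurable_fst) ?_
      refine Measurable.mul (((measurable_const.indicator hC).comp hW).comp measurable_snd) ?_
      have hrw : (fun p : Ω × Ω' =>
          (Set.Ioi (hfun (p.1, W p.2))).indicator (fun _ => (1:ℝ≥0∞)) (E (n+1) p.2))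
          = fun p : Ω × Ω' =>
            if p ∈ Astar then (1:ℝ≥0∞) else 0 := by
        funext p
        by_cases h : E (n+1) p.2 ∈ Set.Ioi (hfun (p.1, W p.2))
        · rw [Set.indicator_of_mem h]
          exact (if_pos (show p ∈ Astar from h)).symm
        · rw [Set.indicator_of_notMem h]
          exact (if_neg (show p ∉ Astar from h)).symm
      rw [hrw]
      exact Measurable.ite hAm measurable_const measurable_const
    calc ∫⁻ p in (Prod.fst ⁻¹' B ∩ Prod.snd ⁻¹' D), gE p ∂μ
        = ∫⁻ p, (Prod.fst ⁻¹' B ∩ Prod.snd ⁻¹' D).indicator gE p ∂μ :=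
          (lintegral_indicator hSamb _).symm
      _ = ∫⁻ p, B.indicator (fun _ => (1:ℝ≥0∞)) p.1
            * (C.indicator (fun _ => (1:ℝ≥0∞)) (W p.2)
              * ENNReal.ofReal (Real.exp (-hfun (p.1, W p.2)))) ∂μ := lintegral_congr hgpt
      _ = ∫⁻ ω, ∫⁻ ω', B.indicator (fun _ => (1:ℝ≥0∞)) ω
            * (C.indicator (fun _ => (1:ℝ≥0∞)) (W ω')
              * ENNReal.ofReal (Real.exp (-hfun (ω, W ω')))) ∂Phat ∂P := by
          rw [hμdef, lintegral_prod _ hFgm.aemeasurable]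
      _ = ∫⁻ ω, ∫⁻ ω', B.indicator (fun _ => (1:ℝ≥0∞)) ω
            * (C.indicator (fun _ => (1:ℝ≥0∞)) (W ω')
              * (Set.Ioi (hfun (ω, W ω'))).indicator (fun _ => (1:ℝ≥0∞)) (E (n+1) ω'))
            ∂Phat ∂P := by
          refine lintegral_congr fun ω => ?_
          rw [lintegral_const_mul _ (hinner_g ω), lintegral_const_mul _ (hinner_f ω),
            hker C hC ω]
      _ = ∫⁻ p, B.indicator (fun _ => (1:ℝ≥0∞)) p.1
            * (C.indicator (fun _ => (1:ℝ≥0∞)) (W p.2)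
              * (Set.Ioi (hfun (p.1, W p.2))).indicator (fun _ => (1:ℝ≥0∞)) (E (n+1) p.2)) ∂μ
          := by rw [hμdef, lintegral_prod _ hFfm.aemeasurable]
      _ = ∫⁻ p, (Prod.fst ⁻¹' B ∩ Prod.snd ⁻¹' D).indicator fE p ∂μ :=
          (lintegral_congr hfpt).symm
      _ = ∫⁻ p in (Prod.fst ⁻¹' B ∩ Prod.snd ⁻¹' D), fE p ∂μ := lintegral_indicator hSamb _
  -- generation of the sigma-algebra by rectangles
  have hgen : (MeasurableSpace.comap φ inferInstance : MeasurableSpace (Ω × Ω'))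
      = MeasurableSpace.generateFrom {A : Set (Ω × Ω') | ∃ B D, MeasurableSet B ∧
          MeasurableSet[⨆ j : Fin n, MeasurableSpace.comap (E ((j:ℕ)+1)) inferInstance] D ∧
          A = Prod.fst ⁻¹' B ∩ Prod.snd ⁻¹' D} := by
    rw [hm_comap]
    apply le_antisymm
    · apply sup_le
      · rw [MeasurableSpace.le_def]
        rintro s ⟨B, hB, rfl⟩
        exact MeasurableSpace.measurableSet_generateFrom
          ⟨B, Set.univ, hB, MeasurableSet.univ,
            by rw [Set.preimage_univ, Set.inter_univ]⟩
      · rw [hmE]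
        refine iSup_le fun j => ?_
        rw [MeasurableSpace.le_def]
        rintro s ⟨K, hK, rfl⟩
        refine MeasurableSpace.measurableSet_generateFrom
          ⟨Set.univ, E ((j:ℕ)+1) ⁻¹' K, MeasurableSet.univ, ?_,
            by rw [Set.preimage_univ, Set.univ_inter]; rfl⟩
        exact MeasurableSpace.le_def.mp
          (le_iSup (fun j : Fin n =>
            MeasurableSpace.comap (E ((j:ℕ)+1)) inferInstance) j) _ ⟨K, hK, rfl⟩
    · refine MeasurableSpace.generateFrom_le ?_
      rintro A ⟨B, D, hB, hD, rfl⟩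
      refine MeasurableSet.inter ?_ ?_
      · exact MeasurableSpace.le_def.mp le_sup_left _ ⟨B, hB, rfl⟩
      · have hcs : MeasurableSpace.comap Prod.snd
            (⨆ j : Fin n, MeasurableSpace.comap (E ((j:ℕ)+1)) inferInstance
              : MeasurableSpace Ω')
            ≤ (MeasurableSpace.comap Prod.fst mΩ ⊔
              ⨆ i ∈ Finset.Icc 1 n,
                MeasurableSpace.comap (fun p : Ω × Ω' => E i p.2) inferInstance) := by
          rw [MeasurableSpace.comap_iSup]
          refine le_trans (iSup_le fun j => ?_) le_sup_right
          rw [MeasurableSpace.comap_comp, hmE]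
          exact le_iSup (fun j : Fin n =>
            MeasurableSpace.comap (fun p : Ω × Ω' => E ((j:ℕ)+1) p.2) inferInstance) j
        exact MeasurableSpace.le_def.mp hcs _ ⟨D, hD, rfl⟩
  -- the main induction
  have htot : ∫⁻ p, gE p ∂μ = ∫⁻ p, fE p ∂μ := by
    have h := hrect Set.univ MeasurableSet.univ Set.univ MeasurableSet.univ
    rw [Set.preimage_univ, Set.preimage_univ, Set.univ_inter, Measure.restrict_univ] at h
    exact h
  have hQ : ∀ ⦃A : Set (Ω × Ω')⦄, MeasurableSet[MeasurableSpace.comap φ inferInstance] A →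
      ∫⁻ p in A, gE p ∂μ = ∫⁻ p in A, fE p ∂μ := by
    refine MeasurableSpace.induction_on_inter
      (m := MeasurableSpace.comap φ inferInstance) hgen ?_ ?_ ?_ ?_ ?_
    · rintro A ⟨B1, D1, hB1, hD1, rfl⟩ A2 ⟨B2, D2, hB2, hD2, rfl⟩ _
      exact ⟨B1 ∩ B2, D1 ∩ D2, hB1.inter hB2, hD1.inter hD2, by
        ext p
        simp only [Set.mem_inter_iff, Set.mem_preimage]
        tauto⟩
    · simp
    · rintro A ⟨B, D, hB, hD, rfl⟩
      exact hrect B hB D hD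
    · intro A hA hQA
      have hAamb : MeasurableSet A := hm_le _ hA
      have hfin : ∫⁻ p in A, fE p ∂μ ≠ ⊤ := by
        refine ne_of_lt (lt_of_le_of_lt ?_ (measure_lt_top μ A))
        calc ∫⁻ p in A, fE p ∂μ ≤ ∫⁻ _ in A, 1 ∂μ := lintegral_mono fun p => hfE1 p
          _ = μ A := setLIntegral_one A
      have key : ∫⁻ p in A, fE p ∂μ + ∫⁻ p in Aᶜ, gE p ∂μ
          = ∫⁻ p in A, fE p ∂μ + ∫⁻ p in Aᶜ, fE p ∂μ := by
        calc ∫⁻ p in A, fE p ∂μ + ∫⁻ p in Aᶜ, gE p ∂μ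
            = ∫⁻ p in A, gE p ∂μ + ∫⁻ p in Aᶜ, gE p ∂μ := by rw [hQA]
          _ = ∫⁻ p, gE p ∂μ := lintegral_add_compl gE hAamb
          _ = ∫⁻ p, fE p ∂μ := htot
          _ = ∫⁻ p in A, fE p ∂μ + ∫⁻ p in Aᶜ, fE p ∂μ := (lintegral_add_compl fE hAamb).symm
      exact (ENNReal.add_right_inj hfin).mp key
    · intro f hdisj hmeas hQf
      rw [lintegral_iUnion (fun i => hm_le _ (hmeas i)) hdisj gE,
        lintegral_iUnion (fun i => hm_le _ (hmeas i)) hdisj fE]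
      exact tsum_congr hQf
  -- integrability and set-integral identity in Bochner form
  have hf₂m : Measurable f₂ := measurable_const.indicator hAm
  have hf₂int : Integrable f₂ μ := (integrable_const (1:ℝ)).indicator hAm
  have hgint : Integrable g μ := by
    refine Integrable.mono' (integrable_const (1:ℝ)) hgm_amb.aestronglyMeasurable ?_
    exact Filter.Eventually.of_forall fun p => by
      rw [Real.norm_eq_abs, abs_of_nonneg (hg01 p).1]; exact (hg01 p).2
  have hgeq : ∀ s, MeasurableSet[MeasurableSpace.comap φ inferInstance] s → μ s < ⊤ →
      ∫ x in s, g x ∂μ = ∫ x in s, f₂ x ∂μ := by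
    intro s hs _
    have hQs := hQ hs
    rw [integral_eq_lintegral_of_nonneg_ae
        (Filter.Eventually.of_forall fun p => (hg01 p).1)
        hgm_amb.aestronglyMeasurable.restrict,
      integral_eq_lintegral_of_nonneg_ae
        (Filter.Eventually.of_forall fun p =>
          Set.indicator_nonneg (fun _ _ => zero_le_one) p)
        hf₂m.aestronglyMeasurable.restrict]
    congr 1
    have e2 : ∫⁻ p in s, ENNReal.ofReal (f₂ p) ∂μ = ∫⁻ p in s, fE p ∂μ := by
      refine lintegral_congr fun p => ?_
      by_cases h : p ∈ Astar <;>
        simp [hf₂def, hfEdef, Set.indicator_apply, h]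
    rw [e2, ← hQs]
  have hgsm : AEStronglyMeasurable[MeasurableSpace.comap φ inferInstance] g μ := by
    have hφm : Measurable[MeasurableSpace.comap φ inferInstance] φ :=
      measurable_iff_comap_le.mpr le_rfl
    exact (((Real.measurable_exp.comp hhfun.neg).comp hφm).stronglyMeasurable).aestronglyMeasurable
  -- final assembly
  have horig : Set.indicator {p : Ω × Ω' | t < τ (n+1) p} (fun _ => (1:ℝ)) =ᵐ[μ] f₂ := by
    filter_upwards [hevent] with p hp
    rw [hf₂def]
    by_cases h : t < τ (n+1) p
    · rw [Set.indicator_of_mem (show p ∈ {p : Ω × Ω' | t < τ (n+1) p} from h),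
        Set.indicator_of_mem (show p ∈ Astar from hp.mp h)]
    · rw [Set.indicator_of_notMem (show p ∉ {p : Ω × Ω' | t < τ (n+1) p} from h),
        Set.indicator_of_notMem (show p ∉ Astar from fun hc => h (hp.mpr hc))]
  have hcond : g =ᵐ[μ] μ[f₂| MeasurableSpace.comap φ inferInstance] :=
    ae_eq_condExp_of_forall_setIntegral_eq hm_le hf₂int
      (fun s _ _ => hgint.integrableOn) hgeq hgsm
  have hcongr : μ[Set.indicator {p : Ω × Ω' | t < τ (n+1) p} (fun _ => (1:ℝ))
        | MeasurableSpace.comap φ inferInstance]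
      =ᵐ[μ] μ[f₂| MeasurableSpace.comap φ inferInstance] := condExp_congr_ae horig
  have htarget : g =ᵐ[μ]
      fun p => Real.exp (-(∫ s in Set.Ioc (0:ℝ) (max (t - τ n p) 0), lam (n+1) s p.1)) := by
    filter_upwards [hτrep] with p hp
    have : ∫ s in Set.Ioc (0:ℝ) (max (t - τ n p) 0), lam (n+1) s p.1 = hfun (φ p) := by
      rw [integral_coxL (hlam_meas (n+1)) (hlam_nonneg (n+1)), hp.1]
    rw [hgdef]
    simp only
    rw [this]
  exact hcongr.trans (hcond.symm.trans htarget)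
end

section
/- In the multiple-default Cox model: for every n ∈ {0, 1, …, N−1} and every random variable Θ : Ω̃ → [0,∞] that is measurable with respect to 𝓕_∞ ∨ σ(E_1) ∨ … ∨ σ(E_n), one has P̃(τ_{n+1} = Θ) = 0. In particular, τ_{n+1} avoids every 𝔾^{(n)}-stopping time. -/
open MeasureTheory ProbabilityTheory Set
open scoped ENNReal

noncomputable def LamInt (lamf : ℝ → ℝ) (t : ℝ) : ℝ := ∫ s in Set.Ioc (0:ℝ) t, lamf s

lemma LamInt_eq_toReal (lamf : ℝ → ℝ) (hmeas : Measurable lamf) (hnn : ∀ s, 0 ≤ lamf s) (t : ℝ) :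
    LamInt lamf t = (∫⁻ s in Set.Ioc (0:ℝ) t, ENNReal.ofReal (lamf s)).toReal := by
  exact integral_eq_lintegral_of_nonneg_ae (ae_of_all _ hnn) hmeas.aestronglyMeasurable

lemma LamInt_nonpos (lamf : ℝ → ℝ) {t : ℝ} (ht : t ≤ 0) : LamInt lamf t = 0 := by
  unfold LamInt
  rw [Set.Ioc_eq_empty (not_lt.mpr ht), Measure.restrict_empty, integral_zero_measure]

lemma key (lamf : ℝ → ℝ) (hmeas : Measurable lamf) (hnn : ∀ s, 0 ≤ lamf s)
    (hfin : ∀ t, ∫⁻ s in Set.Ioc (0:ℝ) t, ENNReal.ofReal (lamf s) < ⊤)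
    (hdiv : ∫⁻ s in Set.Ioi (0:ℝ), ENNReal.ofReal (lamf s) = ⊤)
    (e : ℝ) (he : 0 < e) :
    0 < sInf {t | 0 < t ∧ e ≤ LamInt lamf t} ∧
    LamInt lamf (sInf {t | 0 < t ∧ e ≤ LamInt lamf t}) = e ∧
    ∀ a, (e ≤ LamInt lamf a ↔ sInf {t | 0 < t ∧ e ≤ LamInt lamf t} ≤ a) := by
  set L : ℝ → ℝ≥0∞ := fun t => ∫⁻ s in Set.Ioc (0:ℝ) t, ENNReal.ofReal (lamf s) with hL
  have hΛL : ∀ t, LamInt lamf t = (L t).toReal := fun t => LamInt_eq_toReal lamf hmeas hnn t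
  have hLmono : Monotone L := by
    intro a b hab
    exact lintegral_mono_set (Set.Ioc_subset_Ioc le_rfl hab)
  have hΛmono : ∀ {a b : ℝ}, a ≤ b → LamInt lamf a ≤ LamInt lamf b := by
    intro a b hab
    rw [hΛL a, hΛL b]
    exact ENNReal.toReal_mono (hfin b).ne (hLmono hab)
  -- divergence: ∃ t, e ≤ Λ t
  have hS : Set.Nonempty {t | 0 < t ∧ e ≤ LamInt lamf t} := by
    have hU : (⋃ m : ℕ, Set.Ioc (0:ℝ) (m+1)) = Set.Ioi (0:ℝ) := by
      ext x; simp only [Set.mem_iUnion, Set.mem_Ioc, Set.mem_Ioi]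
      constructor
      · rintro ⟨m, h1, _⟩; exact h1
      · intro hx
        obtain ⟨m, hm⟩ := exists_nat_ge x
        exact ⟨m, hx, hm.trans (by linarith)⟩
    have hmonoS : Monotone (fun m : ℕ => Set.Ioc (0:ℝ) (m+1)) := by
      intro a b hab
      exact Set.Ioc_subset_Ioc le_rfl (by have := (Nat.cast_le (α := ℝ)).mpr hab; linarith)
    have := hmonoS.measure_iUnion (μ := (volume : Measure ℝ).withDensity (fun s => ENNReal.ofReal (lamf s)))
    have hLw : ∀ t : ℝ, ((volume : Measure ℝ).withDensity (fun s => ENNReal.ofReal (lamf s))) (Set.Ioc 0 t) = L t := by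
      intro t
      rw [withDensity_apply _ measurableSet_Ioc]
    have hLIoi : ((volume : Measure ℝ).withDensity (fun s => ENNReal.ofReal (lamf s))) (Set.Ioi 0) = ⊤ := by
      rw [withDensity_apply _ measurableSet_Ioi]; exact hdiv
    rw [hU, hLIoi] at this
    have : ∃ m : ℕ, ENNReal.ofReal e < L (m+1) := by
      by_contra hcon
      push_neg at hcon
      have : (⨆ m : ℕ, ((volume : Measure ℝ).withDensity (fun s => ENNReal.ofReal (lamf s))) (Set.Ioc (0:ℝ) (m+1))) ≤ ENNReal.ofReal e := by
        refine iSup_le fun m => ?_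
        rw [hLw]; exact hcon m
      rename_i htop
      rw [← htop] at this
      exact absurd (this.trans_lt ENNReal.ofReal_lt_top) (lt_irrefl _)
    obtain ⟨m, hm⟩ := this
    refine ⟨(m:ℝ)+1, by positivity, ?_⟩
    rw [hΛL]
    calc e = (ENNReal.ofReal e).toReal := by rw [ENNReal.toReal_ofReal he.le]
    _ ≤ (L (m+1)).toReal := ENNReal.toReal_mono (hfin _).ne hm.le
  set ν : Measure ℝ := (volume : Measure ℝ).withDensity (fun s => ENNReal.ofReal (lamf s)) with hν
  have hLw : ∀ t : ℝ, ν (Set.Ioc 0 t) = L t := fun t => withDensity_apply _ measurableSet_Ioc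
  have hbdd : BddBelow {t | 0 < t ∧ e ≤ LamInt lamf t} := ⟨0, fun t ht => ht.1.le⟩
  set φ := sInf {t | 0 < t ∧ e ≤ LamInt lamf t} with hφdef
  have hφ0 : 0 ≤ φ := le_csInf hS (fun t ht => ht.1.le)
  have hup : ∀ δ : ℝ, 0 < δ → e ≤ LamInt lamf (φ + δ) := by
    intro δ hδ
    obtain ⟨t, htS, htlt⟩ := (csInf_lt_iff hbdd hS).mp (by linarith : φ < φ + δ)
    exact htS.2.trans (hΛmono htlt.le)
  have hLup : ENNReal.ofReal e ≤ L φ := by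
    have hanti : Antitone (fun m : ℕ => Set.Ioc (0:ℝ) (φ + 1/(m+1))) := by
      intro a b hab
      refine Set.Ioc_subset_Ioc le_rfl ?_
      have : (1:ℝ)/(b+1) ≤ 1/(a+1) := by
        apply one_div_le_one_div_of_le (by positivity)
        have := (Nat.cast_le (α := ℝ)).mpr hab; linarith
      linarith
    have hint : (⋂ m : ℕ, Set.Ioc (0:ℝ) (φ + 1/(m+1))) = Set.Ioc 0 φ := by
      ext x
      simp only [Set.mem_iInter, Set.mem_Ioc]
      constructor
      · rintro h
        refine ⟨(h 0).1, ?_⟩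
        by_contra hx
        push_neg at hx
        obtain ⟨m, hm⟩ := exists_nat_one_div_lt (sub_pos.2 hx)
        have := (h m).2
        linarith
      · rintro ⟨hx1, hx2⟩ m
        have : (0:ℝ) < 1/((m:ℝ)+1) := by positivity
        exact ⟨hx1, by linarith⟩
    have := hanti.measure_iInter (μ := ν)
      (fun m => measurableSet_Ioc.nullMeasurableSet)
      ⟨0, by rw [hLw]; exact (hfin _).ne⟩
    rw [hint, hLw] at this
    rw [this]
    refine le_iInf fun m => ?_
    rw [hLw]
    refine ENNReal.ofReal_le_of_le_toReal ?_
    rw [← hΛL]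
    exact hup _ (by positivity)
  have hφpos : 0 < φ := by
    rcases lt_or_ge 0 φ with h | h
    · exact h
    · exfalso
      have : LamInt lamf φ = 0 := LamInt_nonpos lamf h
      have h2 : e ≤ LamInt lamf φ := by
        rw [hΛL]
        calc e = (ENNReal.ofReal e).toReal := (ENNReal.toReal_ofReal he.le).symm
        _ ≤ (L φ).toReal := ENNReal.toReal_mono (hfin _).ne hLup
      linarith
  have hlt : ∀ t : ℝ, t < φ → LamInt lamf t ≤ e := by
    intro t ht
    rcases le_or_gt t 0 with h | h
    · rw [LamInt_nonpos lamf h]; exact he.le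
    · by_contra hcon
      push_neg at hcon
      exact absurd (csInf_le hbdd ⟨h, hcon.le⟩) (not_le.mpr ht)
  have hLdown : L φ ≤ ENNReal.ofReal e := by
    have hsing : ν {φ} = 0 := by
      rw [hν, withDensity_apply _ (measurableSet_singleton φ),
        Measure.restrict_eq_zero.mpr (by simp), lintegral_zero_measure]
    have hsub : Set.Ioc (0:ℝ) φ ⊆ Set.Ioo 0 φ ∪ {φ} := by
      rintro x ⟨hx1, hx2⟩
      rcases lt_or_eq_of_le hx2 with h | h
      · exact Or.inl ⟨hx1, h⟩
      · exact Or.inr (by simp [h])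
    have hmono2 : Monotone (fun m : ℕ => Set.Ioc (0:ℝ) (φ - 1/(m+1))) := by
      intro a b hab
      refine Set.Ioc_subset_Ioc le_rfl ?_
      have : (1:ℝ)/(b+1) ≤ 1/(a+1) := by
        apply one_div_le_one_div_of_le (by positivity)
        have := (Nat.cast_le (α := ℝ)).mpr hab; linarith
      linarith
    have hUoo : (⋃ m : ℕ, Set.Ioc (0:ℝ) (φ - 1/(m+1))) = Set.Ioo 0 φ := by
      ext x
      simp only [Set.mem_iUnion, Set.mem_Ioc, Set.mem_Ioo]
      constructor
      · rintro ⟨m, h1, h2⟩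
        have : (0:ℝ) < 1/((m:ℝ)+1) := by positivity
        exact ⟨h1, by linarith⟩
      · rintro ⟨h1, h2⟩
        obtain ⟨m, hm⟩ := exists_nat_one_div_lt (sub_pos.2 h2)
        exact ⟨m, h1, by linarith⟩
    have hoo : ν (Set.Ioo 0 φ) ≤ ENNReal.ofReal e := by
      rw [← hUoo, hmono2.measure_iUnion]
      refine iSup_le fun m => ?_
      rw [hLw]
      have h1 : L (φ - 1/(m+1)) = ENNReal.ofReal (LamInt lamf (φ - 1/(m+1))) := by
        rw [hΛL, ENNReal.ofReal_toReal (hfin _).ne]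
      rw [h1]
      exact ENNReal.ofReal_le_ofReal (hlt _ (by
        have : (0:ℝ) < 1/((m:ℝ)+1) := by positivity
        linarith))
    calc L φ = ν (Set.Ioc 0 φ) := (hLw φ).symm
    _ ≤ ν (Set.Ioo 0 φ ∪ {φ}) := measure_mono hsub
    _ ≤ ν (Set.Ioo 0 φ) + ν {φ} := measure_union_le _ _
    _ ≤ ENNReal.ofReal e + 0 := add_le_add hoo hsing.le
    _ = ENNReal.ofReal e := by rw [add_zero]
  have hΛφ : LamInt lamf φ = e := by
    have h1 : e ≤ LamInt lamf φ := by
      rw [hΛL]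
      calc e = (ENNReal.ofReal e).toReal := (ENNReal.toReal_ofReal he.le).symm
      _ ≤ (L φ).toReal := ENNReal.toReal_mono (hfin _).ne hLup
    have h2 : LamInt lamf φ ≤ e := by
      rw [hΛL]
      calc (L φ).toReal ≤ (ENNReal.ofReal e).toReal := ENNReal.toReal_mono (by simp) hLdown
      _ = e := ENNReal.toReal_ofReal he.le
    linarith
  refine ⟨hφpos, hΛφ, fun a => ⟨fun h => ?_, fun h => hΛφ ▸ hΛmono h⟩⟩
  have ha : 0 < a := by
    by_contra hcon
    push_neg at hcon
    rw [LamInt_nonpos lamf hcon] at h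
    linarith
  exact csInf_le hbdd ⟨ha, h⟩

noncomputable def psiInv (Lam : ℝ → ℝ) (e : ℝ) : ℝ :=
  (⨅ q : ℚ, if e ≤ Lam (q:ℝ) then ENNReal.ofReal (q:ℝ) else ⊤).toReal

lemma psiInv_eq (Lam : ℝ → ℝ) (e φ : ℝ) (hφ : 0 < φ)
    (hIci : ∀ a, e ≤ Lam a ↔ φ ≤ a) : psiInv Lam e = φ := by
  have h1 : (⨅ q : ℚ, if e ≤ Lam (q:ℝ) then ENNReal.ofReal (q:ℝ) else ⊤) = ENNReal.ofReal φ := by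
    apply le_antisymm
    · refine ENNReal.le_of_forall_pos_le_add fun ε hε _ => ?_
      obtain ⟨q, hq1, hq2⟩ := exists_rat_btwn
        (lt_add_of_pos_right φ (by exact_mod_cast hε : (0:ℝ) < ε))
      refine (iInf_le _ q).trans ?_
      rw [if_pos ((hIci q).mpr hq1.le)]
      calc ENNReal.ofReal (q:ℝ) ≤ ENNReal.ofReal (φ + ε) := ENNReal.ofReal_le_ofReal hq2.le
      _ ≤ ENNReal.ofReal φ + ENNReal.ofReal ε := ENNReal.ofReal_add_le
      _ = ENNReal.ofReal φ + ε := by rw [ENNReal.ofReal_coe_nnreal]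
    · refine le_iInf fun q => ?_
      split_ifs with h
      · exact ENNReal.ofReal_le_ofReal ((hIci q).mp h)
      · exact le_top
  rw [psiInv, h1, ENNReal.toReal_ofReal hφ.le]

lemma exp_atomless {Ω' : Type*} [MeasurableSpace Ω'] (μ : Measure Ω') [IsProbabilityMeasure μ]
    (Y : Ω' → ℝ) (hY : Measurable Y)
    (hexp : ∀ x : ℝ, 0 ≤ x → μ {ω | x < Y ω} = ENNReal.ofReal (Real.exp (-x))) :
    (∀ x : ℝ, μ {ω | Y ω = x} = 0) ∧ μ {ω | Y ω ≤ 0} = 0 := by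
  have h0 : μ {ω | Y ω ≤ 0} = 0 := by
    have h1 : μ {ω | (0:ℝ) < Y ω} = 1 := by
      rw [hexp 0 le_rfl]; simp
    have h2 : {ω | Y ω ≤ 0} = {ω | (0:ℝ) < Y ω}ᶜ := by ext ω; simp
    have hms : MeasurableSet {ω | (0:ℝ) < Y ω} := hY measurableSet_Ioi
    rw [h2, measure_compl hms (measure_ne_top μ _), h1, measure_univ, tsub_self]
  refine ⟨fun x => ?_, h0⟩
  rcases le_or_gt x 0 with hx | hx
  · exact measure_mono_null (fun ω (h : Y ω = x) => h.trans_le hx) h0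
  · have hkey : ∀ m : ℕ, μ {ω | Y ω = x}
        ≤ ENNReal.ofReal (Real.exp (-(x - x/(m+2))) - Real.exp (-x)) := by
      intro m
      have hδ : 0 < x/((m:ℝ)+2) := by positivity
      have hδx : x/((m:ℝ)+2) < x := by
        rw [div_lt_iff₀ (by positivity)]
        nlinarith
      have hdisj : Disjoint {ω | Y ω = x} {ω | x < Y ω} := by
        rw [Set.disjoint_left]
        rintro ω (h1 : Y ω = x) (h2 : x < Y ω)
        exact absurd h1 (ne_of_gt h2)
      have hsub : {ω | Y ω = x} ∪ {ω | x < Y ω} ⊆ {ω | x - x/(m+2) < Y ω} := by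
        rintro ω (h | h)
        · have h' : Y ω = x := h
          show x - x/(m+2) < Y ω
          linarith [h'.ge]
        · have h' : x < Y ω := h
          show x - x/(m+2) < Y ω
          linarith
      have hadd : μ {ω | Y ω = x} + μ {ω | x < Y ω} ≤ μ {ω | x - x/(m+2) < Y ω} := by
        rw [← measure_union hdisj (hY measurableSet_Ioi)]
        exact measure_mono hsub
      rw [hexp x hx.le, hexp (x - x/(m+2)) (by linarith)] at hadd
      have := ENNReal.le_sub_of_add_le_right (by simp) hadd
      refine this.trans ?_
      rw [← ENNReal.ofReal_sub _ (Real.exp_pos _).le]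
    have htend : Filter.Tendsto
        (fun m : ℕ => ENNReal.ofReal (Real.exp (-(x - x/(m+2))) - Real.exp (-x)))
        Filter.atTop (nhds 0) := by
      have h1 : Filter.Tendsto (fun m : ℕ => x/((m:ℝ)+2)) Filter.atTop (nhds 0) := by
        apply Filter.Tendsto.div_atTop (tendsto_const_nhds)
        exact Filter.tendsto_atTop_add_const_right _ 2 tendsto_natCast_atTop_atTop
      have h2 : Continuous fun t : ℝ => Real.exp (-(x - t)) - Real.exp (-x) := by continuity
      have h3 := (h2.tendsto 0).comp h1
      simp only [Function.comp, sub_zero, sub_self] at h3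
      have h4 := (ENNReal.continuous_ofReal.tendsto _).comp h3
      simpa [Function.comp_def] using h4
    have := ge_of_tendsto' htend hkey
    exact le_antisymm (by simpa using this) zero_le

lemma avoid_of_indepFun {Ω' : Type*} [MeasurableSpace Ω'] (μ : Measure Ω') [IsProbabilityMeasure μ]
    (X Y : Ω' → ℝ) (hX : Measurable X) (hY : Measurable Y) (h : IndepFun X Y μ)
    (hat : ∀ x : ℝ, μ {ω | Y ω = x} = 0) : μ {ω | X ω = Y ω} = 0 := by
  have hmap : μ.map (fun ω => (X ω, Y ω)) = (μ.map X).prod (μ.map Y) :=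
    (indepFun_iff_map_prod_eq_prod_map_map hX.aemeasurable hY.aemeasurable).mp h
  have hdiag : MeasurableSet {q : ℝ × ℝ | q.1 = q.2} :=
    measurableSet_eq_fun measurable_fst measurable_snd
  haveI : IsProbabilityMeasure (μ.map X) := Measure.isProbabilityMeasure_map hX.aemeasurable
  haveI : IsProbabilityMeasure (μ.map Y) := Measure.isProbabilityMeasure_map hY.aemeasurable
  have h1 : μ {ω | X ω = Y ω} = (μ.map (fun ω => (X ω, Y ω))) {q : ℝ × ℝ | q.1 = q.2} := by
    rw [Measure.map_apply (hX.prodMk hY) hdiag]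
    rfl
  rw [h1, hmap, Measure.prod_apply hdiag]
  have h2 : ∀ x : ℝ, (μ.map Y) (Prod.mk x ⁻¹' {q : ℝ × ℝ | q.1 = q.2}) = 0 := by
    intro x
    have hpre : Prod.mk x ⁻¹' {q : ℝ × ℝ | q.1 = q.2} = {x} := by
      ext y; simp [eq_comm]
    rw [hpre, Measure.map_apply hY (measurableSet_singleton x)]
    have : Y ⁻¹' {x} = {ω | Y ω = x} := rfl
    rw [this]; exact hat x
  simp only [h2]
  simp

lemma lamInt_jointly_measurable {Ω : Type*} [MeasurableSpace Ω] (lamk : ℝ → Ω → ℝ)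
    (h : Measurable fun q : ℝ × Ω => lamk q.1 q.2) :
    Measurable fun x : Ω × ℝ => LamInt (fun s => lamk s x.1) x.2 := by
  have h1 : ∀ x : Ω × ℝ, LamInt (fun s => lamk s x.1) x.2
      = ∫ s, (Set.Ioc (0:ℝ) x.2).indicator (fun s => lamk s x.1) s := by
    intro x
    rw [LamInt, ← integral_indicator measurableSet_Ioc]
  simp_rw [h1]
  have hm : StronglyMeasurable fun z : (Ω × ℝ) × ℝ =>
      (Set.Ioc (0:ℝ) z.1.2).indicator (fun s => lamk s z.1.1) z.2 := by
    apply Measurable.stronglyMeasurable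
    have heq : ∀ z : (Ω × ℝ) × ℝ, (Set.Ioc (0:ℝ) z.1.2).indicator (fun s => lamk s z.1.1) z.2
        = if 0 < z.2 ∧ z.2 ≤ z.1.2 then lamk z.2 z.1.1 else 0 := by
      intro z; rw [Set.indicator_apply]; simp [Set.mem_Ioc]
    simp_rw [heq]
    refine Measurable.ite ?_ ?_ measurable_const
    · exact (measurableSet_lt measurable_const measurable_snd).inter
        (measurableSet_le measurable_snd (measurable_fst.snd))
    · exact h.comp (measurable_snd.prodMk measurable_fst.fst)
  exact hm.integral_prod_right'.measurable

lemma psiInv_measurable {Ω : Type*} [MeasurableSpace Ω] (Lam : Ω → ℝ → ℝ)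
    (h : Measurable fun x : Ω × ℝ => Lam x.1 x.2) :
    Measurable fun x : Ω × ℝ => psiInv (Lam x.1) x.2 := by
  unfold psiInv
  apply ENNReal.measurable_toReal.comp
  apply Measurable.iInf
  intro q
  refine Measurable.ite ?_ measurable_const measurable_const
  exact measurableSet_le measurable_snd (h.comp (measurable_fst.prodMk measurable_const))

lemma psiInv_measurable1 (Lam : ℝ → ℝ) : Measurable (psiInv Lam) := by
  unfold psiInv
  apply ENNReal.measurable_toReal.comp
  apply Measurable.iInf
  intro q
  refine Measurable.ite ?_ measurable_const measurable_const
  exact measurableSet_le measurable_id measurable_const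

lemma prod_null_left {α β : Type*} [MeasurableSpace α] [MeasurableSpace β]
    (μ : Measure α) (ν : Measure β) [SigmaFinite ν] {s : Set α} (hs : μ s = 0) :
    (μ.prod ν) {p : α × β | p.1 ∈ s} = 0 := by
  obtain ⟨t, hst, htm, ht0⟩ := exists_measurable_superset_of_null hs
  have hsub : {p : α × β | p.1 ∈ s} ⊆ t ×ˢ (Set.univ : Set β) :=
    fun p (hp : p.1 ∈ s) => ⟨hst hp, Set.mem_univ _⟩
  refine measure_mono_null hsub ?_
  rw [Measure.prod_prod, ht0, zero_mul]

lemma prod_null_right {α β : Type*} [MeasurableSpace α] [MeasurableSpace β]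
    (μ : Measure α) (ν : Measure β) [SigmaFinite ν] {s : Set β} (hs : ν s = 0) :
    (μ.prod ν) {p : α × β | p.2 ∈ s} = 0 := by
  obtain ⟨t, hst, htm, ht0⟩ := exists_measurable_superset_of_null hs
  have hsub : {p : α × β | p.2 ∈ s} ⊆ (Set.univ : Set α) ×ˢ t :=
    fun p (hp : p.2 ∈ s) => ⟨Set.mem_univ _, hst hp⟩
  refine measure_mono_null hsub ?_
  rw [Measure.prod_prod, ht0, mul_zero]

def mSup {Ω' : Type*} (E : ℕ → Ω' → ℝ) (n : ℕ) : MeasurableSpace Ω' :=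
  ⨆ i ∈ Finset.Icc 1 n, MeasurableSpace.comap (E i) inferInstance

def goodO {Ω : Type*} [MeasurableSpace Ω] (lam : ℕ → ℝ → Ω → ℝ) (n : ℕ) (ω : Ω) : Prop :=
  ∀ k ∈ Finset.Icc 1 (n+1),
    (∀ t : ℝ, ∫⁻ s in Set.Ioc (0:ℝ) t, ENNReal.ofReal (lam k s ω) < ⊤) ∧
    (∫⁻ s in Set.Ioi (0:ℝ), ENNReal.ofReal (lam k s ω) = ⊤)

def goodE {Ω' : Type*} (E : ℕ → Ω' → ℝ) (n : ℕ) (ω' : Ω') : Prop :=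
  ∀ k ∈ Finset.Icc 1 (n+1), 0 < E k ω'

attribute [irreducible] LamInt psiInv

set_option maxHeartbeats 2000000 in
/-- in the multiple-default Cox model, `τ_{n+1}` avoids every
`[0,∞]`-valued random time `Θ` that is measurable with respect to
`𝓕_∞ ∨ σ(E_1) ∨ … ∨ σ(E_n)`: `P̃(τ_{n+1} = Θ) = 0`.
`Ω'` plays the role of `Ω̂`, `Phat` of `P̂`, `lam n` of `λ̃ⁿ`, `τ'` of `τ̃`. -/
theorem stmt_6
    {Ω Ω' : Type*} [mΩ : MeasurableSpace Ω] [mΩ' : MeasurableSpace Ω']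
    (P : Measure Ω) (Phat : Measure Ω')
    [IsProbabilityMeasure P] [IsProbabilityMeasure Phat]
    (F : Filtration ℝ mΩ) (hF : (⨆ t : ℝ, (F t : MeasurableSpace Ω)) = mΩ)
    (N : ℕ) (hN : 1 ≤ N)
    (E : ℕ → Ω' → ℝ) (hE_meas : ∀ n, Measurable (E n))
    (hE_indep : iIndepFun
      (fun i : Fin N => E ((i : ℕ) + 1)) Phat)
    (hE_exp : ∀ n : ℕ, 1 ≤ n → n ≤ N → ∀ x : ℝ, 0 ≤ x →
      Phat {ω | x < E n ω} = ENNReal.ofReal (Real.exp (-x)))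
    (lam : ℕ → ℝ → Ω → ℝ)
    (hlam_meas : ∀ n, Measurable fun q : ℝ × Ω => lam n q.1 q.2)
    (hlam_nonneg : ∀ n s ω, 0 ≤ lam n s ω)
    (hlam_adapted : ∀ n t, Measurable[F t] fun ω => lam n t ω)
    (hlam_int : ∀ n : ℕ, 1 ≤ n → n ≤ N → ∀ᵐ ω ∂P,
      (∀ t : ℝ, ∫⁻ s in Set.Ioc (0:ℝ) t, ENNReal.ofReal (lam n s ω) < ⊤) ∧
      (∫⁻ s in Set.Ioi (0:ℝ), ENNReal.ofReal (lam n s ω) = ⊤))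
    (τ' : ℕ → Ω × Ω' → ℝ)
    (hτ' : ∀ n p, τ' n p
      = sInf {t : ℝ | 0 < t ∧ E n p.2 ≤ ∫ s in Set.Ioc (0:ℝ) t, lam n s p.1})
    (τ : ℕ → Ω × Ω' → ℝ)
    (hτ : ∀ n p, τ n p = ∑ k ∈ Finset.Icc 1 n, τ' k p) :
    ∀ n : ℕ, n < N → ∀ Θ : Ω × Ω' → ENNReal,
      Measurable[MeasurableSpace.comap Prod.fst mΩ ⊔
          ⨆ i ∈ Finset.Icc 1 n,
            MeasurableSpace.comap (fun p : Ω × Ω' => E i p.2) inferInstance] Θ →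
      (P.prod Phat) {p | Θ p = ENNReal.ofReal (τ (n + 1) p)} = 0 := by
  intro n hn Θ hΘ
  have hnN : n + 1 ≤ N := hn
  classical
  set Lam : ℕ → Ω → ℝ → ℝ := fun k ω t => LamInt (fun s => lam k s ω) t with hLam
  have hLamJ : ∀ k, Measurable fun x : Ω × ℝ => Lam k x.1 x.2 := fun k =>
    lamInt_jointly_measurable (lam k) (hlam_meas k)
  set ψ : ℕ → Ω → ℝ → ℝ := fun k ω e => psiInv (Lam k ω) e with hψ
  have hψJ : ∀ k, Measurable fun x : Ω × ℝ => ψ k x.1 x.2 := fun k =>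
    psiInv_measurable (Lam k) (hLamJ k)
  set g : Ω × Ω' → ℝ := fun p =>
    Lam (n+1) p.1 ((Θ p).toReal - ∑ k ∈ Finset.Icc 1 n, ψ k p.1 (E k p.2)) with hg
  have hm'le : mSup E n ≤ mΩ' := by
    simp only [mSup]
    refine iSup_le fun i => iSup_le fun _ => (hE_meas i).comap_le
  have hAle : (MeasurableSpace.comap Prod.fst mΩ ⊔
      ⨆ i ∈ Finset.Icc 1 n, MeasurableSpace.comap (fun p : Ω × Ω' => E i p.2) inferInstance)
      ≤ @Prod.instMeasurableSpace Ω Ω' mΩ (mSup E n) := by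
    refine sup_le (@measurable_fst Ω Ω' mΩ (mSup E n)).comap_le ?_
    refine iSup_le fun i => iSup_le fun hi => ?_
    have h1 : (MeasurableSpace.comap (fun p : Ω × Ω' => E i p.2) inferInstance
        : MeasurableSpace (Ω × Ω'))
        = MeasurableSpace.comap (Prod.snd : Ω × Ω' → Ω')
          (MeasurableSpace.comap (E i) inferInstance) := by
      rw [MeasurableSpace.comap_comp]; rfl
    rw [h1]
    have h2 : MeasurableSpace.comap (E i) inferInstance ≤ mSup E n := by
      have := le_iSup₂ (f := fun (j : ℕ) (_ : j ∈ Finset.Icc 1 n) =>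
        (MeasurableSpace.comap (E j) inferInstance : MeasurableSpace Ω')) i hi
      simpa [mSup] using this
    have h3 : MeasurableSpace.comap (Prod.snd : Ω × Ω' → Ω')
        (MeasurableSpace.comap (E i) inferInstance)
        ≤ MeasurableSpace.comap (Prod.snd : Ω × Ω' → Ω') (mSup E n) :=
      MeasurableSpace.comap_mono h2
    exact le_trans h3 (@measurable_snd Ω Ω' mΩ (mSup E n)).comap_le
  have hΘ2 : Measurable[@Prod.instMeasurableSpace Ω Ω' mΩ (mSup E n)] Θ := hΘ.mono hAle le_rfl
  have hA'le : (MeasurableSpace.comap Prod.fst mΩ ⊔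
      ⨆ i ∈ Finset.Icc 1 n, MeasurableSpace.comap (fun p : Ω × Ω' => E i p.2) inferInstance)
      ≤ (Prod.instMeasurableSpace : MeasurableSpace (Ω × Ω')) := by
    refine sup_le measurable_fst.comap_le ?_
    exact iSup_le fun i => iSup_le fun _ => ((hE_meas i).comp measurable_snd).comap_le
  have hΘm : Measurable Θ := hΘ.mono hA'le le_rfl
  have hgm : Measurable g := by
    rw [hg]
    have h1 : Measurable fun p : Ω × Ω' => (Θ p).toReal := ENNReal.measurable_toReal.comp hΘm
    have h2 : Measurable fun p : Ω × Ω' => ∑ k ∈ Finset.Icc 1 n, ψ k p.1 (E k p.2) :=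
      Finset.measurable_sum _ (fun k _ =>
        (hψJ k).comp (measurable_fst.prodMk ((hE_meas k).comp measurable_snd)))
    exact (hLamJ (n+1)).comp (measurable_fst.prodMk (h1.sub h2))
  set B : Set (Ω × Ω') := {p | E (n+1) p.2 = g p} with hB
  have hBmeas : MeasurableSet B := by
    rw [hB]
    exact measurableSet_eq_fun ((hE_meas (n+1)).comp measurable_snd) hgm
  have hGΩae : ∀ᵐ ω ∂P, goodO lam n ω := by
    have h : ∀ k : ℕ, ∀ᵐ ω ∂P, k ∈ Finset.Icc 1 (n+1) →
        ((∀ t : ℝ, ∫⁻ s in Set.Ioc (0:ℝ) t, ENNReal.ofReal (lam k s ω) < ⊤) ∧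
        (∫⁻ s in Set.Ioi (0:ℝ), ENNReal.ofReal (lam k s ω) = ⊤)) := by
      intro k
      by_cases hk : k ∈ Finset.Icc 1 (n+1)
      · exact (hlam_int k (Finset.mem_Icc.mp hk).1
          ((Finset.mem_Icc.mp hk).2.trans hnN)).mono (fun ω h _ => h)
      · exact Filter.Eventually.of_forall (fun ω h => absurd h hk)
    exact ae_all_iff.mpr h
  have hGΩ'ae : ∀ᵐ ω' ∂Phat, goodE E n ω' := by
    have h : ∀ k : ℕ, ∀ᵐ ω' ∂Phat, k ∈ Finset.Icc 1 (n+1) → 0 < E k ω' := by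
      intro k
      by_cases hk : k ∈ Finset.Icc 1 (n+1)
      · obtain ⟨h1, h2⟩ := Finset.mem_Icc.mp hk
        have h0 := (exp_atomless Phat (E k) (hE_meas k) (hE_exp k h1 (h2.trans hnN))).2
        have hae : ∀ᵐ ω' ∂Phat, ¬ (E k ω' ≤ 0) := by
          rw [ae_iff]
          convert h0 using 2
          ext ω'; simp
        exact hae.mono fun ω' h _ => not_le.mp h
      · exact Filter.Eventually.of_forall fun ω' h => absurd h hk
    exact ae_all_iff.mpr h
  have hnull1 : (P.prod Phat) {p : Ω × Ω' | ¬ goodO lam n p.1} = 0 :=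
    prod_null_left P Phat (ae_iff.mp hGΩae)
  have hnull2 : (P.prod Phat) {p : Ω × Ω' | ¬ goodE E n p.2} = 0 :=
    prod_null_right P Phat (ae_iff.mp hGΩ'ae)
  have hkey : ∀ p : Ω × Ω', goodO lam n p.1 → goodE E n p.2 → ∀ k ∈ Finset.Icc 1 (n+1),
      0 < τ' k p ∧ Lam k p.1 (τ' k p) = E k p.2 ∧
        ∀ a, (E k p.2 ≤ Lam k p.1 a ↔ τ' k p ≤ a) := by
    intro p hp1 hp2 k hk
    have hmeask : Measurable fun s => lam k s p.1 :=
      (hlam_meas k).comp (measurable_id.prodMk measurable_const)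
    have h := key (fun s => lam k s p.1) hmeask (fun s => hlam_nonneg k s p.1)
      (hp1 k hk).1 (hp1 k hk).2 (E k p.2) (hp2 k hk)
    rw [hτ']
    simp only [hLam, LamInt]
    simp only [LamInt] at h
    exact h
  have hincl : {p : Ω × Ω' | Θ p = ENNReal.ofReal (τ (n+1) p)} ⊆
      ({p : Ω × Ω' | ¬ goodO lam n p.1} ∪ {p : Ω × Ω' | ¬ goodE E n p.2}) ∪ B := by
    intro p hp
    by_cases hp1 : goodO lam n p.1
    · by_cases hp2 : goodE E n p.2
      · refine Or.inr ?_
        have hk := hkey p hp1 hp2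
        have hτpos : ∀ k ∈ Finset.Icc 1 (n+1), 0 < τ' k p := fun k hkk => (hk k hkk).1
        have hsum : τ (n+1) p = (∑ k ∈ Finset.Icc 1 n, τ' k p) + τ' (n+1) p := by
          rw [hτ]; exact Finset.sum_Icc_succ_top (by omega) _
        have hτnn : 0 ≤ τ (n+1) p := by
          rw [hτ]
          exact Finset.sum_nonneg fun k hkk => (hτpos k hkk).le
        have hpeq : (Θ p).toReal = τ (n+1) p := by
          have h : Θ p = ENNReal.ofReal (τ (n+1) p) := hp
          rw [h, ENNReal.toReal_ofReal hτnn]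
        have hψeq : ∀ k ∈ Finset.Icc 1 n, ψ k p.1 (E k p.2) = τ' k p := by
          intro k hkk
          have hkk' : k ∈ Finset.Icc 1 (n+1) := by
            rw [Finset.mem_Icc] at hkk ⊢; omega
          simp only [hψ]
          exact psiInv_eq (Lam k p.1) (E k p.2) (τ' k p) (hk k hkk').1 (hk k hkk').2.2
        have harg : (Θ p).toReal - ∑ k ∈ Finset.Icc 1 n, ψ k p.1 (E k p.2)
            = τ' (n+1) p := by
          rw [hpeq, Finset.sum_congr rfl hψeq, hsum]; ring
        show E (n+1) p.2 = g p
        rw [hg]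
        dsimp only
        rw [harg]
        exact ((hk (n+1) (by rw [Finset.mem_Icc]; omega)).2.1).symm
      · exact Or.inl (Or.inr hp2)
    · exact Or.inl (Or.inl hp1)
  have hB0 : (P.prod Phat) B = 0 := by
    rw [Measure.prod_apply hBmeas]
    have hsec : ∀ ω : Ω, Phat (Prod.mk ω ⁻¹' B) = 0 := by
      intro ω
      have hXm' : Measurable[(mSup E n)] fun ω' => g (ω, ω') := by
        have hΘs : Measurable[(mSup E n)] fun ω' => Θ (ω, ω') :=
          hΘ2.comp (@measurable_prodMk_left Ω Ω' mΩ (mSup E n) ω)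
        have hsum : Measurable[(mSup E n)] fun ω' => ∑ k ∈ Finset.Icc 1 n, ψ k ω (E k ω') := by
          simp only [hψ]
          apply Finset.measurable_sum
          intro k hkk
          have hEk : Measurable[(mSup E n)] (E k) := by
            apply Measurable.of_comap_le
            have := le_iSup₂ (f := fun (j : ℕ) (_ : j ∈ Finset.Icc 1 n) =>
              (MeasurableSpace.comap (E j) inferInstance : MeasurableSpace Ω')) k hkk
            simpa [mSup] using this
          exact (psiInv_measurable1 (Lam k ω)).comp hEk
        have hLamω : Measurable (fun t => Lam (n+1) ω t) :=
          (hLamJ (n+1)).comp (measurable_const.prodMk measurable_id)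
        simp only [hg]
        exact hLamω.comp ((ENNReal.measurable_toReal.comp hΘs).sub hsum)
      have hpre : Prod.mk ω ⁻¹' B = {ω' | (fun ω' => g (ω, ω')) ω' = E (n+1) ω'} := by
        ext ω'; simp only [hB, Set.mem_preimage, Set.mem_setOf_eq]; exact eq_comm
      rw [hpre]
      refine avoid_of_indepFun Phat _ (E (n+1)) (hXm'.mono hm'le le_rfl) (hE_meas (n+1))
        ?_ (exp_atomless Phat (E (n+1)) (hE_meas (n+1)) (hE_exp (n+1) (by omega) hnN)).1
      have hiI := hE_indep.iIndep
      have hmain := indep_biSup_compl (fun j : Fin N => (hE_meas _).comap_le) hiI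
        {j : Fin N | (j:ℕ) < n}
      have hleft : (mSup E n) ≤ ⨆ j ∈ {j : Fin N | (j:ℕ) < n},
          MeasurableSpace.comap (E ((j:ℕ)+1)) inferInstance := by
        simp only [mSup]
        refine iSup_le fun i => iSup_le fun hi => ?_
        rw [Finset.mem_Icc] at hi
        have hiN : i - 1 < N := by omega
        have h1 : i = ((⟨i-1, hiN⟩ : Fin N) : ℕ) + 1 := by exact (by omega : i = i - 1 + 1)
        calc MeasurableSpace.comap (E i) inferInstance
            = MeasurableSpace.comap (E (((⟨i-1,hiN⟩ : Fin N) : ℕ)+1)) inferInstance := by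
              rw [← h1]
        _ ≤ _ := le_iSup₂ (f := fun (j : Fin N) (_ : j ∈ {j : Fin N | (j:ℕ) < n}) =>
              (MeasurableSpace.comap (E ((j:ℕ)+1)) inferInstance : MeasurableSpace Ω'))
              (⟨i-1,hiN⟩ : Fin N) (show i - 1 < n by omega)
      have hright : (MeasurableSpace.comap (E (n+1)) inferInstance : MeasurableSpace Ω')
          ≤ ⨆ j ∈ ({j : Fin N | (j:ℕ) < n}ᶜ : Set (Fin N)),
            MeasurableSpace.comap (E ((j:ℕ)+1)) inferInstance := by
        have h1 : ((⟨n, hn⟩ : Fin N) : ℕ) + 1 = n + 1 := rfl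
        calc (MeasurableSpace.comap (E (n+1)) inferInstance : MeasurableSpace Ω')
            = MeasurableSpace.comap (E (((⟨n,hn⟩ : Fin N) : ℕ)+1)) inferInstance := by rw [h1]
        _ ≤ _ := le_iSup₂ (f := fun (j : Fin N) (_ : j ∈ ({j : Fin N | (j:ℕ) < n}ᶜ : Set (Fin N))) =>
              (MeasurableSpace.comap (E ((j:ℕ)+1)) inferInstance : MeasurableSpace Ω'))
              (⟨n,hn⟩ : Fin N) (fun h => absurd h (lt_irrefl n))
      have hindep : Indep (mSup E n) (MeasurableSpace.comap (E (n+1)) inferInstance) Phat :=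
        indep_of_indep_of_le_right (indep_of_indep_of_le_left hmain hleft) hright
      rw [IndepFun_iff_Indep]
      exact indep_of_indep_of_le_left hindep (measurable_iff_comap_le.mp hXm')
    simp only [hsec]
    simp
  refine measure_mono_null hincl ?_
  exact measure_union_null (measure_union_null hnull1 hnull2) hB0
end

section
/- In the multiple-default Cox model: for every P̃-integrable 𝒢-measurable Y : Ω̃ → ℝ, every k ∈ {0, 1, …, N} and every t ≥ 0, the conditional probability E^{P̃}[1_{{τ_{k+1} > t}} | 𝒢_t^{(k)}] is P̃-a.s. strictly positive on {τ_k ≤ t < τ_{k+1}}, and P̃-almost surely E^{P̃}[1_{{τ_k ≤ t < τ_{k+1}}} Y | 𝒢_t^{(N)}] = 1_{{τ_k ≤ t < τ_{k+1}}} · E^{P̃}[1_{{τ̃_{k+1} > t − τ_k}} Y | 𝒢_t^{(k)}] / E^{P̃}[1_{{τ_{k+1} > t}} | 𝒢_t^{(k)}], where for k = N the conventions τ_{N+1} = +∞ and τ̃_{N+1} = +∞ make the indicator 1_{{τ̃_{N+1} > t − τ_N}} and the denominator identically 1. -/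
open MeasureTheory ProbabilityTheory Set

section Aux
open Filter
open scoped ENNReal Topology
namespace Stmt10Aux

variable {Ω Ω' : Type*} [MeasurableSpace Ω] [MeasurableSpace Ω']






lemma measurable_L (lam : ℝ → Ω → ℝ) (hmeas : Measurable fun q : ℝ × Ω => lam q.1 q.2) :
    Measurable fun q : ℝ × Ω => ∫⁻ s in Set.Ioc (0:ℝ) q.1, ENNReal.ofReal (lam s q.2) := by
  have h1 : ∀ q : ℝ × Ω, (∫⁻ s in Set.Ioc (0:ℝ) q.1, ENNReal.ofReal (lam s q.2))
      = ∫⁻ s, Set.indicator (Set.Ioc (0:ℝ) q.1) (fun s => ENNReal.ofReal (lam s q.2)) s := by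
    intro q
    rw [lintegral_indicator measurableSet_Ioc]
  simp_rw [h1]
  have h2 : Measurable fun x : (ℝ × Ω) × ℝ =>
      Set.indicator (Set.Ioc (0:ℝ) x.1.1) (fun s => ENNReal.ofReal (lam s x.1.2)) x.2 := by
    have h3 : ∀ x : (ℝ × Ω) × ℝ, Set.indicator (Set.Ioc (0:ℝ) x.1.1)
        (fun s => ENNReal.ofReal (lam s x.1.2)) x.2
        = if 0 < x.2 ∧ x.2 ≤ x.1.1 then ENNReal.ofReal (lam x.2 x.1.2) else 0 := by
      intro x; rw [Set.indicator_apply]; simp [Set.mem_Ioc]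
    simp_rw [h3]
    refine Measurable.ite ?_ ?_ measurable_const
    · exact (measurableSet_lt measurable_const measurable_snd).inter
        (measurableSet_le measurable_snd (measurable_fst.comp measurable_fst))
    · exact ENNReal.measurable_ofReal.comp
        (hmeas.comp (measurable_snd.prodMk (measurable_snd.comp measurable_fst)))
  exact h2.lintegral_prod_right'






lemma measurable_hit (lam : ℝ → Ω → ℝ) (hmeas : Measurable fun q : ℝ × Ω => lam q.1 q.2)
    (hnn : ∀ s ω, 0 ≤ lam s ω) (e : Ω' → ℝ) (he : Measurable e) :
    Measurable fun p : Ω × Ω' =>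
      sInf {t : ℝ | 0 < t ∧ e p.2 ≤ ∫ s in Set.Ioc (0:ℝ) t, lam s p.1} := by
  classical
  set L : ℝ × Ω → ℝ≥0∞ := fun q => ∫⁻ s in Set.Ioc (0:ℝ) q.1, ENNReal.ofReal (lam s q.2)
    with hL_def
  have hL : Measurable L := measurable_L lam hmeas
  have hG : ∀ (t : ℝ) (ω : Ω), (∫ s in Set.Ioc (0:ℝ) t, lam s ω) = (L (t, ω)).toReal := by
    intro t ω
    exact integral_eq_lintegral_of_nonneg_ae (Filter.Eventually.of_forall fun s => hnn s ω)
      ((hmeas.comp (measurable_id.prodMk measurable_const)).aestronglyMeasurable)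
  have hLmono : ∀ (ω : Ω) {t t' : ℝ}, t ≤ t' → L (t, ω) ≤ L (t', ω) := by
    intro ω t t' h
    exact lintegral_mono_set (Set.Ioc_subset_Ioc_right h)
  set b : Ω × Ω' → ℝ≥0∞ := fun p => ⨅ q : ℚ,
      if 0 < (q:ℝ) ∧ ENNReal.ofReal (e p.2) ≤ L ((q:ℝ), p.1) then ENNReal.ofReal (q:ℝ) else ⊤
    with hb_def
  have hb : Measurable b := by
    apply Measurable.iInf
    intro q
    by_cases hq : 0 < (q:ℝ)
    · have hset : MeasurableSet {p : Ω × Ω' | 0 < (q:ℝ) ∧ ENNReal.ofReal (e p.2) ≤ L ((q:ℝ), p.1)} := by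
        have : {p : Ω × Ω' | 0 < (q:ℝ) ∧ ENNReal.ofReal (e p.2) ≤ L ((q:ℝ), p.1)}
            = {p : Ω × Ω' | ENNReal.ofReal (e p.2) ≤ L ((q:ℝ), p.1)} := by
          ext p; simp [hq]
        rw [this]
        exact measurableSet_le (ENNReal.measurable_ofReal.comp (he.comp measurable_snd))
          (hL.comp (measurable_const.prodMk measurable_fst))
      exact Measurable.ite hset measurable_const measurable_const
    · simp only [hq, false_and, if_false]
      exact measurable_const
  set a : Ω × Ω' → ℝ := fun p => (b p).toReal with ha_def
  have ha : Measurable a := hb.ennreal_toReal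
  set cond : Ω × Ω' → Prop := fun p =>
      (∃ q : ℚ, 0 < (q:ℝ) ∧ ENNReal.ofReal (e p.2) ≤ L ((q:ℝ), p.1) ∧ L ((q:ℝ), p.1) < ⊤) ∨
      (0 < a p ∧ ENNReal.ofReal (e p.2) ≤ L (a p, p.1) ∧ L (a p, p.1) < ⊤) with hcond_def
  have hcond : MeasurableSet {p | cond p} := by
    have hsplit : {p : Ω × Ω' | cond p} =
        {p : Ω × Ω' | ∃ q : ℚ, 0 < (q:ℝ) ∧ ENNReal.ofReal (e p.2) ≤ L ((q:ℝ), p.1)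
          ∧ L ((q:ℝ), p.1) < ⊤} ∪
        {p : Ω × Ω' | 0 < a p ∧ ENNReal.ofReal (e p.2) ≤ L (a p, p.1) ∧ L (a p, p.1) < ⊤} := rfl
    rw [hsplit]
    apply MeasurableSet.union
    · have : {p : Ω × Ω' | ∃ q : ℚ, 0 < (q:ℝ) ∧ ENNReal.ofReal (e p.2) ≤ L ((q:ℝ), p.1)
          ∧ L ((q:ℝ), p.1) < ⊤}
          = ⋃ q : ℚ, {p : Ω × Ω' | 0 < (q:ℝ) ∧ ENNReal.ofReal (e p.2) ≤ L ((q:ℝ), p.1)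
          ∧ L ((q:ℝ), p.1) < ⊤} := by
        ext p; simp
      rw [this]
      apply MeasurableSet.iUnion
      intro q
      by_cases hq : 0 < (q:ℝ)
      · have : {p : Ω × Ω' | 0 < (q:ℝ) ∧ ENNReal.ofReal (e p.2) ≤ L ((q:ℝ), p.1)
            ∧ L ((q:ℝ), p.1) < ⊤}
            = {p : Ω × Ω' | ENNReal.ofReal (e p.2) ≤ L ((q:ℝ), p.1)} ∩
              {p : Ω × Ω' | L ((q:ℝ), p.1) < ⊤} := by
          ext p; simp [hq, Set.mem_setOf_eq, Set.mem_inter_iff, and_assoc]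
        rw [this]
        exact (measurableSet_le (ENNReal.measurable_ofReal.comp (he.comp measurable_snd))
          (hL.comp (measurable_const.prodMk measurable_fst))).inter
          (measurableSet_lt (hL.comp (measurable_const.prodMk measurable_fst)) measurable_const)
      · have : {p : Ω × Ω' | 0 < (q:ℝ) ∧ ENNReal.ofReal (e p.2) ≤ L ((q:ℝ), p.1)
            ∧ L ((q:ℝ), p.1) < ⊤} = ∅ := by
          ext p; simp [hq]
        rw [this]; exact MeasurableSet.empty
    · have : {p : Ω × Ω' | 0 < a p ∧ ENNReal.ofReal (e p.2) ≤ L (a p, p.1) ∧ L (a p, p.1) < ⊤}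
          = {p : Ω × Ω' | 0 < a p} ∩ ({p : Ω × Ω' | ENNReal.ofReal (e p.2) ≤ L (a p, p.1)} ∩
            {p : Ω × Ω' | L (a p, p.1) < ⊤}) := by
        ext p; simp [Set.mem_setOf_eq, Set.mem_inter_iff, and_assoc]
      rw [this]
      exact (measurableSet_lt measurable_const ha).inter
        ((measurableSet_le (ENNReal.measurable_ofReal.comp (he.comp measurable_snd))
          (hL.comp (ha.prodMk measurable_fst))).inter
          (measurableSet_lt (hL.comp (ha.prodMk measurable_fst)) measurable_const))
  have key : ∀ p : Ω × Ω',
      sInf {t : ℝ | 0 < t ∧ e p.2 ≤ ∫ s in Set.Ioc (0:ℝ) t, lam s p.1}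
        = if cond p then a p else 0 := by
    intro p
    have hSet : {t : ℝ | 0 < t ∧ e p.2 ≤ ∫ s in Set.Ioc (0:ℝ) t, lam s p.1}
        = {t : ℝ | 0 < t ∧ e p.2 ≤ (L (t, p.1)).toReal} := by
      ext t; rw [Set.mem_setOf_eq, Set.mem_setOf_eq, hG]
    rw [hSet]
    set S : Set ℝ := {t : ℝ | 0 < t ∧ e p.2 ≤ (L (t, p.1)).toReal} with hS_def
    set S' : Set ℝ := {t : ℝ | 0 < t ∧ ENNReal.ofReal (e p.2) ≤ L (t, p.1)} with hS'_def
    have hS'up : ∀ {t r : ℝ}, t ∈ S' → t ≤ r → r ∈ S' := by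
      intro t r ht htr
      exact ⟨lt_of_lt_of_le ht.1 htr, ht.2.trans (hLmono p.1 htr)⟩
    by_cases hE0 : e p.2 ≤ 0
    · -- S = Ioi 0, sInf = 0, and a p = 0
      have hSIoi : S = Set.Ioi (0:ℝ) := by
        ext t
        simp only [hS_def, Set.mem_setOf_eq, Set.mem_Ioi, and_iff_left_iff_imp]
        intro _
        exact hE0.trans ENNReal.toReal_nonneg
      have ha0 : a p = 0 := by
        have hble : ∀ q : ℚ, 0 < (q:ℝ) → b p ≤ ENNReal.ofReal (q:ℝ) := by
          intro q hq
          refine (iInf_le _ q).trans ?_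
          rw [if_pos ⟨hq, by rw [ENNReal.ofReal_eq_zero.mpr hE0]; exact zero_le⟩]
        have hfin : b p ≠ ⊤ := by
          refine ne_top_of_le_ne_top ?_ (hble 1 (by norm_num))
          exact ENNReal.ofReal_ne_top
        have hle : ∀ q : ℚ, 0 < (q:ℝ) → a p ≤ (q:ℝ) := fun q hq =>
          ENNReal.toReal_le_of_le_ofReal hq.le (hble q hq)
        by_contra hne
        have hpos : 0 < a p := lt_of_le_of_ne ENNReal.toReal_nonneg (Ne.symm hne)
        obtain ⟨q, hq0, hqa⟩ := exists_rat_btwn hpos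
        exact absurd (hle q (by exact_mod_cast hq0)) (not_le.mpr hqa)
      rw [hSIoi, csInf_Ioi]
      by_cases h : cond p
      · rw [if_pos h, ha0]
      · rw [if_neg h]
    · push_neg at hE0
      have hSmem : ∀ t : ℝ, t ∈ S ↔ (0 < t ∧ ENNReal.ofReal (e p.2) ≤ L (t, p.1)
          ∧ L (t, p.1) ≠ ⊤) := by
        intro t
        simp only [hS_def, Set.mem_setOf_eq, and_congr_right_iff]
        intro _
        constructor
        · intro h
          have hfin : L (t, p.1) ≠ ⊤ := by
            intro htop
            rw [htop] at h
            simp only [ENNReal.toReal_top] at h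
            exact absurd (lt_of_lt_of_le hE0 h) (lt_irrefl 0)
          exact ⟨(ENNReal.ofReal_le_iff_le_toReal hfin).mpr h, hfin⟩
        · intro ⟨h1, h2⟩
          exact (ENNReal.ofReal_le_iff_le_toReal h2).mp h1
      by_cases hSne : S.Nonempty
      · obtain ⟨t₀, ht₀⟩ := hSne
        have ht₀' : t₀ ∈ S' := by
          have := (hSmem t₀).mp ht₀
          exact ⟨this.1, this.2.1⟩
        have hS'ne : S'.Nonempty := ⟨t₀, ht₀'⟩
        have hS'bdd : BddBelow S' := ⟨0, fun x hx => hx.1.le⟩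
        have hSbdd : BddBelow S := ⟨0, fun x hx => hx.1.le⟩
        set c : ℝ := sInf S' with hc_def
        have hc0 : 0 ≤ c := le_csInf hS'ne fun x hx => hx.1.le
        have hmemS' : ∀ r : ℝ, c < r → r ∈ S' := by
          intro r hr
          obtain ⟨s, hsS', hsr⟩ := exists_lt_of_csInf_lt hS'ne hr
          exact hS'up hsS' hsr.le
        have hbub : ∀ q : ℚ, (q:ℝ) ∈ S' → b p ≤ ENNReal.ofReal (q:ℝ) := by
          intro q hq
          refine (iInf_le _ q).trans ?_
          rw [if_pos ⟨hq.1, hq.2⟩]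
        have hblb : ENNReal.ofReal c ≤ b p := by
          refine le_iInf fun q => ?_
          by_cases hq : 0 < (q:ℝ) ∧ ENNReal.ofReal (e p.2) ≤ L ((q:ℝ), p.1)
          · rw [if_pos hq]
            exact ENNReal.ofReal_le_ofReal (csInf_le hS'bdd ⟨hq.1, hq.2⟩)
          · rw [if_neg hq]; exact le_top
        have hbfin : b p ≠ ⊤ := by
          obtain ⟨q, hq1, hq2⟩ := exists_rat_btwn (lt_add_one (max c t₀))
          have hqS' : (q:ℝ) ∈ S' := hmemS' _ (lt_of_le_of_lt (le_max_left c t₀) hq1)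
          exact ne_top_of_le_ne_top ENNReal.ofReal_ne_top (hbub q hqS')
        have hac : a p = c := by
          have h1 : c ≤ a p := by
            have := ENNReal.toReal_mono hbfin hblb
            rwa [ENNReal.toReal_ofReal hc0] at this
          have h2 : a p ≤ c := by
            by_contra hlt
            push_neg at hlt
            obtain ⟨q, hq1, hq2⟩ := exists_rat_btwn hlt
            have hqS' : (q:ℝ) ∈ S' := hmemS' _ hq1
            have := ENNReal.toReal_le_of_le_ofReal (le_trans hc0 hq1.le) (hbub q hqS')
            exact absurd this (not_le.mpr hq2)
          linarith
        have hct₀ : c ≤ t₀ := csInf_le hS'bdd ht₀'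
        have hfin_le : ∀ r : ℝ, r ≤ t₀ → L (r, p.1) ≠ ⊤ := by
          intro r hr
          exact ne_top_of_le_ne_top ((hSmem t₀).mp ht₀).2.2 (hLmono p.1 hr)
        have hSinf : sInf S = c := by
          refine le_antisymm ?_ (le_csInf ⟨t₀, ht₀⟩ fun x hx =>
            csInf_le hS'bdd ⟨((hSmem x).mp hx).1, ((hSmem x).mp hx).2.1⟩)
          rcases eq_or_lt_of_le hct₀ with heq | hlt
          · rw [heq]; exact csInf_le hSbdd ht₀
          · apply le_of_forall_pos_le_add
            intro ε hε
            obtain ⟨r, hr1, hr2⟩ := exists_between (lt_min hlt (lt_add_of_pos_right c hε))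
            have hrS' : r ∈ S' := hmemS' r hr1
            have hrS : r ∈ S := (hSmem r).mpr ⟨hrS'.1, hrS'.2,
              hfin_le r (le_of_lt (lt_of_lt_of_le hr2 (min_le_left _ _)))⟩
            exact le_trans (csInf_le hSbdd hrS) (le_of_lt (lt_of_lt_of_le hr2 (min_le_right _ _)))
        have hcondp : cond p := by
          rcases eq_or_lt_of_le hct₀ with heq | hlt
          · right
            have haceq : a p = t₀ := by rw [hac, heq]
            rw [haceq]
            exact ⟨ht₀'.1, ht₀'.2, lt_top_iff_ne_top.mpr ((hSmem t₀).mp ht₀).2.2⟩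
          · left
            obtain ⟨q, hq1, hq2⟩ := exists_rat_btwn hlt
            have hqS' : (q:ℝ) ∈ S' := hmemS' _ hq1
            exact ⟨q, hqS'.1, hqS'.2, lt_top_iff_ne_top.mpr (hfin_le _ hq2.le)⟩
        rw [if_pos hcondp, hSinf, hac]
      · -- S empty
        have hSempty : S = ∅ := Set.not_nonempty_iff_eq_empty.mp hSne
        have hncond : ¬ cond p := by
          rintro (⟨q, hq1, hq2, hq3⟩ | ⟨h1, h2, h3⟩)
          · have : (q:ℝ) ∈ S := (hSmem q).mpr ⟨hq1, hq2, lt_top_iff_ne_top.mp hq3⟩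
            rw [hSempty] at this; exact this
          · have : a p ∈ S := (hSmem _).mpr ⟨h1, h2, lt_top_iff_ne_top.mp h3⟩
            rw [hSempty] at this; exact this
        rw [if_neg hncond, hSempty, Real.sInf_empty]
  have : (fun p : Ω × Ω' => sInf {t : ℝ | 0 < t ∧ e p.2 ≤ ∫ s in Set.Ioc (0:ℝ) t, lam s p.1})
      = fun p => if cond p then a p else 0 := funext key
  rw [this]
  exact Measurable.ite hcond ha measurable_const




lemma condexp_indicator_pos {α : Type*} {m m0 : MeasurableSpace α} {μ : Measure α}
    [IsProbabilityMeasure μ] (hm : m ≤ m0) {C : Set α}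
    (hC : MeasurableSet[m0] C) :
    ∀ᵐ x ∂μ, x ∈ C → 0 < (μ[C.indicator (fun _ => (1:ℝ)) | m]) x := by
  set g := μ[C.indicator (fun _ => (1:ℝ)) | m] with hg_def
  have hint : Integrable (C.indicator (fun _ => (1:ℝ))) μ :=
    (integrable_const (1:ℝ)).indicator hC
  have hZm : MeasurableSet[m] {x | g x ≤ 0} := by
    have heq : {x | g x ≤ 0} = g ⁻¹' Iic 0 := rfl
    rw [heq]
    exact stronglyMeasurable_condExp.measurable measurableSet_Iic
  have hZ0 : MeasurableSet[m0] {x | g x ≤ 0} := hm _ hZm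
  have h1 : ∫ x in {x | g x ≤ 0}, g x ∂μ = ∫ x in {x | g x ≤ 0}, C.indicator (fun _ => (1:ℝ)) x ∂μ :=
    setIntegral_condExp hm hint hZm
  have h2 : ∫ x in {x | g x ≤ 0}, g x ∂μ ≤ 0 := by
    apply integral_nonpos_of_ae
    exact (ae_restrict_iff' hZ0).mpr (Filter.Eventually.of_forall fun x hx => hx)
  have h3 : ∫ x in {x | g x ≤ 0}, C.indicator (fun _ => (1:ℝ)) x ∂μ
      = (μ ({x | g x ≤ 0} ∩ C)).toReal := by
    rw [setIntegral_indicator hC, setIntegral_const, smul_eq_mul, mul_one, measureReal_def]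
  have h4 : μ ({x | g x ≤ 0} ∩ C) = 0 := by
    have := h1 ▸ h2
    rw [h3] at this
    have hnn : (0:ℝ) ≤ (μ ({x | g x ≤ 0} ∩ C)).toReal := ENNReal.toReal_nonneg
    have : (μ ({x | g x ≤ 0} ∩ C)).toReal = 0 := le_antisymm this hnn
    exact (ENNReal.toReal_eq_zero_iff _).mp this |>.resolve_right (measure_ne_top μ _)
  rw [Filter.eventually_iff, mem_ae_iff]
  have hset : {x | x ∈ C → 0 < g x}ᶜ ⊆ {x | g x ≤ 0} ∩ C := by
    intro x hx
    simp only [mem_compl_iff, mem_setOf_eq, not_forall, not_lt] at hx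
    exact ⟨hx.2, hx.1⟩
  exact measure_mono_null hset h4

lemma condexp_trace {α : Type*} {m m2 m0 : MeasurableSpace α} {μ : Measure α}
    [IsProbabilityMeasure μ] (hm : m ≤ m2) (hm2 : m2 ≤ m0)
    {A : Set α} (hA2 : MeasurableSet[m2] A)
    (htrace : ∀ D : Set α, MeasurableSet[m2] D → ∃ D', MeasurableSet[m] D' ∧ D ∩ A = D' ∩ A)
    {Y : α → ℝ} (hY : Integrable Y μ) :
    μ[A.indicator Y | m2] =ᵐ[μ]
      A.indicator (fun x =>
        (μ[A.indicator Y | m]) x / (μ[A.indicator (fun _ => (1:ℝ)) | m]) x) := by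
  classical
  have hmm : m ≤ m0 := hm.trans hm2
  have hA0 : MeasurableSet[m0] A := hm2 _ hA2
  have hAY : Integrable (A.indicator Y) μ := hY.indicator hA0
  have hA1 : Integrable (A.indicator (fun _ => (1:ℝ))) μ := (integrable_const 1).indicator hA0
  have hAabsY : Integrable (A.indicator (fun x => |Y x|)) μ := hY.abs.indicator hA0
  set g := μ[A.indicator (fun _ => (1:ℝ)) | m] with hg_def
  set h := μ[A.indicator Y | m] with hh_def
  set H := μ[A.indicator (fun x => |Y x|) | m] with hH_def
  have hg_sm : StronglyMeasurable[m] g := stronglyMeasurable_condExp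
  have hh_sm : StronglyMeasurable[m] h := stronglyMeasurable_condExp
  have hH_sm : StronglyMeasurable[m] H := stronglyMeasurable_condExp
  have hg_nn : 0 ≤ᵐ[μ] g := condExp_nonneg (Filter.Eventually.of_forall fun x =>
    indicator_nonneg (fun _ _ => zero_le_one) x)
  have hH_nn : 0 ≤ᵐ[μ] H := condExp_nonneg (Filter.Eventually.of_forall fun x =>
    indicator_nonneg (fun y _ => abs_nonneg (Y y)) x)
  -- |h| ≤ H a.e.
  have habs : ∀ᵐ x ∂μ, |h x| ≤ H x := by
    have h1 : h ≤ᵐ[μ] H := condExp_mono hAY hAabsY (Filter.Eventually.of_forall fun x => by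
      by_cases hx : x ∈ A <;> simp [indicator_apply, hx, le_abs_self])
    have h2 : (fun x => -h x) ≤ᵐ[μ] H := by
      have : μ[fun x => -(A.indicator Y x) | m] =ᵐ[μ] fun x => -h x := condExp_neg _ _
      refine this.symm.trans_le (condExp_mono hAY.neg hAabsY
        (Filter.Eventually.of_forall fun x => by
          by_cases hx : x ∈ A <;> simp [indicator_apply, hx, neg_abs_le, neg_le_abs]))
    filter_upwards [h1, h2] with x h1x h2x
    exact abs_le.mpr ⟨by linarith, h1x⟩
  -- the bad set Z
  set Z := {x | g x ≤ 0} with hZ_def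
  have hZm : MeasurableSet[m] Z := by
    have heq : Z = g ⁻¹' Iic 0 := rfl
    rw [heq]
    exact hg_sm.measurable measurableSet_Iic
  have hZ0 : MeasurableSet[m0] Z := hmm _ hZm
  have hZA : μ (Z ∩ A) = 0 := by
    have h1 : ∫ x in Z, g x ∂μ = ∫ x in Z, A.indicator (fun _ => (1:ℝ)) x ∂μ :=
      setIntegral_condExp hmm hA1 hZm
    have h2 : ∫ x in Z, g x ∂μ ≤ 0 := integral_nonpos_of_ae
      ((ae_restrict_iff' hZ0).mpr (Filter.Eventually.of_forall fun x hx => hx))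
    have h3 : ∫ x in Z, A.indicator (fun _ => (1:ℝ)) x ∂μ = (μ (Z ∩ A)).toReal := by
      rw [setIntegral_indicator hA0, setIntegral_const, smul_eq_mul, mul_one, measureReal_def]
    have h4 : (μ (Z ∩ A)).toReal = 0 := le_antisymm (by rw [← h3, ← h1]; exact h2)
      ENNReal.toReal_nonneg
    exact (ENNReal.toReal_eq_zero_iff _).mp h4 |>.resolve_right (measure_ne_top μ _)
  -- H vanishes a.e. on Z
  have hHZ : ∀ᵐ x ∂μ, x ∈ Z → H x = 0 := by
    have h1 : ∫ x in Z, H x ∂μ = ∫ x in Z, A.indicator (fun x => |Y x|) x ∂μ :=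
      setIntegral_condExp hmm hAabsY hZm
    have h2 : ∫ x in Z, A.indicator (fun x => |Y x|) x ∂μ = 0 := by
      rw [setIntegral_indicator hA0]
      have : μ.restrict (Z ∩ A) = 0 := by
        rw [Measure.restrict_eq_zero]; exact hZA
      rw [this, integral_zero_measure]
    have hH0 : H =ᵐ[μ.restrict Z] 0 := by
      have hHnnZ : 0 ≤ᵐ[μ.restrict Z] H := ae_restrict_of_ae hH_nn
      have hHint : Integrable H (μ.restrict Z) := integrable_condExp.restrict
      rw [← integral_eq_zero_iff_of_nonneg_ae hHnnZ hHint, h1, h2]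
    have := (ae_restrict_iff' hZ0).mp hH0
    filter_upwards [this] with x hx hxZ
    exact hx hxZ
  have hhZ : ∀ᵐ x ∂μ, x ∈ Z → h x = 0 := by
    filter_upwards [habs, hHZ] with x h1 h2 hxZ
    have := h1.trans (le_of_eq (h2 hxZ))
    exact abs_eq_zero.mp (le_antisymm this (abs_nonneg _))
  -- the dominating function c
  set c : α → ℝ := fun x => if 0 < g x then |H x| / g x else 0 with hc_def
  have hcm : Measurable[m] c := by
    letI : MeasurableSpace α := m
    exact Measurable.ite (measurableSet_lt measurable_const hg_sm.measurable)
      (hH_sm.measurable.abs.div hg_sm.measurable) measurable_const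
  have hc_sm : StronglyMeasurable[m] c := hcm.stronglyMeasurable
  have hc_nn : ∀ x, 0 ≤ c x := by
    intro x
    by_cases h0 : 0 < g x
    · simp only [hc_def, if_pos h0]
      exact div_nonneg (abs_nonneg _) h0.le
    · simp only [hc_def, if_neg h0, le_refl]
  set i1 : α → ℝ := A.indicator (fun _ => (1:ℝ)) with hi1_def
  have hi1_nn : ∀ x, 0 ≤ i1 x := fun x => indicator_nonneg (fun _ _ => zero_le_one) x
  have hi1_le : ∀ x, i1 x ≤ 1 := fun x => by
    by_cases hx : x ∈ A <;> simp [hi1_def, indicator_apply, hx]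
  have hi1_sm : StronglyMeasurable[m0] i1 := (stronglyMeasurable_const.indicator hA0)
  set M : ℝ := ∫ x, A.indicator (fun y => |Y y|) x ∂μ with hM_def
  -- truncations
  have hcn_sm : ∀ n : ℕ, StronglyMeasurable[m] (fun x => min (c x) (n:ℝ)) := fun n =>
    (hcm.min measurable_const).stronglyMeasurable
  have hcn_bdd : ∀ (n : ℕ) (x : α), ‖min (c x) (n:ℝ)‖ ≤ (n:ℝ) := by
    intro n x
    rw [Real.norm_of_nonneg (le_min (hc_nn x) (Nat.cast_nonneg n))]
    exact min_le_right _ _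
  have hcn_int : ∀ n : ℕ, Integrable (fun x => min (c x) (n:ℝ) * i1 x) μ := fun n =>
    hA1.bdd_mul ((hcn_sm n).mono hmm).aestronglyMeasurable (c := n) (Filter.Eventually.of_forall (hcn_bdd n))
  have hcng_le : ∀ (n : ℕ) (x : α), min (c x) (n:ℝ) * g x ≤ |H x| := by
    intro n x
    by_cases h0 : 0 < g x
    · have h1 : min (c x) (n:ℝ) * g x ≤ c x * g x :=
        mul_le_mul_of_nonneg_right (min_le_left _ _) h0.le
      refine h1.trans ?_
      rw [hc_def]
      simp only [if_pos h0]
      rw [div_mul_cancel₀ _ (ne_of_gt h0)]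
    · push_neg at h0
      by_cases hg0 : g x = 0
      · simp [hg0, abs_nonneg]
      · have hneg : g x < 0 := lt_of_le_of_ne h0 hg0
        have hcx : c x = 0 := by simp [hc_def, not_lt.mpr h0, not_lt_of_ge h0, if_neg (not_lt.mpr h0)]
        rw [hcx]
        simp [abs_nonneg]
  have step1 : ∀ n : ℕ, ∫ x, min (c x) (n:ℝ) * i1 x ∂μ ≤ M := by
    intro n
    have hpull := condExp_mul_of_stronglyMeasurable_left (μ := μ) (hcn_sm n)
      (by exact hcn_int n) hA1
    have e1 : ∫ x, min (c x) (n:ℝ) * i1 x ∂μ = ∫ x, (μ[(fun x => min (c x) (n:ℝ)) * i1|m]) x ∂μ :=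
      (integral_condExp hmm).symm
    have e2 : ∫ x, (μ[(fun x => min (c x) (n:ℝ)) * i1|m]) x ∂μ
        = ∫ x, min (c x) (n:ℝ) * g x ∂μ := integral_congr_ae hpull
    have hint_cng : Integrable (fun x => min (c x) (n:ℝ) * g x) μ :=
      integrable_condExp.bdd_mul ((hcn_sm n).mono hmm).aestronglyMeasurable (c := n) (Filter.Eventually.of_forall (hcn_bdd n))
    have e3 : ∫ x, min (c x) (n:ℝ) * g x ∂μ ≤ ∫ x, |H x| ∂μ :=
      integral_mono hint_cng integrable_condExp.abs (fun x => hcng_le n x)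
    have e4 : ∫ x, |H x| ∂μ = ∫ x, H x ∂μ := integral_congr_ae (by
      filter_upwards [hH_nn] with x hx
      exact abs_of_nonneg hx)
    have e5 : ∫ x, H x ∂μ = M := integral_condExp hmm
    calc ∫ x, min (c x) (n:ℝ) * i1 x ∂μ = ∫ x, (μ[(fun x => min (c x) (n:ℝ)) * i1|m]) x ∂μ := e1
      _ = ∫ x, min (c x) (n:ℝ) * g x ∂μ := e2
      _ ≤ ∫ x, |H x| ∂μ := e3
      _ = ∫ x, H x ∂μ := e4
      _ = M := e5
  have hM_nn : 0 ≤ M := integral_nonneg (fun x => indicator_nonneg (fun y _ => abs_nonneg _) x)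
  -- Integrable (c * i1)
  have hci1_int : Integrable (fun x => c x * i1 x) μ := by
    have hsup : ∀ x, ENNReal.ofReal (c x * i1 x) = ⨆ n : ℕ, ENNReal.ofReal (min (c x) (n:ℝ) * i1 x) := by
      intro x
      refine le_antisymm ?_ (iSup_le fun n => ENNReal.ofReal_le_ofReal
        (mul_le_mul_of_nonneg_right (min_le_left _ _) (hi1_nn x)))
      have hn : min (c x) ((Nat.ceil (c x) : ℕ) : ℝ) = c x := min_eq_left (Nat.le_ceil _)
      refine le_trans (le_of_eq ?_) (le_iSup _ (Nat.ceil (c x)))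
      rw [hn]
    have hmeas : ∀ n : ℕ, Measurable fun x => ENNReal.ofReal (min (c x) (n:ℝ) * i1 x) := by
      intro n
      exact ENNReal.measurable_ofReal.comp
        ((((hcn_sm n).mono hmm).measurable).mul (hi1_sm.measurable))
    have hmono : Monotone fun (n : ℕ) (x : α) => ENNReal.ofReal (min (c x) (n:ℝ) * i1 x) := by
      intro n n' hnn' x
      exact ENNReal.ofReal_le_ofReal (mul_le_mul_of_nonneg_right
        (min_le_min le_rfl (Nat.cast_le.mpr hnn')) (hi1_nn x))
    have hlin : (∫⁻ x, ENNReal.ofReal (c x * i1 x) ∂μ) ≤ ENNReal.ofReal M := by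
      calc (∫⁻ x, ENNReal.ofReal (c x * i1 x) ∂μ)
          = ∫⁻ x, ⨆ n : ℕ, ENNReal.ofReal (min (c x) (n:ℝ) * i1 x) ∂μ := by
            congr 1; funext x; exact hsup x
        _ = ⨆ n : ℕ, ∫⁻ x, ENNReal.ofReal (min (c x) (n:ℝ) * i1 x) ∂μ :=
            lintegral_iSup hmeas hmono
        _ ≤ ENNReal.ofReal M := by
            refine iSup_le fun n => ?_
            rw [← ofReal_integral_eq_lintegral_ofReal (hcn_int n)
              (Filter.Eventually.of_forall fun x => mul_nonneg
                (le_min (hc_nn x) (Nat.cast_nonneg n)) (hi1_nn x))]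
            exact ENNReal.ofReal_le_ofReal (step1 n)
    refine ⟨((hc_sm.mono hmm).mul hi1_sm).aestronglyMeasurable, ?_⟩
    rw [hasFiniteIntegral_iff_norm]
    have : ∀ x, ENNReal.ofReal ‖c x * i1 x‖ = ENNReal.ofReal (c x * i1 x) := by
      intro x
      rw [Real.norm_of_nonneg (mul_nonneg (hc_nn x) (hi1_nn x))]
    calc (∫⁻ x, ENNReal.ofReal ‖c x * i1 x‖ ∂μ)
        = ∫⁻ x, ENNReal.ofReal (c x * i1 x) ∂μ := by congr 1; funext x; exact this x
      _ ≤ ENNReal.ofReal M := hlin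
      _ < ⊤ := ENNReal.ofReal_lt_top
  -- φ
  set φ : α → ℝ := A.indicator (fun x => h x / g x) with hφ_def
  have hφ_sm : StronglyMeasurable[m2] φ :=
    (((hh_sm.mono hm).measurable.div (hg_sm.mono hm).measurable).stronglyMeasurable).indicator hA2
  have hφ_bound : ∀ᵐ x ∂μ, ‖φ x‖ ≤ ‖c x * i1 x‖ := by
    filter_upwards [hg_nn, habs] with x hgx habsx
    by_cases hx : x ∈ A
    · rw [hφ_def, indicator_of_mem hx]
      have hi1x : i1 x = 1 := by simp [hi1_def, indicator_of_mem hx]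
      rw [hi1x, mul_one, Real.norm_of_nonneg (hc_nn x)]
      by_cases h0 : 0 < g x
      · have hcx : c x = |H x| / g x := by simp [hc_def, if_pos h0]
        rw [hcx, Real.norm_eq_abs, abs_div, abs_of_pos h0]
        exact (div_le_div_iff_of_pos_right h0).mpr (habsx.trans (le_abs_self _))
      · have hg0 : g x = 0 := le_antisymm (not_lt.mp h0) hgx
        rw [hg0, div_zero, norm_zero]
        exact hc_nn x
    · rw [hφ_def, indicator_of_notMem hx, norm_zero]
      exact norm_nonneg _
  have hφ_int : Integrable φ μ :=
    Integrable.mono hci1_int ((hφ_sm.mono hm2).aestronglyMeasurable) hφ_bound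
  -- set integral equality
  have hseteq : ∀ D : Set α, MeasurableSet[m2] D →
      ∫ x in D, φ x ∂μ = ∫ x in D, A.indicator Y x ∂μ := by
    intro D hD
    obtain ⟨D', hD', hDA⟩ := htrace D hD
    have hD0 : MeasurableSet[m0] D := hm2 _ hD
    have hD'0 : MeasurableSet[m0] D' := hmm _ hD'
    -- reduce to D'
    have hredφ : ∫ x in D, φ x ∂μ = ∫ x in D', φ x ∂μ := by
      rw [← integral_indicator hD0, ← integral_indicator hD'0]
      congr 1
      funext x
      rw [hφ_def]
      rw [indicator_indicator, indicator_indicator, hDA]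
    have hredY : ∫ x in D, A.indicator Y x ∂μ = ∫ x in D', A.indicator Y x ∂μ := by
      rw [← integral_indicator hD0, ← integral_indicator hD'0]
      congr 1
      funext x
      rw [indicator_indicator, indicator_indicator, hDA]
    rw [hredφ, hredY]
    -- now both over D' ∈ m
    set ξ : α → ℝ := fun x => D'.indicator (fun _ => (1:ℝ)) x * (if 0 < g x then h x / g x else 0)
      with hξ_def
    have hξm : Measurable[m] ξ := by
      letI : MeasurableSpace α := m
      exact (measurable_const.indicator hD').mul
        (Measurable.ite (measurableSet_lt measurable_const hg_sm.measurable)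
          (hh_sm.measurable.div hg_sm.measurable) measurable_const)
    have hξ_sm : StronglyMeasurable[m] ξ := hξm.stronglyMeasurable
    have claim1 : (fun x => D'.indicator φ x) =ᵐ[μ] fun x => ξ x * i1 x := by
      filter_upwards [hg_nn] with x hgx
      by_cases hxD : x ∈ D'
      · by_cases hxA : x ∈ A
        · rw [indicator_of_mem hxD, hφ_def, indicator_of_mem hxA, hξ_def]
          have hi1x : i1 x = 1 := by simp [hi1_def, indicator_of_mem hxA]
          simp only [indicator_of_mem hxD, hi1x, mul_one, one_mul]
          by_cases h0 : 0 < g x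
          · rw [if_pos h0]
          · have hg0 : g x = 0 := le_antisymm (not_lt.mp h0) hgx
            rw [if_neg h0, hg0, div_zero]
        · rw [indicator_of_mem hxD, hφ_def, indicator_of_notMem hxA]
          have hi1x : i1 x = 0 := by simp [hi1_def, indicator_of_notMem hxA]
          rw [hi1x, mul_zero]
      · rw [indicator_of_notMem hxD, hξ_def]
        simp only [indicator_of_notMem hxD, zero_mul]
    have claim2 : Integrable (fun x => ξ x * i1 x) μ := by
      refine Integrable.mono hci1_int
        (((hξ_sm.mono hmm).mul hi1_sm).aestronglyMeasurable) ?_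
      filter_upwards [hg_nn, habs] with x hgx habsx
      rw [hξ_def]
      simp only []
      rw [Real.norm_of_nonneg (mul_nonneg (hc_nn x) (hi1_nn x))]
      have hb1 : |D'.indicator (fun _ => (1:ℝ)) x| ≤ 1 := by
        by_cases hxD : x ∈ D' <;> simp [indicator_apply, hxD]
      calc ‖D'.indicator (fun _ => (1:ℝ)) x * (if 0 < g x then h x / g x else 0) * i1 x‖
          = |D'.indicator (fun _ => (1:ℝ)) x| * |(if 0 < g x then h x / g x else 0)| * |i1 x| := by
            rw [Real.norm_eq_abs, abs_mul, abs_mul]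
        _ ≤ 1 * |(if 0 < g x then h x / g x else 0)| * i1 x := by
            have h1 : |i1 x| = i1 x := abs_of_nonneg (hi1_nn x)
            rw [h1]
            exact mul_le_mul_of_nonneg_right (mul_le_mul_of_nonneg_right hb1 (abs_nonneg _))
              (hi1_nn x)
        _ = |(if 0 < g x then h x / g x else 0)| * i1 x := by rw [one_mul]
        _ ≤ c x * i1 x := by
            refine mul_le_mul_of_nonneg_right ?_ (hi1_nn x)
            by_cases h0 : 0 < g x
            · rw [if_pos h0]
              have hcx : c x = |H x| / g x := by simp [hc_def, if_pos h0]
              rw [hcx, abs_div, abs_of_pos h0]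
              exact (div_le_div_iff_of_pos_right h0).mpr (habsx.trans (le_abs_self _))
            · rw [if_neg h0, abs_zero]
              exact hc_nn x
    have claim3 : μ[ξ * i1|m] =ᵐ[μ] ξ * μ[i1|m] :=
      condExp_mul_of_stronglyMeasurable_left hξ_sm (by exact claim2) hA1
    have claim4 : (fun x => ξ x * g x) =ᵐ[μ] fun x => D'.indicator h x := by
      filter_upwards [hg_nn, hhZ] with x hgx hhx
      rw [hξ_def]
      simp only []
      by_cases h0 : 0 < g x
      · rw [if_pos h0, mul_assoc, div_mul_cancel₀ _ (ne_of_gt h0)]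
        by_cases hxD : x ∈ D' <;>
          simp [indicator_apply, hxD]
      · have hg0 : g x = 0 := le_antisymm (not_lt.mp h0) hgx
        have hhx0 : h x = 0 := hhx (by simpa [hZ_def] using hg0.le)
        rw [hg0, mul_zero]
        by_cases hxD : x ∈ D' <;> simp [indicator_apply, hxD, hhx0]
    calc ∫ x in D', φ x ∂μ
        = ∫ x, D'.indicator φ x ∂μ := (integral_indicator hD'0).symm
      _ = ∫ x, ξ x * i1 x ∂μ := integral_congr_ae claim1
      _ = ∫ x, (μ[ξ * i1|m]) x ∂μ := (integral_condExp hmm).symm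
      _ = ∫ x, ξ x * g x ∂μ := integral_congr_ae claim3
      _ = ∫ x, D'.indicator h x ∂μ := integral_congr_ae claim4
      _ = ∫ x in D', h x ∂μ := integral_indicator hD'0
      _ = ∫ x in D', A.indicator Y x ∂μ := setIntegral_condExp hmm hAY hD'
  exact (ae_eq_condExp_of_forall_setIntegral_eq hm2 hAY
    (fun s _ _ => hφ_int.integrableOn)
    (fun s hs _ => hseteq s hs)
    (hφ_sm.aestronglyMeasurable)).symm






lemma hit_pos_ae {Ω Ω' : Type*} [MeasurableSpace Ω] [MeasurableSpace Ω']
    (P : Measure Ω) (Phat : Measure Ω') [IsProbabilityMeasure P] [IsProbabilityMeasure Phat]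
    (lam : ℝ → Ω → ℝ) (hmeas : Measurable fun q : ℝ × Ω => lam q.1 q.2)
    (hnn : ∀ s ω, 0 ≤ lam s ω)
    (hlam_int : ∀ᵐ ω ∂P,
      (∀ t : ℝ, ∫⁻ s in Set.Ioc (0:ℝ) t, ENNReal.ofReal (lam s ω) < ⊤) ∧
      (∫⁻ s in Set.Ioi (0:ℝ), ENNReal.ofReal (lam s ω) = ⊤))
    (e : Ω' → ℝ) (he : Measurable e) (hepos : ∀ᵐ ω' ∂Phat, 0 < e ω') :
    ∀ᵐ p ∂(P.prod Phat),
      0 < sInf {u : ℝ | 0 < u ∧ e p.2 ≤ ∫ s in Set.Ioc (0:ℝ) u, lam s p.1} := by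
  have hmap1 : (P.prod Phat).map Prod.fst = P := by
    rw [Measure.map_fst_prod, measure_univ, one_smul]
  have hmap2 : (P.prod Phat).map Prod.snd = Phat := by
    rw [Measure.map_snd_prod, measure_univ, one_smul]
  have hfst : ∀ᵐ p : Ω × Ω' ∂(P.prod Phat),
      (∀ t : ℝ, ∫⁻ s in Set.Ioc (0:ℝ) t, ENNReal.ofReal (lam s p.1) < ⊤) ∧
      (∫⁻ s in Set.Ioi (0:ℝ), ENNReal.ofReal (lam s p.1) = ⊤) := by
    have h := hlam_int
    rw [← hmap1] at h
    exact ae_of_ae_map measurable_fst.aemeasurable h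
  have hsnd : ∀ᵐ p : Ω × Ω' ∂(P.prod Phat), 0 < e p.2 := by
    have h := hepos
    rw [← hmap2] at h
    exact ae_of_ae_map measurable_snd.aemeasurable h
  filter_upwards [hfst, hsnd] with p hp1 hp2
  obtain ⟨hfin, hinf⟩ := hp1
  set f : ℝ → ℝ≥0∞ := fun s => ENNReal.ofReal (lam s p.1) with hf_def
  have hfm : Measurable f :=
    ENNReal.measurable_ofReal.comp (hmeas.comp (measurable_id.prodMk measurable_const))
  set ν : Measure ℝ := volume.withDensity f with hν_def
  have hν_apply : ∀ s : Set ℝ, MeasurableSet s → ν s = ∫⁻ u in s, f u := fun s hs =>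
    withDensity_apply f hs
  have hG : ∀ u : ℝ, (∫ s in Set.Ioc (0:ℝ) u, lam s p.1)
      = (∫⁻ s in Set.Ioc (0:ℝ) u, f s).toReal := by
    intro u
    exact integral_eq_lintegral_of_nonneg_ae (Filter.Eventually.of_forall fun s => hnn s p.1)
      ((hmeas.comp (measurable_id.prodMk measurable_const)).aestronglyMeasurable)
  -- (i) small δ
  have hsmall : Tendsto (fun n : ℕ => ν (Set.Ioc (0:ℝ) (1 / (n + 1)))) atTop (𝓝 0) := by
    have hι : (⋂ n : ℕ, Set.Ioc (0:ℝ) (1 / (n + 1))) = ∅ := by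
      ext u
      simp only [Set.mem_iInter, Set.mem_Ioc, Set.mem_empty_iff_false, iff_false, not_forall]
      by_cases hu : 0 < u
      · obtain ⟨n, hn⟩ := exists_nat_one_div_lt hu
        exact ⟨n, fun h => absurd h.2 (not_le.mpr hn)⟩
      · exact ⟨0, fun h => hu h.1⟩
    have := tendsto_measure_iInter_atTop (μ := ν)
      (s := fun n : ℕ => Set.Ioc (0:ℝ) (1 / (n + 1)))
      (fun n => (measurableSet_Ioc).nullMeasurableSet)
      (fun n m hnm => Set.Ioc_subset_Ioc_right (by
        apply one_div_le_one_div_of_le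
        · positivity
        · have : (n:ℝ) ≤ m := Nat.cast_le.mpr hnm
          linarith))
      ⟨0, by
        rw [hν_apply _ measurableSet_Ioc]
        exact (hfin _).ne⟩
    rw [hι, measure_empty] at this
    exact this
  have hEpos : (0:ℝ≥0∞) < ENNReal.ofReal (e p.2) := ENNReal.ofReal_pos.mpr hp2
  obtain ⟨n₁, hn₁⟩ := (hsmall.eventually_lt_const hEpos).exists
  set δ : ℝ := 1 / (n₁ + 1) with hδ_def
  have hδpos : 0 < δ := by positivity
  have hδsmall : (∫⁻ s in Set.Ioc (0:ℝ) δ, f s) < ENNReal.ofReal (e p.2) := by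
    rw [← hν_apply _ measurableSet_Ioc]; exact hn₁
  -- (ii) big T
  have hbig : Tendsto (fun n : ℕ => ν (Set.Ioc (0:ℝ) n)) atTop (𝓝 (ν (Set.Ioi 0))) := by
    have hu : (⋃ n : ℕ, Set.Ioc (0:ℝ) n) = Set.Ioi 0 := by
      ext u
      simp only [Set.mem_iUnion, Set.mem_Ioc, Set.mem_Ioi]
      constructor
      · rintro ⟨n, hn⟩; exact hn.1
      · intro hu
        obtain ⟨n, hn⟩ := exists_nat_ge u
        exact ⟨n, hu, hn⟩
    have := tendsto_measure_iUnion_atTop (μ := ν)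
      (s := fun n : ℕ => Set.Ioc (0:ℝ) n)
      (fun n m hnm => Set.Ioc_subset_Ioc_right (Nat.cast_le.mpr hnm))
    rw [hu] at this
    exact this
  have hνIoi : ν (Set.Ioi (0:ℝ)) = ⊤ := by
    rw [hν_apply _ measurableSet_Ioi]; exact hinf
  obtain ⟨n₀, hn₀⟩ := (by
    rw [hνIoi] at hbig
    exact (hbig.eventually_const_lt (ENNReal.ofReal_lt_top : ENNReal.ofReal (e p.2) < ⊤)).exists :
      ∃ n : ℕ, ENNReal.ofReal (e p.2) < ν (Set.Ioc (0:ℝ) n))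
  have hΛn₀ : ENNReal.ofReal (e p.2) < ∫⁻ s in Set.Ioc (0:ℝ) (n₀:ℝ), f s := by
    rw [← hν_apply _ measurableSet_Ioc]; exact hn₀
  have hn₀fin : (∫⁻ s in Set.Ioc (0:ℝ) (n₀:ℝ), f s) ≠ ⊤ := (hfin _).ne
  have hn₀pos : 0 < (n₀:ℝ) := by
    by_contra hn
    push_neg at hn
    have : Set.Ioc (0:ℝ) (n₀:ℝ) = ∅ := Set.Ioc_eq_empty (by linarith)
    rw [this] at hΛn₀
    simp at hΛn₀
  -- membership of n₀ in S
  set S : Set ℝ := {u : ℝ | 0 < u ∧ e p.2 ≤ ∫ s in Set.Ioc (0:ℝ) u, lam s p.1} with hS_def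
  have ht₀S : (n₀:ℝ) ∈ S := by
    refine ⟨hn₀pos, ?_⟩
    rw [hG]
    exact (ENNReal.ofReal_le_iff_le_toReal hn₀fin).mp hΛn₀.le
  have hlb : ∀ x ∈ S, δ ≤ x := by
    intro x hx
    by_contra hxδ
    push_neg at hxδ
    have hmono : (∫⁻ s in Set.Ioc (0:ℝ) x, f s) ≤ ∫⁻ s in Set.Ioc (0:ℝ) δ, f s :=
      lintegral_mono_set (Set.Ioc_subset_Ioc_right hxδ.le)
    have hxfin : (∫⁻ s in Set.Ioc (0:ℝ) x, f s) ≠ ⊤ := (hfin _).ne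
    have : (∫ s in Set.Ioc (0:ℝ) x, lam s p.1) < e p.2 := by
      rw [hG]
      calc (∫⁻ s in Set.Ioc (0:ℝ) x, f s).toReal
          ≤ (∫⁻ s in Set.Ioc (0:ℝ) δ, f s).toReal :=
            ENNReal.toReal_mono (hfin _).ne hmono
        _ < (ENNReal.ofReal (e p.2)).toReal := by
            apply ENNReal.toReal_strict_mono ENNReal.ofReal_ne_top hδsmall
        _ = e p.2 := ENNReal.toReal_ofReal hp2.le
    exact absurd hx.2 (not_le.mpr this)
  exact lt_of_lt_of_le hδpos (le_csInf ⟨(n₀:ℝ), ht₀S⟩ hlb)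



end Stmt10Aux
end Aux

/-- Lemma 3.4 of the paper, filtration-reduction formula:
`E[1_{τ_k ≤ t < τ_{k+1}} Y | 𝒢_t^{(N)}]
  = 1_{τ_k ≤ t < τ_{k+1}} · E[1_{τ̃_{k+1} > t−τ_k} Y | 𝒢_t^{(k)}] / P̃(τ_{k+1} > t | 𝒢_t^{(k)})`,
with the denominator a.s. strictly positive on the event.  Here the conventions
`τ_{N+1} = τ̃_{N+1} = +∞` are encoded through `[0,∞]`-valued extensions `τe`, `τ'e` of
`τ`, `τ'`.  `Ω'` plays the role of `Ω̂`, `Phat` of `P̂`, `lam n` of `λ̃ⁿ`, `τ'` of `τ̃`;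
`𝓗ⁿ_t` is generated by the events `{τ_n ≤ s}`, `0 ≤ s ≤ t`, and
`𝒢_t^{(k)} = 𝓕_t ∨ 𝓗¹_t ∨ … ∨ 𝓗ᵏ_t`. -/
theorem stmt_10
    {Ω Ω' : Type*} [mΩ : MeasurableSpace Ω] [mΩ' : MeasurableSpace Ω']
    (P : Measure Ω) (Phat : Measure Ω')
    [IsProbabilityMeasure P] [IsProbabilityMeasure Phat]
    (F : Filtration ℝ mΩ) (hF : (⨆ t : ℝ, (F t : MeasurableSpace Ω)) = mΩ)
    (N : ℕ) (hN : 1 ≤ N)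
    (E : ℕ → Ω' → ℝ) (hE_meas : ∀ n, Measurable (E n))
    (hE_indep : iIndepFun
      (fun i : Fin N => E ((i : ℕ) + 1)) Phat)
    (hE_exp : ∀ n : ℕ, 1 ≤ n → n ≤ N → ∀ x : ℝ, 0 ≤ x →
      Phat {ω | x < E n ω} = ENNReal.ofReal (Real.exp (-x)))
    (lam : ℕ → ℝ → Ω → ℝ)
    (hlam_meas : ∀ n, Measurable fun q : ℝ × Ω => lam n q.1 q.2)
    (hlam_nonneg : ∀ n s ω, 0 ≤ lam n s ω)
    (hlam_adapted : ∀ n t, Measurable[F t] fun ω => lam n t ω)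
    (hlam_int : ∀ n : ℕ, 1 ≤ n → n ≤ N → ∀ᵐ ω ∂P,
      (∀ t : ℝ, ∫⁻ s in Set.Ioc (0:ℝ) t, ENNReal.ofReal (lam n s ω) < ⊤) ∧
      (∫⁻ s in Set.Ioi (0:ℝ), ENNReal.ofReal (lam n s ω) = ⊤))
    (τ' : ℕ → Ω × Ω' → ℝ)
    (hτ' : ∀ n p, τ' n p
      = sInf {t : ℝ | 0 < t ∧ E n p.2 ≤ ∫ s in Set.Ioc (0:ℝ) t, lam n s p.1})
    (τ : ℕ → Ω × Ω' → ℝ)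
    (hτ : ∀ n p, τ n p = ∑ k ∈ Finset.Icc 1 n, τ' k p)
    -- `[0,∞]`-valued extensions implementing the conventions `τ_{N+1} = τ̃_{N+1} = +∞`
    (τe : ℕ → Ω × Ω' → ENNReal)
    (hτe : ∀ n : ℕ, n ≤ N → ∀ p, τe n p = ENNReal.ofReal (τ n p))
    (hτe_top : ∀ p, τe (N + 1) p = ⊤)
    (τ'e : ℕ → Ω × Ω' → ENNReal)
    (hτ'e : ∀ n : ℕ, n ≤ N → ∀ p, τ'e n p = ENNReal.ofReal (τ' n p))
    (hτ'e_top : ∀ p, τ'e (N + 1) p = ⊤) :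
    ∀ Y : Ω × Ω' → ℝ, Integrable Y (P.prod Phat) →
      ∀ k : ℕ, k ≤ N → ∀ t : ℝ, 0 ≤ t →
        (∀ᵐ p ∂(P.prod Phat),
          (τe k p ≤ ENNReal.ofReal t ∧ ENNReal.ofReal t < τe (k + 1) p) →
            0 < ((P.prod Phat)[Set.indicator
                  {q : Ω × Ω' | ENNReal.ofReal t < τe (k + 1) q} (fun _ => (1 : ℝ)) |
                MeasurableSpace.comap Prod.fst (F t) ⊔
                  ⨆ i ∈ Finset.Icc 1 k,
                    MeasurableSpace.generateFrom
                      {A : Set (Ω × Ω') | ∃ s : ℝ, 0 ≤ s ∧ s ≤ t ∧ A = {q | τ i q ≤ s}}]) p) ∧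
        ((P.prod Phat)[Set.indicator
              {q : Ω × Ω' | τe k q ≤ ENNReal.ofReal t ∧ ENNReal.ofReal t < τe (k + 1) q} Y |
            MeasurableSpace.comap Prod.fst (F t) ⊔
              ⨆ i ∈ Finset.Icc 1 N,
                MeasurableSpace.generateFrom
                  {A : Set (Ω × Ω') | ∃ s : ℝ, 0 ≤ s ∧ s ≤ t ∧ A = {q | τ i q ≤ s}}]
          =ᵐ[P.prod Phat]
        Set.indicator
            {q : Ω × Ω' | τe k q ≤ ENNReal.ofReal t ∧ ENNReal.ofReal t < τe (k + 1) q}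
            (fun p =>
              ((P.prod Phat)[Set.indicator
                    {q : Ω × Ω' | ENNReal.ofReal (t - τ k q) < τ'e (k + 1) q} Y |
                  MeasurableSpace.comap Prod.fst (F t) ⊔
                    ⨆ i ∈ Finset.Icc 1 k,
                      MeasurableSpace.generateFrom
                        {A : Set (Ω × Ω') | ∃ s : ℝ, 0 ≤ s ∧ s ≤ t ∧ A = {q | τ i q ≤ s}}]) p
              / ((P.prod Phat)[Set.indicator
                    {q : Ω × Ω' | ENNReal.ofReal t < τe (k + 1) q} (fun _ => (1 : ℝ)) |
                  MeasurableSpace.comap Prod.fst (F t) ⊔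
                    ⨆ i ∈ Finset.Icc 1 k,
                      MeasurableSpace.generateFrom
                        {A : Set (Ω × Ω') | ∃ s : ℝ, 0 ≤ s ∧ s ≤ t ∧ A = {q | τ i q ≤ s}}]) p)) := by
  classical
  intro Y hY k hk t ht
  set μ : Measure (Ω × Ω') := P.prod Phat with hμ_def
  -- measurability of the hitting times
  have hτ'_meas : ∀ n, Measurable (τ' n) := by
    intro n
    have heq : τ' n = fun p : Ω × Ω' =>
        sInf {u : ℝ | 0 < u ∧ E n p.2 ≤ ∫ s in Set.Ioc (0:ℝ) u, lam n s p.1} :=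
      funext (hτ' n)
    rw [heq]
    exact Stmt10Aux.measurable_hit (fun s ω => lam n s ω) (hlam_meas n)
      (fun s ω => hlam_nonneg n s ω) (E n) (hE_meas n)
  have hτ_meas : ∀ n, Measurable (τ n) := by
    intro n
    have heq : τ n = fun p => ∑ j ∈ Finset.Icc 1 n, τ' j p := funext (hτ n)
    rw [heq]
    exact Finset.measurable_sum _ (fun j _ => hτ'_meas j)
  have hτ'_nonneg : ∀ n p, 0 ≤ τ' n p := by
    intro n p
    rw [hτ']
    exact Real.sInf_nonneg (fun x hx => hx.1.le)
  have hτ_mono : ∀ (i j : ℕ) (p : Ω × Ω'), i ≤ j → τ i p ≤ τ j p := by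
    intro i j p hij
    rw [hτ, hτ]
    exact Finset.sum_le_sum_of_subset_of_nonneg
      (Finset.Icc_subset_Icc le_rfl hij) (fun x _ _ => hτ'_nonneg x p)
  have hτ0 : ∀ p, τ 0 p = 0 := by
    intro p
    rw [hτ]
    simp
  have hτsum : ∀ q, τ (k+1) q = τ k q + τ' (k+1) q := by
    intro q
    rw [hτ, hτ]
    exact Finset.sum_Icc_succ_top (Nat.one_le_iff_ne_zero.mpr (Nat.succ_ne_zero k)) _
  -- the σ-algebras
  set mk : MeasurableSpace (Ω × Ω') := MeasurableSpace.comap Prod.fst (F t) ⊔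
      ⨆ i ∈ Finset.Icc 1 k,
        MeasurableSpace.generateFrom
          {A : Set (Ω × Ω') | ∃ s : ℝ, 0 ≤ s ∧ s ≤ t ∧ A = {q | τ i q ≤ s}} with hmk_def
  set mN : MeasurableSpace (Ω × Ω') := MeasurableSpace.comap Prod.fst (F t) ⊔
      ⨆ i ∈ Finset.Icc 1 N,
        MeasurableSpace.generateFrom
          {A : Set (Ω × Ω') | ∃ s : ℝ, 0 ≤ s ∧ s ≤ t ∧ A = {q | τ i q ≤ s}} with hmN_def
  letI m0P : MeasurableSpace (Ω × Ω') := Prod.instMeasurableSpace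
  have hcomap_mk : MeasurableSpace.comap (Prod.fst : Ω × Ω' → Ω) (F t) ≤ mk := by
    rw [hmk_def]; exact le_sup_left
  have hcomap_le : MeasurableSpace.comap (Prod.fst : Ω × Ω' → Ω) (F t)
      ≤ (Prod.instMeasurableSpace : MeasurableSpace (Ω × Ω')) := by
    refine le_trans (MeasurableSpace.comap_mono (F.le t)) ?_
    exact measurable_fst.comap_le
  have hgen_le : ∀ i : ℕ, MeasurableSpace.generateFrom
      {A : Set (Ω × Ω') | ∃ s : ℝ, 0 ≤ s ∧ s ≤ t ∧ A = {q | τ i q ≤ s}}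
      ≤ (Prod.instMeasurableSpace : MeasurableSpace (Ω × Ω')) := by
    intro i
    refine MeasurableSpace.generateFrom_le ?_
    rintro A ⟨s, hs0, hst, rfl⟩
    exact measurableSet_le (hτ_meas i) measurable_const
  have hmk_le : mk ≤ (Prod.instMeasurableSpace : MeasurableSpace (Ω × Ω')) := by
    rw [hmk_def]
    exact sup_le hcomap_le (iSup₂_le fun i _ => hgen_le i)
  have hmN_le : mN ≤ (Prod.instMeasurableSpace : MeasurableSpace (Ω × Ω')) := by
    rw [hmN_def]
    exact sup_le hcomap_le (iSup₂_le fun i _ => hgen_le i)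
  have hgen_mk : ∀ i : ℕ, 1 ≤ i → i ≤ k → MeasurableSpace.generateFrom
      {A : Set (Ω × Ω') | ∃ s : ℝ, 0 ≤ s ∧ s ≤ t ∧ A = {q | τ i q ≤ s}} ≤ mk := by
    intro i h1 h2
    rw [hmk_def]
    refine le_trans ?_ le_sup_right
    exact le_iSup₂ (f := fun (i : ℕ) (_ : i ∈ Finset.Icc 1 k) =>
      MeasurableSpace.generateFrom
        {A : Set (Ω × Ω') | ∃ s : ℝ, 0 ≤ s ∧ s ≤ t ∧ A = {q | τ i q ≤ s}}) i
      (Finset.mem_Icc.mpr ⟨h1, h2⟩)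
  have hgen_mN : ∀ i : ℕ, 1 ≤ i → i ≤ N → MeasurableSpace.generateFrom
      {A : Set (Ω × Ω') | ∃ s : ℝ, 0 ≤ s ∧ s ≤ t ∧ A = {q | τ i q ≤ s}} ≤ mN := by
    intro i h1 h2
    rw [hmN_def]
    refine le_trans ?_ le_sup_right
    exact le_iSup₂ (f := fun (i : ℕ) (_ : i ∈ Finset.Icc 1 N) =>
      MeasurableSpace.generateFrom
        {A : Set (Ω × Ω') | ∃ s : ℝ, 0 ≤ s ∧ s ≤ t ∧ A = {q | τ i q ≤ s}}) i
      (Finset.mem_Icc.mpr ⟨h1, h2⟩)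
  have hmkN : mk ≤ mN := by
    rw [hmk_def]
    refine sup_le ?_ (iSup₂_le fun i hi => ?_)
    · rw [hmN_def]; exact le_sup_left
    · obtain ⟨h1, h2⟩ := Finset.mem_Icc.mp hi
      exact hgen_mN i h1 (h2.trans hk)
  -- the sets
  set A' : Set (Ω × Ω') := {q | τ k q ≤ t} with hA'_def
  set C : Set (Ω × Ω') := {q : Ω × Ω' | ENNReal.ofReal t < τe (k + 1) q} with hC_def
  set Ae : Set (Ω × Ω') :=
    {q : Ω × Ω' | τe k q ≤ ENNReal.ofReal t ∧ ENNReal.ofReal t < τe (k + 1) q} with hAe_def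
  set B : Set (Ω × Ω') := {q : Ω × Ω' | ENNReal.ofReal (t - τ k q) < τ'e (k + 1) q} with hB_def
  have hAeAC : Ae = A' ∩ C := by
    ext q
    rw [hAe_def, hA'_def, hC_def]
    simp only [Set.mem_setOf_eq, Set.mem_inter_iff]
    rw [hτe k hk q, ENNReal.ofReal_le_ofReal_iff ht]
  have hCcase : (k = N ∧ C = Set.univ) ∨ (k < N ∧ C = {q | τ (k+1) q ≤ t}ᶜ) := by
    rcases eq_or_lt_of_le hk with hkN | hkN
    · left
      refine ⟨hkN, ?_⟩
      rw [hC_def]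
      ext q
      simp only [Set.mem_setOf_eq, Set.mem_univ, iff_true]
      rw [hkN, hτe_top q]
      exact ENNReal.ofReal_lt_top
    · right
      refine ⟨hkN, ?_⟩
      rw [hC_def]
      ext q
      simp only [Set.mem_setOf_eq, Set.mem_compl_iff, not_le]
      rw [hτe (k+1) hkN q]
      constructor
      · intro h
        exact (ENNReal.ofReal_lt_ofReal_iff'.mp h).1
      · intro h
        exact (ENNReal.ofReal_lt_ofReal_iff (lt_of_le_of_lt ht h)).mpr h
  have hC_amb : MeasurableSet C := by
    rcases hCcase with ⟨_, hCeq⟩ | ⟨_, hCeq⟩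
    · rw [hCeq]; exact MeasurableSet.univ
    · rw [hCeq]
      exact (measurableSet_le (hτ_meas (k+1)) measurable_const).compl
  have hC_mN : MeasurableSet[mN] C := by
    rcases hCcase with ⟨_, hCeq⟩ | ⟨hkN, hCeq⟩
    · rw [hCeq]; exact MeasurableSet.univ
    · rw [hCeq]
      refine MeasurableSet.compl ?_
      exact hgen_mN (k+1) (by omega) hkN
        _ (MeasurableSpace.measurableSet_generateFrom ⟨t, ht, le_rfl, rfl⟩)
  have hA'_mk : MeasurableSet[mk] A' := by
    rcases Nat.eq_zero_or_pos k with hk0 | hkpos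
    · have : A' = Set.univ := by
        ext q
        simp only [hA'_def, Set.mem_setOf_eq, Set.mem_univ, iff_true, hk0, hτ0 q]
        exact ht
      rw [this]; exact MeasurableSet.univ
    · exact hgen_mk k hkpos le_rfl _
        (MeasurableSpace.measurableSet_generateFrom ⟨t, ht, le_rfl, rfl⟩)
  have hA'_amb : MeasurableSet A' := measurableSet_le (hτ_meas k) measurable_const
  have hAe_amb : MeasurableSet Ae := by
    rw [hAeAC]; exact hA'_amb.inter hC_amb
  have hAe_mN : MeasurableSet[mN] Ae := by
    rw [hAeAC]; exact (hmkN _ hA'_mk).inter hC_mN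
  -- trace property
  have htrace : ∀ D : Set (Ω × Ω'), MeasurableSet[mN] D →
      ∃ D', MeasurableSet[mk] D' ∧ D ∩ Ae = D' ∩ Ae := by
    intro D hD
    let MM : MeasurableSpace (Ω × Ω') :=
      { MeasurableSet' := fun D => ∃ D', MeasurableSet[mk] D' ∧ D ∩ Ae = D' ∩ Ae
        measurableSet_empty := ⟨∅, @MeasurableSet.empty _ mk, rfl⟩
        measurableSet_compl := by
          rintro D ⟨D', hD', hE⟩
          refine ⟨D'ᶜ, hD'.compl, ?_⟩
          ext x
          simp only [Set.mem_inter_iff, Set.mem_compl_iff]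
          constructor
          · rintro ⟨hxD, hxA⟩
            refine ⟨fun hxD' => hxD ?_, hxA⟩
            have hx : x ∈ D' ∩ Ae := ⟨hxD', hxA⟩
            rw [← hE] at hx; exact hx.1
          · rintro ⟨hxD', hxA⟩
            refine ⟨fun hxD => hxD' ?_, hxA⟩
            have hx : x ∈ D ∩ Ae := ⟨hxD, hxA⟩
            rw [hE] at hx; exact hx.1
        measurableSet_iUnion := by
          intro f hf
          choose g hg hgE using hf
          exact ⟨⋃ i, g i, MeasurableSet.iUnion hg, by
            rw [Set.iUnion_inter, Set.iUnion_inter]; exact Set.iUnion_congr hgE⟩ }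
    have hmN_MM : mN ≤ MM := by
      rw [hmN_def]
      refine sup_le ?_ (iSup₂_le fun i hi => MeasurableSpace.generateFrom_le fun D hD => ?_)
      · intro D hD
        exact ⟨D, hcomap_mk D hD, rfl⟩
      · obtain ⟨h1i, h2i⟩ := Finset.mem_Icc.mp hi
        by_cases hik : i ≤ k
        · exact ⟨D, hgen_mk i h1i hik _
            (MeasurableSpace.measurableSet_generateFrom hD), rfl⟩
        · push_neg at hik
          obtain ⟨s, hs0, hst, rfl⟩ := hD
          refine ⟨∅, @MeasurableSet.empty _ mk, ?_⟩
          rw [Set.empty_inter]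
          ext q
          simp only [Set.mem_inter_iff, Set.mem_setOf_eq, Set.mem_empty_iff_false, iff_false,
            not_and]
          intro hqτ hqAe
          have hkN : k + 1 ≤ N := hik.trans_le h2i
          have hq2 : ENNReal.ofReal t < τe (k+1) q := hqAe.2
          rw [hτe (k+1) hkN q] at hq2
          have ht2 : t < τ (k+1) q := (ENNReal.ofReal_lt_ofReal_iff'.mp hq2).1
          have hmono : τ (k+1) q ≤ τ i q := hτ_mono (k+1) i q hik
          linarith [hst]
    exact hmN_MM D hD
  -- integrability
  have hIntAeY : Integrable (Ae.indicator Y) μ := hY.indicator hAe_amb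
  have hIntCY : Integrable (C.indicator Y) μ := hY.indicator hC_amb
  have hIntC1 : Integrable (C.indicator (fun _ => (1:ℝ))) μ := (integrable_const 1).indicator hC_amb
  -- a.e. equality of B and C indicators
  have hBC' : B.indicator Y =ᵐ[μ] C.indicator Y := by
    rcases hCcase with ⟨hkN, hCeq⟩ | ⟨hkN, hCeq⟩
    · have hBeq : B = Set.univ := by
        ext q
        simp only [hB_def, Set.mem_setOf_eq, Set.mem_univ, iff_true]
        rw [hkN, hτ'e_top q]
        exact ENNReal.ofReal_lt_top
      rw [hBeq, hCeq]
    · -- k < N : use a.e. positivity of τ' (k+1)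
      have hepos : ∀ᵐ ω' ∂Phat, 0 < E (k+1) ω' := by
        have hms : MeasurableSet {ω' | 0 < E (k+1) ω'} :=
          measurableSet_lt measurable_const (hE_meas _)
        have h1 : Phat {ω' | (0:ℝ) < E (k+1) ω'} = 1 := by
          have := hE_exp (k+1) (by omega) (by omega) 0 le_rfl
          rw [this]
          norm_num
        rw [Filter.eventually_iff, mem_ae_iff]
        rw [show {ω' | 0 < E (k+1) ω'}ᶜ = {ω' | (0:ℝ) < E (k+1) ω'}ᶜ from rfl]
        rw [prob_compl_eq_zero_iff hms]
        exact h1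
      have hτ'pos : ∀ᵐ p ∂μ, 0 < τ' (k+1) p := by
        have := Stmt10Aux.hit_pos_ae P Phat (fun s ω => lam (k+1) s ω) (hlam_meas (k+1))
          (fun s ω => hlam_nonneg (k+1) s ω) (hlam_int (k+1) (by omega) hkN)
          (E (k+1)) (hE_meas (k+1)) hepos
        filter_upwards [this] with p hp
        rw [hτ' (k+1) p]
        exact hp
      filter_upwards [hτ'pos] with q hq
      have hiff : q ∈ B ↔ q ∈ C := by
        rw [hB_def, hC_def]
        simp only [Set.mem_setOf_eq]
        rw [hτ'e (k+1) hkN q, hτe (k+1) hkN q, ENNReal.ofReal_lt_ofReal_iff hq, hτsum q]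
        constructor
        · intro h
          have h2 : t < τ k q + τ' (k+1) q := by linarith
          exact (ENNReal.ofReal_lt_ofReal_iff (lt_of_le_of_lt ht h2)).mpr h2
        · intro h
          have h2 : t < τ k q + τ' (k+1) q := by
            have := (ENNReal.ofReal_lt_ofReal_iff'.mp h).1
            linarith
          linarith
      by_cases hqC : q ∈ C
      · rw [Set.indicator_of_mem (hiff.mpr hqC), Set.indicator_of_mem hqC]
      · rw [Set.indicator_of_notMem (fun hqB => hqC (hiff.mp hqB)),
          Set.indicator_of_notMem hqC]
  -- pull-out identities
  set i1A' : Ω × Ω' → ℝ := A'.indicator (fun _ => (1:ℝ)) with hi1A'_def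
  have hsplitY : Ae.indicator Y = i1A' * C.indicator Y := by
    funext q
    rw [hAeAC, hi1A'_def]
    by_cases hq1 : q ∈ A' <;> by_cases hq2 : q ∈ C <;>
      simp [Set.indicator_apply, Set.mem_inter_iff, hq1, hq2]
  have hsplit1 : Ae.indicator (fun _ => (1:ℝ)) = i1A' * C.indicator (fun _ => (1:ℝ)) := by
    funext q
    rw [hAeAC, hi1A'_def]
    by_cases hq1 : q ∈ A' <;> by_cases hq2 : q ∈ C <;>
      simp [Set.indicator_apply, Set.mem_inter_iff, hq1, hq2]
  have hi1A'_sm : StronglyMeasurable[mk] i1A' := stronglyMeasurable_const.indicator hA'_mk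
  have hnum : μ[Ae.indicator Y|mk] =ᵐ[μ] i1A' * μ[C.indicator Y|mk] := by
    rw [hsplitY]
    exact condExp_mul_of_stronglyMeasurable_left hi1A'_sm (by rw [← hsplitY]; exact hIntAeY) hIntCY
  have hden : μ[Ae.indicator (fun _ => (1:ℝ))|mk]
      =ᵐ[μ] i1A' * μ[C.indicator (fun _ => (1:ℝ))|mk] := by
    rw [hsplit1]
    exact condExp_mul_of_stronglyMeasurable_left hi1A'_sm
      (by rw [← hsplit1]; exact (integrable_const 1).indicator hAe_amb) hIntC1
  have hnum2 : μ[B.indicator Y|mk] =ᵐ[μ] μ[C.indicator Y|mk] := condExp_congr_ae hBC'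
  -- main trace formula
  have main := Stmt10Aux.condexp_trace (μ := μ) hmkN hmN_le hAe_mN htrace hY
  constructor
  · -- positivity
    have hposC := Stmt10Aux.condexp_indicator_pos (μ := μ) hmk_le hC_amb
    filter_upwards [hposC] with p hp hmem
    exact hp hmem.2
  · -- the equality
    refine main.trans ?_
    filter_upwards [hnum, hden, hnum2] with p h1 h2 h3
    by_cases hp : p ∈ Ae
    · rw [Set.indicator_of_mem hp, Set.indicator_of_mem hp]
      have hpA' : p ∈ A' := by rw [hAeAC] at hp; exact hp.1
      rw [h1, h2, h3]
      simp only [Pi.mul_apply]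
      rw [hi1A'_def, Set.indicator_of_mem hpA', one_mul, one_mul]
    · rw [Set.indicator_of_notMem hp, Set.indicator_of_notMem hp]
end

section
/- Let (Ω̂, 𝓑̂, P̂) be a probability space carrying independent unit-exponentially distributed random variables E₁, E₂, let f₁, f₂ : [0,∞) → [0,∞) be measurable with ∫_0^t f_i(s) ds < ∞ for all t ≥ 0 and ∫_0^∞ f_i(s) ds = ∞, set Λ_i(t) := ∫_0^t f_i(s) ds, T₁ := inf{t > 0 : Λ₁(t) ≥ E₁} and T₂ := T₁ + inf{t > 0 : Λ₂(t) ≥ E₂}. Then for all 0 ≤ t ≤ T: P̂(T₁ > t and T₂ > T) = ∫_t^T e^{−Λ₂(T − x)} e^{−Λ₁(x)} f₁(x) dx + e^{−Λ₁(T)}. -/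
open MeasureTheory ProbabilityTheory Set

open MeasureTheory Set Real
open scoped ENNReal Classical

namespace Stmt17


lemma lint_exp_Ioi (q : ℝ) :
    ∫⁻ w in Ioi q, ENNReal.ofReal (exp (-w)) = ENNReal.ofReal (exp (-q)) := by
  rw [← ofReal_integral_eq_lintegral_ofReal (exp_neg_integrableOn_Ioi q zero_lt_one |>.congr_fun
      (fun x _ => by simp [Real.exp_neg, Real.rpow_natCast]) measurableSet_Ioi)]
  · rw [integral_exp_neg_Ioi]
  · exact Filter.Eventually.of_forall fun x => (exp_pos _).le

lemma lint_exp_Ioc {a b : ℝ} (h : a ≤ b) :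
    ∫⁻ w in Ioc a b, ENNReal.ofReal (exp (-w))
      = ENNReal.ofReal (exp (-a)) - ENNReal.ofReal (exp (-b)) := by
  have hsplit : Ioc a b ∪ Ioi b = Ioi a := Ioc_union_Ioi_eq_Ioi h
  have hd : Disjoint (Ioc a b) (Ioi b) := by
    simp [Set.disjoint_left]
  have := lintegral_union measurableSet_Ioi hd
    (f := fun w => ENNReal.ofReal (exp (-w))) (μ := volume)
  rw [hsplit, lint_exp_Ioi, lint_exp_Ioi] at this
  rw [eq_comm]
  exact ENNReal.sub_eq_of_eq_add (by simp) this

lemma swap_helper {μ ν : Measure ℝ} [SigmaFinite μ] [SigmaFinite ν] {W : Set (ℝ × ℝ)}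
    (hW : MeasurableSet W) {G H : ℝ → ℝ≥0∞} (hG : Measurable G) (hH : Measurable H) :
    ∫⁻ x, G x * ∫⁻ y, ({y : ℝ | (x, y) ∈ W}).indicator H y ∂ν ∂μ
      = ∫⁻ y, H y * ∫⁻ x, ({x : ℝ | (x, y) ∈ W}).indicator G x ∂μ ∂ν := by
  have hWmeas : Measurable (W.indicator fun p : ℝ × ℝ => G p.1 * H p.2) :=
    ((hG.comp measurable_fst).mul (hH.comp measurable_snd)).indicator hW
  have h1 : ∀ x, G x * ∫⁻ y, ({y : ℝ | (x, y) ∈ W}).indicator H y ∂ν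
      = ∫⁻ y, W.indicator (fun p : ℝ × ℝ => G p.1 * H p.2) (x, y) ∂ν := by
    intro x
    rw [← lintegral_const_mul _ (hH.indicator (show MeasurableSet {y : ℝ | (x, y) ∈ W} from measurable_prodMk_left hW))]
    refine lintegral_congr fun y => ?_
    by_cases hxy : (x, y) ∈ W
    · have e1 := Set.indicator_of_mem (show y ∈ {y : ℝ | (x, y) ∈ W} from hxy) H
      have e2 := Set.indicator_of_mem hxy (fun p : ℝ × ℝ => G p.1 * H p.2)
      rw [e1, e2]
    · have e1 := Set.indicator_of_notMem (show y ∉ {y : ℝ | (x, y) ∈ W} from hxy) H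
      have e2 := Set.indicator_of_notMem hxy (fun p : ℝ × ℝ => G p.1 * H p.2)
      rw [e1, e2, mul_zero]
  have h2 : ∀ y, H y * ∫⁻ x, ({x : ℝ | (x, y) ∈ W}).indicator G x ∂μ
      = ∫⁻ x, W.indicator (fun p : ℝ × ℝ => G p.1 * H p.2) (x, y) ∂μ := by
    intro y
    rw [← lintegral_const_mul _ (hG.indicator (show MeasurableSet {x : ℝ | (x, y) ∈ W} from measurable_prodMk_right hW))]
    refine lintegral_congr fun x => ?_
    by_cases hxy : (x, y) ∈ W
    · have e1 := Set.indicator_of_mem (show x ∈ {x : ℝ | (x, y) ∈ W} from hxy) G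
      have e2 := Set.indicator_of_mem hxy (fun p : ℝ × ℝ => G p.1 * H p.2)
      rw [e1, e2, mul_comm]
    · have e1 := Set.indicator_of_notMem (show x ∉ {x : ℝ | (x, y) ∈ W} from hxy) G
      have e2 := Set.indicator_of_notMem hxy (fun p : ℝ × ℝ => G p.1 * H p.2)
      rw [e1, e2, mul_zero]
  simp only [h1, h2]
  exact lintegral_lintegral_swap hWmeas.aemeasurable

variable {f Λ : ℝ → ℝ}

lemma lam_zero (hΛ : ∀ t, Λ t = ∫ s in Ioc (0:ℝ) t, f s) {x : ℝ} (hx : x ≤ 0) : Λ x = 0 := by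
  rw [hΛ, Ioc_eq_empty (by simpa using hx), Measure.restrict_empty, integral_zero_measure]

lemma integrableOn_f (hf : Measurable f) (hnn : ∀ s, 0 ≤ s → 0 ≤ f s)
    (hfin : ∀ t, ∫⁻ s in Ioc (0:ℝ) t, ENNReal.ofReal (f s) < ⊤)
    {a b : ℝ} (ha : 0 ≤ a) : IntegrableOn f (Ioc a b) := by
  have hsub : Ioc a b ⊆ Ioc 0 b := Ioc_subset_Ioc_left ha
  refine IntegrableOn.mono_set ?_ hsub
  refine ⟨(hf.aestronglyMeasurable), ?_⟩
  rw [hasFiniteIntegral_iff_norm]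
  have : ∀ᵐ s ∂(volume.restrict (Ioc (0:ℝ) b)),
      ENNReal.ofReal ‖f s‖ = ENNReal.ofReal (f s) := by
    filter_upwards [ae_restrict_mem measurableSet_Ioc] with s hs
    rw [Real.norm_eq_abs, abs_of_nonneg (hnn s hs.1.le)]
  rw [lintegral_congr_ae this]
  exact hfin b

lemma lam_diff (hf : Measurable f) (hnn : ∀ s, 0 ≤ s → 0 ≤ f s)
    (hfin : ∀ t, ∫⁻ s in Ioc (0:ℝ) t, ENNReal.ofReal (f s) < ⊤)
    (hΛ : ∀ t, Λ t = ∫ s in Ioc (0:ℝ) t, f s)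
    {a b : ℝ} (ha : 0 ≤ a) (hab : a ≤ b) : Λ b = Λ a + ∫ s in Ioc a b, f s := by
  rw [hΛ, hΛ, ← setIntegral_union (Set.Ioc_disjoint_Ioc_of_le le_rfl) measurableSet_Ioc
    (integrableOn_f hf hnn hfin le_rfl) (integrableOn_f hf hnn hfin ha),
    Ioc_union_Ioc_eq_Ioc ha hab]

lemma lam_nonneg (hf : Measurable f) (hnn : ∀ s, 0 ≤ s → 0 ≤ f s)
    (hΛ : ∀ t, Λ t = ∫ s in Ioc (0:ℝ) t, f s) (x : ℝ) : 0 ≤ Λ x := by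
  rw [hΛ]
  refine setIntegral_nonneg measurableSet_Ioc fun s hs => hnn s hs.1.le

lemma lam_mono (hf : Measurable f) (hnn : ∀ s, 0 ≤ s → 0 ≤ f s)
    (hfin : ∀ t, ∫⁻ s in Ioc (0:ℝ) t, ENNReal.ofReal (f s) < ⊤)
    (hΛ : ∀ t, Λ t = ∫ s in Ioc (0:ℝ) t, f s) : Monotone Λ := by
  intro a b hab
  rcases le_total 0 a with ha | ha
  · rw [lam_diff hf hnn hfin hΛ ha hab]
    have : 0 ≤ ∫ s in Ioc a b, f s :=
      setIntegral_nonneg measurableSet_Ioc fun s hs => hnn s (ha.trans hs.1.le)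
    linarith
  · rw [lam_zero hΛ ha]
    exact lam_nonneg hf hnn hΛ b

lemma lint_f (hf : Measurable f) (hnn : ∀ s, 0 ≤ s → 0 ≤ f s)
    (hfin : ∀ t, ∫⁻ s in Ioc (0:ℝ) t, ENNReal.ofReal (f s) < ⊤)
    (hΛ : ∀ t, Λ t = ∫ s in Ioc (0:ℝ) t, f s)
    {a b : ℝ} (ha : 0 ≤ a) (hab : a ≤ b) :
    ∫⁻ s in Ioc a b, ENNReal.ofReal (f s) = ENNReal.ofReal (Λ b - Λ a) := by
  have hd := lam_diff hf hnn hfin hΛ ha hab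
  have hI : Λ b - Λ a = ∫ s in Ioc a b, f s := by linarith
  rw [hI, ofReal_integral_eq_lintegral_ofReal (integrableOn_f hf hnn hfin ha)]
  filter_upwards [ae_restrict_mem measurableSet_Ioc] with s hs
  exact hnn s (ha.trans hs.1.le)

lemma lam_cont (hf : Measurable f) (hnn : ∀ s, 0 ≤ s → 0 ≤ f s)
    (hfin : ∀ t, ∫⁻ s in Ioc (0:ℝ) t, ENNReal.ofReal (f s) < ⊤)
    (hΛ : ∀ t, Λ t = ∫ s in Ioc (0:ℝ) t, f s) : Continuous Λ := by
  set g : ℝ → ℝ := (Ioi (0:ℝ)).indicator f with hg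
  have hgmeas : Measurable g := hf.indicator measurableSet_Ioi
  have hgint : ∀ a b : ℝ, IntervalIntegrable g volume a b := by
    intro a b
    rw [intervalIntegrable_iff]
    have : IntegrableOn g (uIoc a b) := by
      rw [hg, IntegrableOn, integrable_indicator_iff measurableSet_Ioi, IntegrableOn,
        Measure.restrict_restrict measurableSet_Ioi]
      have hsub : Ioi (0:ℝ) ∩ uIoc a b ⊆ Ioc 0 (max a b) := by
        intro x hx
        rcases hx with ⟨h1, h2⟩
        rw [Set.mem_uIoc] at h2
        constructor
        · exact h1
        · rcases h2 with h2 | h2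
          · exact h2.2.trans (le_max_right a b)
          · exact h2.2.trans (le_max_left a b)
      exact (integrableOn_f hf hnn hfin le_rfl).mono_set hsub
    exact this
  have hrepr : Λ = fun x => ∫ s in (0:ℝ)..x, g s := by
    funext x
    rcases le_total 0 x with hx | hx
    · rw [intervalIntegral.integral_of_le hx, hΛ]
      refine setIntegral_congr_fun measurableSet_Ioc fun s hs => ?_
      rw [hg, Set.indicator_of_mem (mem_Ioi.mpr hs.1)]
    · rw [lam_zero hΛ hx, intervalIntegral.integral_of_ge hx]
      rw [setIntegral_congr_fun measurableSet_Ioc (g := fun _ => (0:ℝ))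
        (fun s hs => Set.indicator_of_notMem (by simp; linarith [hs.2]) f)]
      simp
  rw [hrepr]
  exact intervalIntegral.continuous_primitive hgint 0

lemma lam_unbdd (hf : Measurable f) (hnn : ∀ s, 0 ≤ s → 0 ≤ f s)
    (hfin : ∀ t, ∫⁻ s in Ioc (0:ℝ) t, ENNReal.ofReal (f s) < ⊤)
    (hinf : ∫⁻ s in Ioi (0:ℝ), ENNReal.ofReal (f s) = ⊤)
    (hΛ : ∀ t, Λ t = ∫ s in Ioc (0:ℝ) t, f s) (u : ℝ) : ∃ x, 0 < x ∧ u ≤ Λ x := by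
  by_contra hcon
  push_neg at hcon
  have hb : ∀ n : ℕ, ∫⁻ s in Ioc (0:ℝ) (n:ℝ), ENNReal.ofReal (f s) ≤ ENNReal.ofReal u := by
    intro n
    rcases Nat.eq_zero_or_pos n with hn | hn
    · subst hn; simp
    · rw [lint_f hf hnn hfin hΛ le_rfl (by positivity)]
      rw [lam_zero hΛ le_rfl, sub_zero]
      exact ENNReal.ofReal_le_ofReal (hcon _ (by exact_mod_cast hn)).le
  have hsup : ∫⁻ s in Ioi (0:ℝ), ENNReal.ofReal (f s)
      = ⨆ n : ℕ, ∫⁻ s in Ioc (0:ℝ) (n:ℝ), ENNReal.ofReal (f s) := by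
    have hU : Ioi (0:ℝ) = ⋃ n : ℕ, Ioc (0:ℝ) (n:ℝ) := by
      ext x
      simp only [mem_Ioi, mem_iUnion, mem_Ioc]
      constructor
      · intro hx
        exact ⟨⌈x⌉₊, hx, Nat.le_ceil x⟩
      · rintro ⟨n, hn, -⟩; exact hn
    rw [hU]
    exact setLIntegral_iUnion_of_directed _
      (Monotone.directed_le fun m n hmn => Ioc_subset_Ioc_right (by exact_mod_cast hmn))
  rw [hsup] at hinf
  exact absurd hinf (by
    apply ne_of_lt
    calc ⨆ n : ℕ, ∫⁻ s in Ioc (0:ℝ) (n:ℝ), ENNReal.ofReal (f s)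
        ≤ ENNReal.ofReal u := iSup_le hb
      _ < ⊤ := ENNReal.ofReal_lt_top)



variable {Λ : ℝ → ℝ}

lemma K_nonempty (hun : ∀ u, ∃ x, 0 < x ∧ u ≤ Λ x) (e : ℝ) :
    {t : ℝ | 0 < t ∧ e ≤ Λ t}.Nonempty := by
  obtain ⟨x, hx1, hx2⟩ := hun e
  exact ⟨x, hx1, hx2⟩

lemma K_sInf_nonneg (hun : ∀ u, ∃ x, 0 < x ∧ u ≤ Λ x) (e : ℝ) :
    0 ≤ sInf {t : ℝ | 0 < t ∧ e ≤ Λ t} :=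
  le_csInf (K_nonempty hun e) fun s hs => hs.1.le

lemma K_bddBelow (e : ℝ) : BddBelow {t : ℝ | 0 < t ∧ e ≤ Λ t} :=
  ⟨0, fun s hs => hs.1.le⟩

lemma lt_sInf_iff (hmono : Monotone Λ) (hcont : Continuous Λ)
    (hun : ∀ u, ∃ x, 0 < x ∧ u ≤ Λ x)
    {e x : ℝ} (hx : 0 ≤ x) :
    x < sInf {t : ℝ | 0 < t ∧ e ≤ Λ t} ↔ Λ x < e := by
  constructor
  · intro h
    by_contra hcon
    push_neg at hcon
    rcases lt_or_eq_of_le hx with hx0 | hx0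
    · exact absurd (csInf_le (K_bddBelow e) ⟨hx0, hcon⟩) (not_le.mpr h)
    · have hK : {t : ℝ | 0 < t ∧ e ≤ Λ t} = Ioi 0 := by
        ext s
        simp only [mem_setOf_eq, mem_Ioi, and_iff_left_iff_imp]
        intro _
        calc e ≤ Λ x := hcon
          _ = Λ 0 := by rw [← hx0]
          _ ≤ Λ s := hmono (by linarith)
      rw [hK, csInf_Ioi] at h
      exact absurd h (by linarith)
  · intro h
    have hev : ∀ᶠ s in nhds x, Λ s < e := hcont.continuousAt.eventually_lt_const h
    rw [Metric.eventually_nhds_iff] at hev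
    obtain ⟨ε, hε, hball⟩ := hev
    have hle : x + ε / 2 ≤ sInf {t : ℝ | 0 < t ∧ e ≤ Λ t} := by
      refine le_csInf (K_nonempty hun e) fun s hs => ?_
      by_contra hcon
      push_neg at hcon
      have hxs : x < s := by
        by_contra hxs
        push_neg at hxs
        exact absurd (le_trans hs.2 (by linarith [hmono hxs] : Λ s ≤ Λ x)) (not_le.mpr h)
      have : dist s x < ε := by
        rw [Real.dist_eq, abs_of_pos (by linarith)]
        linarith
      exact absurd hs.2 (not_le.mpr (hball this))
    linarith

lemma hit_nonempty (hun : ∀ u, ∃ x, 0 < x ∧ u ≤ Λ x) (w : ℝ) :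
    {y : ℝ | w ≤ Λ y}.Nonempty := by
  obtain ⟨x, _, hx2⟩ := hun w
  exact ⟨x, hx2⟩

lemma hit_bddBelow (hzero : ∀ x : ℝ, x ≤ 0 → Λ x = 0) {w : ℝ} (hw : 0 < w) :
    BddBelow {y : ℝ | w ≤ Λ y} := by
  refine ⟨0, fun y hy => ?_⟩
  by_contra hcon
  push_neg at hcon
  rw [mem_setOf_eq, hzero y hcon.le] at hy
  linarith

lemma hit_mem (hcont : Continuous Λ) (hzero : ∀ x : ℝ, x ≤ 0 → Λ x = 0)
    (hun : ∀ u, ∃ x, 0 < x ∧ u ≤ Λ x) {w : ℝ} (hw : 0 < w) :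
    w ≤ Λ (sInf {y : ℝ | w ≤ Λ y}) := by
  have hclosed : IsClosed {y : ℝ | w ≤ Λ y} := isClosed_le continuous_const hcont
  exact hclosed.csInf_mem (hit_nonempty hun w) (hit_bddBelow hzero hw)

lemma hit_nonneg (hcont : Continuous Λ) (hzero : ∀ x : ℝ, x ≤ 0 → Λ x = 0)
    (hun : ∀ u, ∃ x, 0 < x ∧ u ≤ Λ x) {w : ℝ} (hw : 0 < w) :
    0 ≤ sInf {y : ℝ | w ≤ Λ y} := by
  by_contra hcon
  push_neg at hcon
  have := hit_mem hcont hzero hun hw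
  rw [hzero _ hcon.le] at this
  linarith

lemma lt_hit_iff (hmono : Monotone Λ) (hcont : Continuous Λ)
    (hzero : ∀ x : ℝ, x ≤ 0 → Λ x = 0) (hun : ∀ u, ∃ x, 0 < x ∧ u ≤ Λ x)
    {w : ℝ} (hw : 0 < w) (y : ℝ) :
    Λ y < w ↔ y < sInf {y : ℝ | w ≤ Λ y} := by
  constructor
  · intro h
    by_contra hcon
    push_neg at hcon
    exact absurd (le_trans (hit_mem hcont hzero hun hw) (hmono hcon)) (not_le.mpr h)
  · intro h
    by_contra hcon
    push_neg at hcon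
    exact absurd (csInf_le (hit_bddBelow hzero hw) hcon) (not_le.mpr h)

lemma hit_eq (hmono : Monotone Λ) (hcont : Continuous Λ)
    (hzero : ∀ x : ℝ, x ≤ 0 → Λ x = 0) (hun : ∀ u, ∃ x, 0 < x ∧ u ≤ Λ x)
    {w : ℝ} (hw : 0 < w) :
    Λ (sInf {y : ℝ | w ≤ Λ y}) = w := by
  refine le_antisymm ?_ (hit_mem hcont hzero hun hw)
  by_contra hcon
  push_neg at hcon
  set c := sInf {y : ℝ | w ≤ Λ y} with hc
  have hev : ∀ᶠ s in nhds c, w < Λ s := hcont.continuousAt.eventually_const_lt hcon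
  rw [Metric.eventually_nhds_iff] at hev
  obtain ⟨ε, hε, hball⟩ := hev
  have hmem : c - ε / 2 ∈ {y : ℝ | w ≤ Λ y} := by
    refine (hball ?_).le
    rw [Real.dist_eq]
    rw [abs_of_nonpos (by linarith)]
    linarith
  have := csInf_le (hit_bddBelow hzero hw) hmem
  linarith


lemma lint_ind_Ioi (c : ℝ) (H : ℝ → ℝ≥0∞) :
    ∫⁻ u, (Ioi c).indicator H u = ∫⁻ u in Ioi c, H u :=
  lintegral_indicator measurableSet_Ioi H

lemma vol_Ioc_inter_Iio {A B u : ℝ} (hAB : A ≤ B) :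
    volume (Ioc A B ∩ Iio u) = ENNReal.ofReal (min u B - A) := by
  rcases le_or_gt u A with h | h
  · have : Ioc A B ∩ Iio u = ∅ := by
      ext v; simp only [mem_inter_iff, mem_Ioc, mem_Iio, mem_empty_iff_false, iff_false]
      rintro ⟨⟨h1, _⟩, h2⟩; linarith
    rw [this, measure_empty, eq_comm, ENNReal.ofReal_eq_zero]
    simp only [min_le_iff, sub_nonpos]
    left; linarith
  · rcases le_or_gt u B with h2 | h2
    · have : Ioc A B ∩ Iio u = Ioo A u := by
        ext v; simp only [mem_inter_iff, mem_Ioc, mem_Iio, mem_Ioo]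
        constructor
        · rintro ⟨⟨h1, _⟩, h3⟩; exact ⟨h1, h3⟩
        · rintro ⟨h1, h3⟩; exact ⟨⟨h1, by linarith⟩, h3⟩
      rw [this, Real.volume_Ioo, min_eq_left h2]
    · have : Ioc A B ∩ Iio u = Ioc A B := by
        rw [inter_eq_left]
        intro v hv; exact lt_of_le_of_lt hv.2 h2
      rw [this, Real.volume_Ioc, min_eq_right h2.le]

lemma star {f Λ : ℝ → ℝ} (hf : Measurable f) (hnn : ∀ s, 0 ≤ s → 0 ≤ f s)
    (hfin : ∀ t, ∫⁻ s in Ioc (0:ℝ) t, ENNReal.ofReal (f s) < ⊤)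
    (hinf : ∫⁻ s in Ioi (0:ℝ), ENNReal.ofReal (f s) = ⊤)
    (hΛ : ∀ t, Λ t = ∫ s in Ioc (0:ℝ) t, f s)
    {a b : ℝ} (ha : 0 ≤ a) (hab : a ≤ b) :
    ∫⁻ x in Ioc a b, ENNReal.ofReal (exp (-Λ x)) * ENNReal.ofReal (f x)
      = ENNReal.ofReal (exp (-Λ a)) - ENNReal.ofReal (exp (-Λ b)) := by
  have hmono := lam_mono hf hnn hfin hΛ
  have hcont := lam_cont hf hnn hfin hΛ
  have hzero : ∀ x : ℝ, x ≤ 0 → Λ x = 0 := fun x hx => lam_zero hΛ hx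
  have hnneg := lam_nonneg hf hnn hΛ
  have hun := lam_unbdd hf hnn hfin hinf hΛ
  have hexpm : Measurable fun u : ℝ => ENNReal.ofReal (exp (-u)) :=
    ENNReal.measurable_ofReal.comp (Real.continuous_exp.measurable.comp measurable_neg)
  set W : Set (ℝ × ℝ) := {p : ℝ × ℝ | Λ p.1 < p.2} with hWdef
  have hW : MeasurableSet W :=
    measurableSet_lt (hcont.measurable.comp measurable_fst) measurable_snd
  set W₂ : Set (ℝ × ℝ) := {p : ℝ × ℝ | (Λ a < p.2 ∧ p.2 ≤ Λ b) ∧ p.2 < p.1} with hW2def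
  have hW₂ : MeasurableSet W₂ := by
    refine MeasurableSet.inter ?_ (measurableSet_lt measurable_snd measurable_fst)
    exact MeasurableSet.inter (measurableSet_lt measurable_const measurable_snd)
      (measurableSet_le measurable_snd measurable_const)
  calc
    ∫⁻ x in Ioc a b, ENNReal.ofReal (exp (-Λ x)) * ENNReal.ofReal (f x)
        = ∫⁻ x in Ioc a b, ENNReal.ofReal (f x)
            * ∫⁻ u, ({u : ℝ | (x, u) ∈ W}).indicator
                (fun u => ENNReal.ofReal (exp (-u))) u := by
          refine lintegral_congr fun x => ?_
          have h1 : {u : ℝ | (x, u) ∈ W} = Ioi (Λ x) := rfl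
          rw [h1, lint_ind_Ioi, lint_exp_Ioi, mul_comm]
    _ = ∫⁻ u, ENNReal.ofReal (exp (-u))
            * ∫⁻ x in Ioc a b, ({x : ℝ | (x, u) ∈ W}).indicator
                (fun x => ENNReal.ofReal (f x)) x :=
          swap_helper hW (ENNReal.measurable_ofReal.comp hf) hexpm
    _ = ∫⁻ u, ENNReal.ofReal (exp (-u)) * ENNReal.ofReal (min u (Λ b) - Λ a) := by
          refine lintegral_congr fun u => ?_
          congr 1
          have hS : MeasurableSet {x : ℝ | Λ x < u} :=
            measurableSet_lt hcont.measurable measurable_const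
          have h2 : {x : ℝ | (x, u) ∈ W} = {x : ℝ | Λ x < u} := rfl
          rw [h2, lintegral_indicator hS, Measure.restrict_restrict hS]
          rcases le_or_gt u 0 with hu | hu
          · have hempty : {x : ℝ | Λ x < u} ∩ Ioc a b = ∅ := by
              ext x
              simp only [mem_inter_iff, mem_setOf_eq, mem_Ioc, mem_empty_iff_false, iff_false]
              rintro ⟨h1', _⟩; linarith [hnneg x]
            rw [hempty, Measure.restrict_empty, lintegral_zero_measure, eq_comm,
              ENNReal.ofReal_eq_zero]
            have h3 : min u (Λ b) ≤ u := min_le_left _ _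
            linarith [hnneg a]
          · set c := sInf {y : ℝ | u ≤ Λ y} with hc
            have hSc : {x : ℝ | Λ x < u} = Iio c := by
              ext x
              simp only [mem_setOf_eq, mem_Iio]
              exact lt_hit_iff hmono hcont hzero hun hu x
            have hΛc := hit_eq hmono hcont hzero hun hu
            rw [hSc]
            rcases le_or_gt c a with hca | hca
            · have hempty : Iio c ∩ Ioc a b = ∅ := by
                ext x
                simp only [mem_inter_iff, mem_Iio, mem_Ioc, mem_empty_iff_false, iff_false]
                rintro ⟨h1', h2', _⟩; linarith
              rw [hempty, Measure.restrict_empty, lintegral_zero_measure, eq_comm,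
                ENNReal.ofReal_eq_zero]
              have h3 : u ≤ Λ a := by rw [← hΛc]; exact hmono hca
              have h4 : min u (Λ b) ≤ u := min_le_left _ _
              linarith
            · rcases le_or_gt c b with hcb | hcb
              · have hIoo : Iio c ∩ Ioc a b = Ioo a c := by
                  ext x
                  simp only [mem_inter_iff, mem_Iio, mem_Ioc, mem_Ioo]
                  constructor
                  · rintro ⟨h1', h2', _⟩; exact ⟨h2', h1'⟩
                  · rintro ⟨h1', h2'⟩; exact ⟨h2', h1', by linarith⟩
                rw [hIoo, Measure.restrict_congr_set Ioo_ae_eq_Ioc,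
                  lint_f hf hnn hfin hΛ ha hca.le, hΛc,
                  min_eq_left (by rw [← hΛc]; exact hmono hcb)]
              · have hIoc : Iio c ∩ Ioc a b = Ioc a b := by
                  rw [inter_eq_right]
                  intro x hx
                  simp only [mem_Iio]
                  exact lt_of_le_of_lt hx.2 hcb
                rw [hIoc, lint_f hf hnn hfin hΛ ha hab,
                  min_eq_right ((lt_hit_iff hmono hcont hzero hun hu b).mpr hcb).le]
    _ = ∫⁻ u, ENNReal.ofReal (exp (-u))
            * ∫⁻ v, ({v : ℝ | (u, v) ∈ W₂}).indicator (fun _ => (1:ℝ≥0∞)) v := by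
          refine lintegral_congr fun u => ?_
          congr 1
          have h4 : {v : ℝ | (u, v) ∈ W₂} = Ioc (Λ a) (Λ b) ∩ Iio u := by
            ext v
            simp only [hW2def, mem_setOf_eq, mem_inter_iff, mem_Ioc, mem_Iio]
          rw [h4]
          have h4b : ∫⁻ v, (Ioc (Λ a) (Λ b) ∩ Iio u).indicator (fun _ => (1:ℝ≥0∞)) v
              = volume (Ioc (Λ a) (Λ b) ∩ Iio u) :=
            lintegral_indicator_one (measurableSet_Ioc.inter measurableSet_Iio)
          rw [h4b, vol_Ioc_inter_Iio (hmono hab)]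
    _ = ∫⁻ v, (1:ℝ≥0∞) * ∫⁻ u, ({u : ℝ | (u, v) ∈ W₂}).indicator
            (fun u => ENNReal.ofReal (exp (-u))) u :=
          swap_helper hW₂ hexpm measurable_const
    _ = ENNReal.ofReal (exp (-Λ a)) - ENNReal.ofReal (exp (-Λ b)) := by
          have h5 : ∀ v : ℝ, (∫⁻ u, ({u : ℝ | (u, v) ∈ W₂}).indicator
                (fun u => ENNReal.ofReal (exp (-u))) u)
              = (Ioc (Λ a) (Λ b)).indicator (fun v => ENNReal.ofReal (exp (-v))) v := by
            intro v
            by_cases hv : v ∈ Ioc (Λ a) (Λ b)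
            · rw [Set.indicator_of_mem hv]
              have h6 : {u : ℝ | (u, v) ∈ W₂} = Ioi v := by
                ext u
                simp only [hW2def, mem_setOf_eq, mem_Ioi, hv.1, hv.2, true_and, and_true]
              rw [h6, lint_ind_Ioi, lint_exp_Ioi]
            · rw [Set.indicator_of_notMem hv]
              have h6 : {u : ℝ | (u, v) ∈ W₂} = ∅ := by
                ext u
                simp only [mem_setOf_eq, mem_empty_iff_false, iff_false]
                intro hmem
                exact hv ⟨hmem.1.1, hmem.1.2⟩
              rw [h6, Set.indicator_empty, lintegral_zero]
          simp only [one_mul, h5]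
          rw [lintegral_indicator measurableSet_Ioc, lint_exp_Ioc (hmono hab)]

end Stmt17


/-- joint survival probability of the two ordered Cox times with
deterministic intensities: `P̂(T₁ > t, T₂ > M) = ∫_t^M e^{−Λ₂(M−x)} e^{−Λ₁(x)} f₁(x) dx + e^{−Λ₁(M)}`
for `0 ≤ t ≤ M`. `Ω'` plays the role of `Ω̂`, `Phat` of `P̂`. -/
theorem stmt_17
    {Ω' : Type*} [MeasurableSpace Ω'] (Phat : Measure Ω') [IsProbabilityMeasure Phat]
    (E₁ E₂ : Ω' → ℝ) (hE₁ : Measurable E₁) (hE₂ : Measurable E₂)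
    (hEindep : IndepFun E₁ E₂ Phat)
    (hE₁exp : ∀ x : ℝ, 0 ≤ x → Phat {ω | x < E₁ ω} = ENNReal.ofReal (Real.exp (-x)))
    (hE₂exp : ∀ x : ℝ, 0 ≤ x → Phat {ω | x < E₂ ω} = ENNReal.ofReal (Real.exp (-x)))
    (f₁ f₂ : ℝ → ℝ) (hf₁_meas : Measurable f₁) (hf₂_meas : Measurable f₂)
    (hf₁_nonneg : ∀ s : ℝ, 0 ≤ s → 0 ≤ f₁ s) (hf₂_nonneg : ∀ s : ℝ, 0 ≤ s → 0 ≤ f₂ s)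
    (hf₁_fin : ∀ t : ℝ, ∫⁻ s in Set.Ioc (0:ℝ) t, ENNReal.ofReal (f₁ s) < ⊤)
    (hf₂_fin : ∀ t : ℝ, ∫⁻ s in Set.Ioc (0:ℝ) t, ENNReal.ofReal (f₂ s) < ⊤)
    (hf₁_inf : ∫⁻ s in Set.Ioi (0:ℝ), ENNReal.ofReal (f₁ s) = ⊤)
    (hf₂_inf : ∫⁻ s in Set.Ioi (0:ℝ), ENNReal.ofReal (f₂ s) = ⊤)
    (Λ₁ Λ₂ : ℝ → ℝ)
    (hΛ₁ : ∀ t : ℝ, Λ₁ t = ∫ s in Set.Ioc (0:ℝ) t, f₁ s)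
    (hΛ₂ : ∀ t : ℝ, Λ₂ t = ∫ s in Set.Ioc (0:ℝ) t, f₂ s)
    (T₁ T₂ : Ω' → ℝ)
    (hT₁ : ∀ ω, T₁ ω = sInf {t : ℝ | 0 < t ∧ E₁ ω ≤ Λ₁ t})
    (hT₂ : ∀ ω, T₂ ω = T₁ ω + sInf {t : ℝ | 0 < t ∧ E₂ ω ≤ Λ₂ t}) :
    ∀ t M : ℝ, 0 ≤ t → t ≤ M →
      Phat {ω | t < T₁ ω ∧ M < T₂ ω}
        = ENNReal.ofReal
            ((∫ x in Set.Ioc t M, Real.exp (-Λ₂ (M - x)) * Real.exp (-Λ₁ x) * f₁ x)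
              + Real.exp (-Λ₁ M)) := by
  intro t M ht htM
  have htM0 : (0:ℝ) ≤ M := ht.trans htM
  have hmono1 := Stmt17.lam_mono hf₁_meas hf₁_nonneg hf₁_fin hΛ₁
  have hcont1 := Stmt17.lam_cont hf₁_meas hf₁_nonneg hf₁_fin hΛ₁
  have hzero1 : ∀ x : ℝ, x ≤ 0 → Λ₁ x = 0 := fun x hx => Stmt17.lam_zero hΛ₁ hx
  have hnneg1 := Stmt17.lam_nonneg hf₁_meas hf₁_nonneg hΛ₁
  have hun1 := Stmt17.lam_unbdd hf₁_meas hf₁_nonneg hf₁_fin hf₁_inf hΛ₁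
  have hmono2 := Stmt17.lam_mono hf₂_meas hf₂_nonneg hf₂_fin hΛ₂
  have hcont2 := Stmt17.lam_cont hf₂_meas hf₂_nonneg hf₂_fin hΛ₂
  have hzero2 : ∀ x : ℝ, x ≤ 0 → Λ₂ x = 0 := fun x hx => Stmt17.lam_zero hΛ₂ hx
  have hnneg2 := Stmt17.lam_nonneg hf₂_meas hf₂_nonneg hΛ₂
  have hun2 := Stmt17.lam_unbdd hf₂_meas hf₂_nonneg hf₂_fin hf₂_inf hΛ₂
  have hexpm : Measurable fun u : ℝ => ENNReal.ofReal (Real.exp (-u)) :=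
    ENNReal.measurable_ofReal.comp (Real.continuous_exp.measurable.comp measurable_neg)
  set g : ℝ → ℝ := fun e => sInf {s : ℝ | 0 < s ∧ e ≤ Λ₁ s} with hgdef
  have hgmono : Monotone g := by
    intro e e' he
    refine le_csInf (Stmt17.K_nonempty hun1 e') fun s hs => ?_
    exact csInf_le (Stmt17.K_bddBelow e) ⟨hs.1, le_trans he hs.2⟩
  have hgmeas : Measurable g := hgmono.measurable
  have hgnn : ∀ e, 0 ≤ g e := Stmt17.K_sInf_nonneg hun1
  set B : Set Ω' := {ω | Λ₁ M < E₁ ω} with hBdef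
  set S : Set (ℝ × ℝ) :=
    {p : ℝ × ℝ | (Λ₁ t < p.1 ∧ p.1 ≤ Λ₁ M) ∧ Λ₂ (M - g p.1) < p.2} with hSdef
  set C : Set Ω' := (fun ω => (E₁ ω, E₂ ω)) ⁻¹' S with hCdef
  have hSm : MeasurableSet S := by
    refine MeasurableSet.inter
      (MeasurableSet.inter (measurableSet_lt measurable_const measurable_fst)
        (measurableSet_le measurable_fst measurable_const)) ?_
    exact measurableSet_lt
      (hcont2.measurable.comp (measurable_const.sub (hgmeas.comp measurable_fst)))
      measurable_snd
  have hpair : Measurable fun ω => (E₁ ω, E₂ ω) := hE₁.prodMk hE₂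
  have hmeasB : MeasurableSet B := hE₁ measurableSet_Ioi
  have hmeasC : MeasurableSet C := hpair hSm
  -- event split
  have hsplit : {ω | t < T₁ ω ∧ M < T₂ ω} = B ∪ C := by
    ext ω
    have hS2 := Stmt17.K_sInf_nonneg hun2 (E₂ ω)
    have h1 : t < T₁ ω ↔ Λ₁ t < E₁ ω := by
      rw [hT₁ ω]; exact Stmt17.lt_sInf_iff hmono1 hcont1 hun1 ht
    have hM1 : M < T₁ ω ↔ Λ₁ M < E₁ ω := by
      rw [hT₁ ω]; exact Stmt17.lt_sInf_iff hmono1 hcont1 hun1 htM0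
    have hT1g : T₁ ω = g (E₁ ω) := hT₁ ω
    simp only [mem_setOf_eq, mem_union, hBdef, hCdef, hSdef, mem_preimage]
    constructor
    · rintro ⟨hta, hMb⟩
      by_cases hcase : Λ₁ M < E₁ ω
      · left; exact hcase
      · right
        push_neg at hcase
        have hT1M : T₁ ω ≤ M := by
          by_contra hx; push_neg at hx
          exact absurd (hM1.mp hx) (not_lt.mpr hcase)
        refine ⟨⟨h1.mp hta, hcase⟩, ?_⟩
        have h2 : M - T₁ ω < sInf {s : ℝ | 0 < s ∧ E₂ ω ≤ Λ₂ s} := by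
          have h3 := hT₂ ω; linarith
        have h4 := (Stmt17.lt_sInf_iff hmono2 hcont2 hun2
          (by linarith : (0:ℝ) ≤ M - T₁ ω)).mp h2
        rw [hT1g] at h4
        exact h4
    · rintro (hb | hc)
      · have hMT := hM1.mpr hb
        refine ⟨by linarith, ?_⟩
        rw [hT₂ ω]; linarith
      · rcases hc with ⟨⟨hc1, hc2⟩, hc3⟩
        refine ⟨h1.mpr hc1, ?_⟩
        have hT1M : T₁ ω ≤ M := by
          by_contra hx; push_neg at hx
          exact absurd (hM1.mp hx) (not_lt.mpr hc2)
        rw [← hT1g] at hc3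
        have h5 := (Stmt17.lt_sInf_iff hmono2 hcont2 hun2
          (by linarith : (0:ℝ) ≤ M - T₁ ω)).mpr hc3
        rw [hT₂ ω]; linarith
  have hdisj : Disjoint B C := by
    rw [Set.disjoint_left]
    intro ω hb hc
    exact absurd (hb : Λ₁ M < E₁ ω) (not_lt.mpr hc.1.2)
  -- P(B)
  have hPB : Phat B = ENNReal.ofReal (Real.exp (-Λ₁ M)) := hE₁exp (Λ₁ M) (hnneg1 M)
  -- law of E₁
  haveI hprob1 : IsProbabilityMeasure (Phat.map E₁) :=
    Measure.isProbabilityMeasure_map hE₁.aemeasurable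
  haveI hprob2 : IsProbabilityMeasure (Phat.map E₂) :=
    Measure.isProbabilityMeasure_map hE₂.aemeasurable
  set μe : Measure ℝ :=
    (volume.restrict (Ioi 0)).withDensity (fun e => ENNReal.ofReal (Real.exp (-e))) with hμedef
  have hlaw : Phat.map E₁ = μe := by
    refine Measure.ext_of_Iic (Phat.map E₁) μe fun a => ?_
    rw [Measure.map_apply hE₁ measurableSet_Iic, hμedef,
      withDensity_apply _ measurableSet_Iic, Measure.restrict_restrict measurableSet_Iic]
    rcases le_or_gt a 0 with ha | ha
    · have h0 : Iic a ∩ Ioi 0 = ∅ := by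
        ext x
        simp only [mem_inter_iff, mem_Iic, mem_Ioi, mem_empty_iff_false, iff_false, not_and,
          not_lt]
        intro hx; linarith
      rw [h0, Measure.restrict_empty, lintegral_zero_measure]
      have hsub : E₁ ⁻¹' Iic a ⊆ {ω | 0 < E₁ ω}ᶜ := by
        intro ω hω
        simp only [mem_compl_iff, mem_setOf_eq, not_lt]
        exact le_trans (hω : E₁ ω ≤ a) ha
      have hone : Phat {ω | (0:ℝ) < E₁ ω} = 1 := by
        rw [hE₁exp 0 le_rfl]; simp
      have hzeroC : Phat {ω | (0:ℝ) < E₁ ω}ᶜ = 0 := by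
        rw [measure_compl (show MeasurableSet {ω | (0:ℝ) < E₁ ω} from hE₁ measurableSet_Ioi)
          (measure_ne_top _ _), hone, measure_univ, tsub_self]
      exact le_antisymm (le_trans (measure_mono hsub) hzeroC.le) zero_le
    · have h0 : Iic a ∩ Ioi 0 = Ioc 0 a := by
        ext x
        simp only [mem_inter_iff, mem_Iic, mem_Ioi, mem_Ioc]
        tauto
      rw [h0, Stmt17.lint_exp_Ioc ha.le, neg_zero, Real.exp_zero, ENNReal.ofReal_one]
      have hcompl : E₁ ⁻¹' Iic a = {ω | a < E₁ ω}ᶜ := by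
        ext ω; simp [not_lt]
      rw [hcompl, measure_compl (show MeasurableSet {ω | a < E₁ ω} from hE₁ measurableSet_Ioi)
        (measure_ne_top _ _), hE₁exp a ha.le, measure_univ]
  -- P(C) as double integral
  have hPC : Phat C = ∫⁻ e, (Ioc (Λ₁ t) (Λ₁ M)).indicator
      (fun e => ENNReal.ofReal (Real.exp (-Λ₂ (M - g e)))) e ∂(Phat.map E₁) := by
    have hmapeq : Phat.map (fun ω => (E₁ ω, E₂ ω)) = (Phat.map E₁).prod (Phat.map E₂) :=
      (ProbabilityTheory.indepFun_iff_map_prod_eq_prod_map_map hE₁.aemeasurable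
        hE₂.aemeasurable).mp hEindep
    rw [hCdef, ← Measure.map_apply hpair hSm, hmapeq, Measure.prod_apply hSm]
    refine lintegral_congr fun e => ?_
    by_cases he : e ∈ Ioc (Λ₁ t) (Λ₁ M)
    · have hslice : Prod.mk e ⁻¹' S = Ioi (Λ₂ (M - g e)) := by
        ext v
        simp only [hSdef, mem_preimage, mem_setOf_eq, mem_Ioi, he.1, he.2, true_and, and_true]
      rw [hslice, Set.indicator_of_mem he, Measure.map_apply hE₂ measurableSet_Ioi]
      exact hE₂exp _ (hnneg2 _)
    · have hslice : Prod.mk e ⁻¹' S = ∅ := by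
        ext v
        simp only [hSdef, mem_preimage, mem_setOf_eq, mem_empty_iff_false, iff_false]
        rintro ⟨⟨h1', h2'⟩, _⟩
        exact he ⟨h1', h2'⟩
      rw [hslice, measure_empty, Set.indicator_of_notMem he]
  have hPC2 : Phat C = ∫⁻ e in Ioc (Λ₁ t) (Λ₁ M),
      ENNReal.ofReal (Real.exp (-Λ₂ (M - g e))) * ENNReal.ofReal (Real.exp (-e)) := by
    rw [hPC, hlaw, hμedef]
    have hFm : Measurable ((Ioc (Λ₁ t) (Λ₁ M)).indicator
        (fun e => ENNReal.ofReal (Real.exp (-Λ₂ (M - g e))))) := by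
      refine Measurable.indicator ?_ measurableSet_Ioc
      exact ENNReal.measurable_ofReal.comp (Real.continuous_exp.measurable.comp
        (measurable_neg.comp (hcont2.measurable.comp (measurable_const.sub hgmeas))))
    rw [lintegral_withDensity_eq_lintegral_mul _ hexpm hFm]
    have hpt : ∀ e : ℝ, ((fun e => ENNReal.ofReal (Real.exp (-e))) * (Ioc (Λ₁ t) (Λ₁ M)).indicator
          (fun e => ENNReal.ofReal (Real.exp (-Λ₂ (M - g e))))) e
        = (Ioc (Λ₁ t) (Λ₁ M)).indicator
            (fun e => ENNReal.ofReal (Real.exp (-Λ₂ (M - g e)))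
              * ENNReal.ofReal (Real.exp (-e))) e := by
      intro e
      by_cases he : e ∈ Ioc (Λ₁ t) (Λ₁ M)
      · rw [Pi.mul_apply, Set.indicator_of_mem he, Set.indicator_of_mem he, mul_comm]
      · rw [Pi.mul_apply, Set.indicator_of_notMem he, Set.indicator_of_notMem he, mul_zero]
    rw [lintegral_congr hpt, lintegral_indicator measurableSet_Ioc,
      Measure.restrict_restrict measurableSet_Ioc]
    congr 1
    have hss : Ioc (Λ₁ t) (Λ₁ M) ∩ Ioi 0 = Ioc (Λ₁ t) (Λ₁ M) :=
      inter_eq_left.mpr fun x hx => lt_of_le_of_lt (hnneg1 t) hx.1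
    rw [hss]
  -- change of variables
  have key : ∫⁻ e in Ioc (Λ₁ t) (Λ₁ M),
      ENNReal.ofReal (Real.exp (-Λ₂ (M - g e))) * ENNReal.ofReal (Real.exp (-e))
      = ∫⁻ x in Ioc t M, ENNReal.ofReal (Real.exp (-Λ₂ (M - x)))
          * (ENNReal.ofReal (Real.exp (-Λ₁ x)) * ENNReal.ofReal (f₁ x)) := by
    set WL : Set (ℝ × ℝ) := {p : ℝ × ℝ | Λ₂ (M - g p.1) < p.2} with hWLdef
    set WR : Set (ℝ × ℝ) := {p : ℝ × ℝ | Λ₂ (M - p.1) < p.2} with hWRdef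
    have hWLm : MeasurableSet WL := measurableSet_lt
      (hcont2.measurable.comp ((measurable_const.sub hgmeas).comp measurable_fst))
      measurable_snd
    have hWRm : MeasurableSet WR := measurableSet_lt
      (hcont2.measurable.comp (measurable_const.sub measurable_fst)) measurable_snd
    have hGRm : Measurable fun x : ℝ =>
        ENNReal.ofReal (Real.exp (-Λ₁ x)) * ENNReal.ofReal (f₁ x) :=
      (hexpm.comp hcont1.measurable).mul (ENNReal.measurable_ofReal.comp hf₁_meas)
    calc
      ∫⁻ e in Ioc (Λ₁ t) (Λ₁ M),
          ENNReal.ofReal (Real.exp (-Λ₂ (M - g e))) * ENNReal.ofReal (Real.exp (-e))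
          = ∫⁻ e in Ioc (Λ₁ t) (Λ₁ M), ENNReal.ofReal (Real.exp (-e))
              * ∫⁻ w, ({w : ℝ | (e, w) ∈ WL}).indicator
                  (fun w => ENNReal.ofReal (Real.exp (-w))) w := by
            refine lintegral_congr fun e => ?_
            have h1 : {w : ℝ | (e, w) ∈ WL} = Ioi (Λ₂ (M - g e)) := rfl
            rw [h1, Stmt17.lint_ind_Ioi, Stmt17.lint_exp_Ioi, mul_comm]
      _ = ∫⁻ w, ENNReal.ofReal (Real.exp (-w))
              * ∫⁻ e in Ioc (Λ₁ t) (Λ₁ M), ({e : ℝ | (e, w) ∈ WL}).indicator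
                  (fun e => ENNReal.ofReal (Real.exp (-e))) e :=
            Stmt17.swap_helper hWLm hexpm hexpm
      _ = ∫⁻ w, ENNReal.ofReal (Real.exp (-w))
              * ∫⁻ x in Ioc t M, ({x : ℝ | (x, w) ∈ WR}).indicator
                  (fun x => ENNReal.ofReal (Real.exp (-Λ₁ x)) * ENNReal.ofReal (f₁ x)) x := by
            refine lintegral_congr fun w => ?_
            congr 1
            have hLm : MeasurableSet {e : ℝ | (e, w) ∈ WL} :=
              measurable_prodMk_right hWLm
            have hRm : MeasurableSet {x : ℝ | (x, w) ∈ WR} :=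
              measurable_prodMk_right hWRm
            rw [lintegral_indicator hLm, lintegral_indicator hRm,
              Measure.restrict_restrict hLm, Measure.restrict_restrict hRm]
            rcases le_or_gt w 0 with hw | hw
            · have hL0 : {e : ℝ | (e, w) ∈ WL} = ∅ := by
                ext e
                simp only [hWLdef, mem_setOf_eq, mem_empty_iff_false, iff_false, not_lt]
                linarith [hnneg2 (M - g e)]
              have hR0 : {x : ℝ | (x, w) ∈ WR} = ∅ := by
                ext x
                simp only [hWRdef, mem_setOf_eq, mem_empty_iff_false, iff_false, not_lt]
                linarith [hnneg2 (M - x)]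
              rw [hL0, hR0]
              simp
            · set c2 := sInf {y : ℝ | w ≤ Λ₂ y} with hc2def
              have hc2nn : 0 ≤ c2 := Stmt17.hit_nonneg hcont2 hzero2 hun2 hw
              set d := max t (M - c2) with hddef
              have hdt : t ≤ d := le_max_left _ _
              have hdM : d ≤ M := max_le htM (by linarith)
              have hd0 : 0 ≤ d := ht.trans hdt
              have hLset : {e : ℝ | (e, w) ∈ WL} ∩ Ioc (Λ₁ t) (Λ₁ M)
                  = Ioc (Λ₁ d) (Λ₁ M) := by
                ext e
                simp only [hWLdef, mem_inter_iff, mem_setOf_eq, mem_Ioc]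
                constructor
                · rintro ⟨hew, he1, he2⟩
                  have h3 : M - g e < c2 :=
                    (Stmt17.lt_hit_iff hmono2 hcont2 hzero2 hun2 hw _).mp hew
                  rw [hddef, Monotone.map_max hmono1]
                  refine ⟨max_lt he1 ?_, he2⟩
                  rcases le_or_gt 0 (M - c2) with h4 | h4
                  · exact (Stmt17.lt_sInf_iff hmono1 hcont1 hun1 h4).mp (by linarith)
                  · rw [hzero1 _ h4.le]; exact lt_of_le_of_lt (hnneg1 t) he1
                · rintro ⟨he1, he2⟩
                  rw [hddef, Monotone.map_max hmono1] at he1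
                  have he1t : Λ₁ t < e := lt_of_le_of_lt (le_max_left _ _) he1
                  have he1d : Λ₁ (M - c2) < e := lt_of_le_of_lt (le_max_right _ _) he1
                  refine ⟨?_, he1t, he2⟩
                  have h5 : M - c2 < g e := by
                    rcases le_or_gt 0 (M - c2) with h4 | h4
                    · exact (Stmt17.lt_sInf_iff hmono1 hcont1 hun1 h4).mpr he1d
                    · exact lt_of_lt_of_le h4 (hgnn e)
                  exact (Stmt17.lt_hit_iff hmono2 hcont2 hzero2 hun2 hw _).mpr (by linarith)
              have hRset : {x : ℝ | (x, w) ∈ WR} ∩ Ioc t M = Ioc d M := by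
                ext x
                simp only [hWRdef, mem_inter_iff, mem_setOf_eq, mem_Ioc]
                constructor
                · rintro ⟨hxw, hx1, hx2⟩
                  have h3 : M - x < c2 :=
                    (Stmt17.lt_hit_iff hmono2 hcont2 hzero2 hun2 hw _).mp hxw
                  rw [hddef]
                  exact ⟨max_lt hx1 (by linarith), hx2⟩
                · rintro ⟨hx1, hx2⟩
                  rw [hddef] at hx1
                  rcases max_lt_iff.mp hx1 with ⟨hx1t, hx1d⟩
                  refine ⟨?_, hx1t, hx2⟩
                  exact (Stmt17.lt_hit_iff hmono2 hcont2 hzero2 hun2 hw _).mpr (by linarith)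
              rw [hLset, hRset, Stmt17.lint_exp_Ioc (hmono1 hdM),
                Stmt17.star hf₁_meas hf₁_nonneg hf₁_fin hf₁_inf hΛ₁ hd0 hdM]
      _ = ∫⁻ x in Ioc t M, (ENNReal.ofReal (Real.exp (-Λ₁ x)) * ENNReal.ofReal (f₁ x))
              * ∫⁻ w, ({w : ℝ | (x, w) ∈ WR}).indicator
                  (fun w => ENNReal.ofReal (Real.exp (-w))) w :=
            (Stmt17.swap_helper hWRm hGRm hexpm).symm
      _ = ∫⁻ x in Ioc t M, ENNReal.ofReal (Real.exp (-Λ₂ (M - x)))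
              * (ENNReal.ofReal (Real.exp (-Λ₁ x)) * ENNReal.ofReal (f₁ x)) := by
            refine lintegral_congr fun x => ?_
            have h1 : {w : ℝ | (x, w) ∈ WR} = Ioi (Λ₂ (M - x)) := rfl
            rw [h1, Stmt17.lint_ind_Ioi, Stmt17.lint_exp_Ioi, mul_comm]
  -- final assembly
  have hIntOn : IntegrableOn
      (fun x => Real.exp (-Λ₂ (M - x)) * Real.exp (-Λ₁ x) * f₁ x) (Ioc t M) := by
    refine Integrable.mono (Stmt17.integrableOn_f hf₁_meas hf₁_nonneg hf₁_fin ht) ?_ ?_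
    · exact ((Real.continuous_exp.measurable.comp
        (measurable_neg.comp (hcont2.measurable.comp (measurable_const.sub measurable_id)))).mul
        ((Real.continuous_exp.measurable.comp (measurable_neg.comp hcont1.measurable)))).mul
        hf₁_meas |>.aestronglyMeasurable
    · filter_upwards [ae_restrict_mem measurableSet_Ioc] with x _
      rw [Real.norm_eq_abs, Real.norm_eq_abs, abs_mul, abs_mul, abs_of_pos (Real.exp_pos _),
        abs_of_pos (Real.exp_pos _)]
      have h1 : Real.exp (-Λ₂ (M - x)) ≤ 1 := by
        rw [← Real.exp_zero]
        exact Real.exp_le_exp.mpr (by linarith [hnneg2 (M - x)])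
      have h2 : Real.exp (-Λ₁ x) ≤ 1 := by
        rw [← Real.exp_zero]
        exact Real.exp_le_exp.mpr (by linarith [hnneg1 x])
      have h3 : (0:ℝ) ≤ |f₁ x| := abs_nonneg _
      have h4 : Real.exp (-Λ₂ (M - x)) * Real.exp (-Λ₁ x) ≤ 1 :=
        mul_le_one₀ h1 (Real.exp_pos _).le h2
      exact mul_le_of_le_one_left h3 h4
  have hnnae : 0 ≤ᵐ[volume.restrict (Ioc t M)]
      fun x => Real.exp (-Λ₂ (M - x)) * Real.exp (-Λ₁ x) * f₁ x := by
    filter_upwards [ae_restrict_mem measurableSet_Ioc] with x hx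
    exact mul_nonneg (mul_nonneg (Real.exp_pos _).le (Real.exp_pos _).le)
      (hf₁_nonneg x (ht.trans hx.1.le))
  have hInonneg : 0 ≤ ∫ x in Ioc t M, Real.exp (-Λ₂ (M - x)) * Real.exp (-Λ₁ x) * f₁ x :=
    integral_nonneg_of_ae hnnae
  have hofI : ENNReal.ofReal
        (∫ x in Ioc t M, Real.exp (-Λ₂ (M - x)) * Real.exp (-Λ₁ x) * f₁ x)
      = ∫⁻ x in Ioc t M, ENNReal.ofReal (Real.exp (-Λ₂ (M - x)))
          * (ENNReal.ofReal (Real.exp (-Λ₁ x)) * ENNReal.ofReal (f₁ x)) := by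
    rw [ofReal_integral_eq_lintegral_ofReal hIntOn hnnae]
    refine lintegral_congr fun x => ?_
    rw [ENNReal.ofReal_mul (mul_nonneg (Real.exp_pos _).le (Real.exp_pos _).le),
      ENNReal.ofReal_mul (Real.exp_pos _).le, mul_assoc]
  rw [hsplit, measure_union hdisj hmeasC, hPB, hPC2, key,
    ENNReal.ofReal_add hInonneg (Real.exp_pos _).le, hofI, add_comm]
end
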